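/- arXiv:2411.19364 — 8 statements merged into one kernel-verified Lean document; each statement's English description precedes it below -/
import Mathlib

section
/- Let l > 1 be an integer, let k ≥ 1, let m₁ > m₂ > ⋯ > m_k ≥ 1 be integers, and let a₁, …, a_k be integers with 1 ≤ a₁ ≤ l − 1 and 0 ≤ a_i ≤ l − 1 for 2 ≤ i ≤ k. Then ‖a₁·l^{m₁} + a₂·l^{m₂} + ⋯ + a_k·l^{m_k}‖_l ≤ m₁ + a₁ + a₂ + ⋯ + a_k − 1. -/
/-- `CanRepr l n m` means `n` can be expressed using exactly `m` copies of `l`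
    combined with addition and multiplication (and parentheses). -/
inductive CanRepr (l : ℕ) : ℕ → ℕ → Prop
  | base : CanRepr l l 1
  | add {a b p q : ℕ} : CanRepr l a p → CanRepr l b q → CanRepr l (a + b) (p + q)
  | mul {a b p q : ℕ} : CanRepr l a p → CanRepr l b q → CanRepr l (a * b) (p + q)

/-- The `l`-complexity `‖n‖_l`: the minimal number of `l`'s needed to express `n`
    using only addition and multiplication. (By convention `sInf ∅ = 0`.) -/
noncomputable def complexity (l n : ℕ) : ℕ := sInf {m | CanRepr l n m}

lemma canRepr_mul_pow {l x p : ℕ} (h : CanRepr l x p) (d : ℕ) :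
    CanRepr l (x * l ^ d) (p + d) := by
  induction d with
  | zero => simpa using h
  | succ d ih =>
    have := CanRepr.mul ih CanRepr.base
    rw [pow_succ, ← mul_assoc]
    exact this

lemma canRepr_add_smul {l x p : ℕ} (h : CanRepr l x p) (a : ℕ) :
    CanRepr l (x + a * l) (p + a) := by
  induction a with
  | zero => simpa using h
  | succ a ih =>
    have h2 := CanRepr.add ih (CanRepr.base (l := l))
    have e : x + a * l + l = x + (a + 1) * l := by ring
    rw [e] at h2
    exact h2

lemma canRepr_smul {l : ℕ} (a : ℕ) (ha : 1 ≤ a) : CanRepr l (a * l) a := by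
  induction a with
  | zero => omega
  | succ a ih =>
    cases Nat.eq_zero_or_pos a with
    | inl h => subst h; simpa using CanRepr.base (l := l)
    | inr h =>
      have h2 := CanRepr.add (ih h) (CanRepr.base (l := l))
      have e : a * l + l = (a + 1) * l := by ring
      rw [e] at h2
      exact h2

lemma key (l : ℕ) : ∀ k (m a : Fin (k+1) → ℕ), StrictAnti m → 1 ≤ a 0 →
    CanRepr l (∑ i, a i * l ^ (m i - m (Fin.last k) + 1)) (m 0 - m (Fin.last k) + ∑ i, a i) := by
  intro k
  induction k with
  | zero =>
    intro m a hm ha0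
    have e1 : (Fin.last 0) = (0 : Fin 1) := rfl
    rw [e1, Fin.sum_univ_one, Fin.sum_univ_one, Nat.sub_self]
    simpa using canRepr_smul (a 0) ha0
  | succ k ih =>
    intro m a hm ha0
    set μ := m (Fin.last (k+1)) with hμ
    set μ' := m (Fin.castSucc (Fin.last k)) with hμ'
    have hμμ' : μ < μ' := hm (Fin.castSucc_lt_last (Fin.last k))
    have hm0μ' : μ' ≤ m 0 := hm.antitone (Fin.zero_le _)
    have hmono : ∀ i : Fin (k+1), μ' ≤ m (Fin.castSucc i) :=
      fun i => hm.antitone (Fin.castSucc_le_castSucc_iff.mpr (Fin.le_last i))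
    have hIH := ih (fun i => m (Fin.castSucc i)) (fun i => a (Fin.castSucc i))
      (fun i j hij => hm (Fin.castSucc_lt_castSucc_iff.mpr hij)) (by simpa using ha0)
    have h2 := canRepr_mul_pow hIH (μ' - μ)
    have h3 := canRepr_add_smul h2 (a (Fin.last (k+1)))
    have hval : (∑ i : Fin (k+1), a (Fin.castSucc i) * l ^ (m (Fin.castSucc i) - μ' + 1)) * l ^ (μ' - μ) + a (Fin.last (k+1)) * l
        = ∑ i, a i * l ^ (m i - μ + 1) := by
      rw [Fin.sum_univ_castSucc (f := fun i => a i * l ^ (m i - μ + 1))]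
      congr 1
      · rw [Finset.sum_mul]
        apply Finset.sum_congr rfl
        intro i _
        rw [mul_assoc, ← pow_add]
        congr 2
        have := hmono i
        omega
      · rw [show m (Fin.last (k+1)) - μ + 1 = 1 by omega, pow_one]
    have hcost : m 0 - μ' + (∑ i : Fin (k+1), a (Fin.castSucc i)) + (μ' - μ) + a (Fin.last (k+1))
        = m 0 - μ + ∑ i, a i := by
      rw [Fin.sum_univ_castSucc (f := a)]
      omega
    rw [← hval, ← hcost]
    exact h3
  
theorem stmt_1 (l k : ℕ) (hl : 1 < l) (m a : Fin (k + 1) → ℕ)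
    (hm : StrictAnti m) (hm1 : 1 ≤ m (Fin.last k))
    (ha0 : 1 ≤ a 0) (ha : ∀ i, a i ≤ l - 1) :
    complexity l (∑ i, a i * l ^ m i) ≤ m 0 + (∑ i, a i) - 1 := by
  set μ := m (Fin.last k) with hμ
  have hm0μ : μ ≤ m 0 := hm.antitone (Fin.zero_le _)
  have hmono : ∀ i, μ ≤ m i := fun i => hm.antitone (Fin.le_last i)
  have hkey := key l k m a hm ha0
  have h2 := canRepr_mul_pow hkey (μ - 1)
  have hval : (∑ i, a i * l ^ (m i - μ + 1)) * l ^ (μ - 1) = ∑ i, a i * l ^ m i := by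
    rw [Finset.sum_mul]
    apply Finset.sum_congr rfl
    intro i _
    rw [mul_assoc, ← pow_add]
    congr 2
    have := hmono i
    omega
  have hsum : 1 ≤ ∑ i, a i :=
    le_trans ha0 (Finset.single_le_sum (f := a) (fun i _ => Nat.zero_le _) (Finset.mem_univ 0))
  have hcost : m 0 - μ + (∑ i, a i) + (μ - 1) = m 0 + (∑ i, a i) - 1 := by omega
  rw [hval, hcost] at h2
  exact Nat.sInf_le h2
end

section
/- Let l > 1 be an integer and let n be a positive multiple of l. Then log_l(n) ≤ ‖n‖_l ≤ l·log_l(n) − 1, where log_l denotes the real base-l logarithm. -/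
lemma canRepr_smul_s2 (l : ℕ) : ∀ q : ℕ, 0 < q → CanRepr l (q * l) q := by
  intro q hq
  induction q with
  | zero => omega
  | succ q ih =>
    rcases Nat.eq_zero_or_pos q with h | h
    · subst h; simpa using CanRepr.base (l := l)
    · have := CanRepr.add (ih h) (CanRepr.base (l := l))
      simpa [Nat.succ_mul] using this

lemma canRepr_bound {l n m : ℕ} (hl : 1 < l) (h : CanRepr l n m) :
    1 ≤ m ∧ n ≤ l ^ m := by
  induction h with
  | base => simp
  | add ha hb iha ihb =>
    rename_i a b p q
    refine ⟨by omega, ?_⟩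
    have h2a : 2 ≤ l ^ p := le_trans hl (Nat.le_self_pow (by omega) l)
    have h2b : 2 ≤ l ^ q := le_trans hl (Nat.le_self_pow (by omega) l)
    calc a + b ≤ l ^ p + l ^ q := Nat.add_le_add iha.2 ihb.2
      _ ≤ l ^ p * l ^ q := Nat.add_le_mul h2a h2b
      _ = l ^ (p + q) := (pow_add l p q).symm
  | mul ha hb iha ihb =>
    rename_i a b p q
    refine ⟨by omega, ?_⟩
    calc a * b ≤ l ^ p * l ^ q := Nat.mul_le_mul iha.2 ihb.2
      _ = l ^ (p + q) := (pow_add l p q).symm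

lemma key_s2 (l : ℕ) (hl : 1 < l) : ∀ n, 0 < n → l ∣ n →
    ∃ m, CanRepr l n m ∧ m + 1 ≤ l * Nat.log l n := by
  intro n
  induction n using Nat.strong_induction_on with
  | _ n ih =>
    intro hn hdvd
    obtain ⟨q, hq⟩ := hdvd
    have hq0 : 0 < q := by
      rcases Nat.eq_zero_or_pos q with h | h
      · subst h; simp at hq; omega
      · exact h
    by_cases hql : q < l
    · -- small case: n = q * l, cost q
      refine ⟨q, by rw [hq, mul_comm]; exact canRepr_smul_s2 l q hq0, ?_⟩
      have hlog : 1 ≤ Nat.log l n := Nat.log_pos hl (by rw [hq]; exact Nat.le_mul_of_pos_right l hq0)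
      calc q + 1 ≤ l := by omega
        _ ≤ l * Nat.log l n := Nat.le_mul_of_pos_right l hlog
    · push_neg at hql
      set r := q % l with hr
      set s := q - r with hs
      have hrl : r < l := Nat.mod_lt q (by omega)
      have hdm : l * (q / l) + q % l = q := Nat.div_add_mod q l
      have hsd : l ∣ s := ⟨q / l, by omega⟩
      have hs0 : 0 < s := by omega
      have hsq : s + r = q := by omega
      have hslt : s < n := by
        have : q < n := by rw [hq]; nlinarith
        omega
      obtain ⟨m', hm', hb'⟩ := ih s hslt hs0 hsd
      have hn' : n = s * l + r * l := by rw [hq, ← hsq]; ring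
      have h1 : s * l ≤ n := by omega
      have hlogn : Nat.log l s + 1 ≤ Nat.log l n := by
        have h2 : Nat.log l (s * l) = Nat.log l s + 1 := Nat.log_mul_base hl (by omega)
        calc Nat.log l s + 1 = Nat.log l (s * l) := h2.symm
          _ ≤ Nat.log l n := Nat.log_mono_right h1
      have hmul : l * (Nat.log l s + 1) ≤ l * Nat.log l n := Nat.mul_le_mul_left l hlogn
      have hexp : l * (Nat.log l s + 1) = l * Nat.log l s + l := by ring
      have hsl : CanRepr l (s * l) (m' + 1) := CanRepr.mul hm' CanRepr.base
      rcases Nat.eq_zero_or_pos r with hr0 | hr0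
      · refine ⟨m' + 1, ?_, by omega⟩
        have hrl0 : r * l = 0 := by rw [hr0, zero_mul]
        have : n = s * l := by omega
        rw [this]; exact hsl
      · refine ⟨m' + 1 + r, ?_, by omega⟩
        rw [hn']
        exact CanRepr.add hsl (canRepr_smul_s2 l r hr0)

theorem stmt_2 (l n : ℕ) (hl : 1 < l) (hn : 0 < n) (hdvd : l ∣ n) :
    Real.logb l n ≤ (complexity l n : ℝ) ∧
      (complexity l n : ℝ) ≤ l * Real.logb l n - 1 := by
  obtain ⟨m, hm, hmb⟩ := key_s2 l hl n hn hdvd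
  have hne : {m | CanRepr l n m}.Nonempty := ⟨m, hm⟩
  have hmem : CanRepr l n (complexity l n) := Nat.sInf_mem hne
  have hle : complexity l n ≤ m := Nat.sInf_le hm
  obtain ⟨h1, h2⟩ := canRepr_bound hl hmem
  have hlR : (1 : ℝ) < (l : ℝ) := by exact_mod_cast hl
  constructor
  · -- lower bound
    have hle2 : (n : ℝ) ≤ (l : ℝ) ^ (complexity l n) := by exact_mod_cast h2
    calc Real.logb l n ≤ Real.logb l ((l : ℝ) ^ (complexity l n)) :=
          Real.logb_le_logb_of_le hlR (by exact_mod_cast hn) hle2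
      _ = (complexity l n : ℝ) := by
          rw [Real.logb_pow, Real.logb_self_eq_one hlR]; ring
  · -- upper bound
    set k := Nat.log l n with hk
    have hlk : (l : ℝ) ^ k ≤ (n : ℝ) := by exact_mod_cast Nat.pow_log_le_self l hn.ne'
    have hkle : (k : ℝ) ≤ Real.logb l n := by
      calc (k : ℝ) = Real.logb l ((l : ℝ) ^ k) := by
            rw [Real.logb_pow, Real.logb_self_eq_one hlR]; ring
        _ ≤ Real.logb l n := Real.logb_le_logb_of_le hlR (by positivity) hlk
    have hnat : complexity l n + 1 ≤ l * k := by omega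
    have hcast : (complexity l n : ℝ) + 1 ≤ (l : ℝ) * (k : ℝ) := by exact_mod_cast hnat
    have h3 : (l : ℝ) * (k : ℝ) ≤ (l : ℝ) * Real.logb l n :=
      mul_le_mul_of_nonneg_left hkle (by positivity)
    linarith
end

section
/- Let l > 1 be an integer and let m ≥ m′ ≥ 1 be integers. Then ‖l^m + l^{m′}‖_l = m + 1. -/
lemma canRepr_mulPow (l x p a : ℕ) (h : CanRepr l x p) :
    CanRepr l (l ^ a * x) (a + p) := by
  induction a with
  | zero => simpa using h
  | succ n ih =>
    have h1 := CanRepr.mul CanRepr.base ih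
    have h2 : l * (l ^ n * x) = l ^ (n + 1) * x := by ring
    have h3 : 1 + (n + p) = n + 1 + p := by omega
    rw [h2, h3] at h1
    exact h1

lemma canRepr_pow (l k : ℕ) (hk : 1 ≤ k) : CanRepr l (l ^ k) k := by
  have h := canRepr_mulPow l l 1 (k - 1) CanRepr.base
  have h1 : l ^ (k - 1) * l = l ^ k := by
    rw [← pow_succ]; congr 1; omega
  have h2 : k - 1 + 1 = k := by omega
  rw [h1, h2] at h
  exact h

lemma canRepr_le (l n k : ℕ) (hl : 1 < l) (h : CanRepr l n k) :
    1 ≤ k ∧ n ≤ l ^ k := by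
  induction h with
  | base => exact ⟨le_refl 1, by simp⟩
  | @add a b p q ha hb iha ihb =>
    obtain ⟨hp, ha'⟩ := iha
    obtain ⟨hq, hb'⟩ := ihb
    refine ⟨by omega, ?_⟩
    have h2p : 2 ≤ l ^ p := le_trans hl (Nat.le_self_pow (by omega) l)
    have h2q : 2 ≤ l ^ q := le_trans hl (Nat.le_self_pow (by omega) l)
    calc a + b ≤ l ^ p + l ^ q := Nat.add_le_add ha' hb'
      _ ≤ l ^ p * l ^ q := Nat.add_le_mul h2p h2q
      _ = l ^ (p + q) := (pow_add l p q).symm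
  | @mul a b p q ha hb iha ihb =>
    obtain ⟨hp, ha'⟩ := iha
    obtain ⟨hq, hb'⟩ := ihb
    refine ⟨by omega, ?_⟩
    calc a * b ≤ l ^ p * l ^ q := Nat.mul_le_mul ha' hb'
      _ = l ^ (p + q) := (pow_add l p q).symm

theorem stmt_3 (l m m' : ℕ) (hl : 1 < l) (hm : m' ≤ m) (hm' : 1 ≤ m') :
    complexity l (l ^ m + l ^ m') = m + 1 := by
  have hub : CanRepr l (l ^ m + l ^ m') (m + 1) := by
    have h1 : CanRepr l (l ^ (m - m' + 1) + l) (m - m' + 1 + 1) :=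
      CanRepr.add (canRepr_pow l (m - m' + 1) (by omega)) CanRepr.base
    have h2 := canRepr_mulPow l _ _ (m' - 1) h1
    have hv : l ^ (m' - 1) * (l ^ (m - m' + 1) + l) = l ^ m + l ^ m' := by
      rw [Nat.mul_add, ← pow_add, ← pow_succ]
      congr 1 <;> congr 1 <;> omega
    have hc : m' - 1 + (m - m' + 1 + 1) = m + 1 := by omega
    rw [hv, hc] at h2
    exact h2
  have hne : {k | CanRepr l (l ^ m + l ^ m') k}.Nonempty := ⟨m + 1, hub⟩
  have hmem := Nat.sInf_mem hne
  obtain ⟨h1, h2⟩ := canRepr_le l _ _ hl hmem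
  have hgt : l ^ m < l ^ m + l ^ m' := by
    have : 0 < l ^ m' := Nat.pow_pos (by omega)
    omega
  have hlt : l ^ m < l ^ (sInf {k | CanRepr l (l ^ m + l ^ m') k}) :=
    lt_of_lt_of_le hgt h2
  have hmk : m < sInf {k | CanRepr l (l ^ m + l ^ m') k} :=
    (pow_lt_pow_iff_right₀ hl).mp hlt
  have hle : sInf {k | CanRepr l (l ^ m + l ^ m') k} ≤ m + 1 := Nat.sInf_le hub
  unfold complexity
  omega
end

section
/- Let l > 1 be an integer and let n be a positive multiple of l. Write n = b + a·l uniquely where b is a nonnegative multiple of l² and 0 ≤ a ≤ l − 1. Then ‖n‖_l = ‖b‖_l + a, where by convention ‖0‖_l = 0. -/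
namespace StmtAux

lemma repr_bounds {l : ℕ} (hl : 1 < l) {n m : ℕ} (h : CanRepr l n m) :
    1 ≤ m ∧ l * m ≤ n ∧ l ∣ n := by
  induction h with
  | base => exact ⟨le_refl 1, by omega, dvd_refl l⟩
  | @add x y p q h1 h2 ih1 ih2 =>
      obtain ⟨hp, hlp, hd1⟩ := ih1; obtain ⟨hq, hlq, hd2⟩ := ih2
      refine ⟨by omega, ?_, dvd_add hd1 hd2⟩
      rw [Nat.mul_add]; omega
  | @mul x y p q h1 h2 ih1 ih2 =>
      obtain ⟨hp, hlp, hd1⟩ := ih1; obtain ⟨hq, hlq, hd2⟩ := ih2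
      refine ⟨by omega, ?_, hd1.mul_right _⟩
      have h1 : p ≤ p * q := Nat.le_mul_of_pos_right p (by omega)
      have h2 : q ≤ p * q := Nat.le_mul_of_pos_left q (by omega)
      calc l * (p + q) ≤ l * (p * q + p * q) := Nat.mul_le_mul_left l (by omega)
        _ = 2 * (l * (p * q)) := by ring
        _ ≤ l * (l * (p * q)) := Nat.mul_le_mul_right _ (by omega)
        _ = (l * p) * (l * q) := by ring
        _ ≤ x * y := Nat.mul_le_mul hlp hlq

lemma repr_mul {l k : ℕ} (hk : 0 < k) : CanRepr l (l * k) k := by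
  induction k with
  | zero => omega
  | succ k ih =>
      rcases Nat.eq_zero_or_pos k with rfl | hk'
      · simpa using CanRepr.base
      · have := CanRepr.add (ih hk') (CanRepr.base (l := l))
        simpa [Nat.mul_succ] using this

lemma compl_le {l n m : ℕ} (h : CanRepr l n m) : complexity l n ≤ m :=
  Nat.sInf_le h

lemma compl_mem {l n : ℕ} (hd : l ∣ n) (hn : 0 < n) :
    CanRepr l n (complexity l n) := by
  obtain ⟨k, rfl⟩ := hd
  rcases Nat.eq_zero_or_pos k with rfl | hk
  · simp at hn
  · exact Nat.sInf_mem ⟨k, repr_mul hk⟩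

lemma compl_zero {l : ℕ} (hl : 1 < l) : complexity l 0 = 0 := by
  have : {m | CanRepr l 0 m} = ∅ := by
    ext m
    simp only [Set.mem_setOf_eq, Set.mem_empty_iff_false, iff_false]
    intro h
    obtain ⟨h1, h2, -⟩ := repr_bounds hl h
    have := Nat.mul_pos (show 0 < l by omega) (show 0 < m by omega)
    omega
  simp [complexity, this]

lemma compl_add {l x y : ℕ} (hl : 1 < l) (hx : l ∣ x) (hy : l ∣ y) :
    complexity l (x + y) ≤ complexity l x + complexity l y := by
  rcases Nat.eq_zero_or_pos x with rfl | hx0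
  · simp [compl_zero hl]
  rcases Nat.eq_zero_or_pos y with rfl | hy0
  · simp [compl_zero hl]
  exact compl_le (CanRepr.add (compl_mem hx hx0) (compl_mem hy hy0))

/-- Canonical-form complexity bound. -/
noncomputable def Fc (l n : ℕ) : ℕ := complexity l (l ^ 2 * (n / l ^ 2)) + n % l ^ 2 / l

lemma Fc_eq {l b a : ℕ} (hl : 1 < l) (hb : l ^ 2 ∣ b) (ha : a < l) :
    Fc l (b + a * l) = complexity l b + a := by
  obtain ⟨k, rfl⟩ := hb
  have hal : a * l < l ^ 2 := by nlinarith
  have hpos : 0 < l ^ 2 := by positivity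
  have hmod : (l ^ 2 * k + a * l) % l ^ 2 = a * l := by
    rw [Nat.mul_add_mod]
    exact Nat.mod_eq_of_lt hal
  have hdiv : (l ^ 2 * k + a * l) / l ^ 2 = k := by
    rw [Nat.mul_add_div hpos, Nat.div_eq_of_lt hal, Nat.add_zero]
  have hall : a * l / l = a := Nat.mul_div_cancel a (by omega)
  rw [Fc, hmod, hdiv, hall]

lemma canrepr_ub {l x a : ℕ} (hl : 1 < l) (hx : l ∣ x) (hpos : 0 < x + a * l) :
    CanRepr l (x + a * l) (complexity l x + a) := by
  rcases Nat.eq_zero_or_pos x with rfl | hx0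
  · rcases Nat.eq_zero_or_pos a with rfl | ha
    · simp at hpos
    have := repr_mul (l := l) ha
    rw [compl_zero hl]
    simpa [Nat.mul_comm] using this
  rcases Nat.eq_zero_or_pos a with rfl | ha0
  · simpa using compl_mem hx hx0
  · have := CanRepr.add (compl_mem hx hx0) (repr_mul (l := l) ha0)
    simpa [Nat.mul_comm] using this

lemma exists_decomp {l x : ℕ} (hl : 1 < l) (hx : l ∣ x) :
    ∃ b a, l ^ 2 ∣ b ∧ a < l ∧ x = b + a * l ∧ Fc l x = complexity l b + a := by
  refine ⟨l ^ 2 * (x / l ^ 2), x % l ^ 2 / l, Dvd.intro _ rfl, ?_, ?_, rfl⟩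
  · have : x % l ^ 2 < l ^ 2 := Nat.mod_lt _ (by positivity)
    have := Nat.div_lt_iff_lt_mul (show 0 < l by omega) |>.mpr
      (by nlinarith : x % l ^ 2 < l * l)
    exact this
  · have hdl : l ∣ x % l ^ 2 := (Nat.dvd_mod_iff (dvd_pow_self l two_ne_zero)).mpr hx
    have : x % l ^ 2 / l * l = x % l ^ 2 := Nat.div_mul_cancel hdl
    rw [this]
    exact (Nat.div_add_mod x (l ^ 2)).symm

lemma repr_Fc {l x : ℕ} (hl : 1 < l) (hx : l ∣ x) (hx0 : 0 < x) :
    CanRepr l x (Fc l x) := by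
  obtain ⟨b, a, hb, ha, hxeq, hFc⟩ := exists_decomp hl hx
  rw [hFc, hxeq]
  exact canrepr_ub hl (dvd_trans (dvd_pow_self l two_ne_zero) hb) (hxeq ▸ hx0)

lemma Fc_mul {l x y : ℕ} (hl : 1 < l) (hx : l ∣ x) (hy : l ∣ y)
    (hx0 : 0 < x) (hy0 : 0 < y) : Fc l (x * y) ≤ Fc l x + Fc l y := by
  have hxy : l ^ 2 ∣ x * y := by rw [sq]; exact mul_dvd_mul hx hy
  have h1 : Fc l (x * y) = complexity l (x * y) := by
    have := Fc_eq (a := 0) hl hxy (by omega)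
    simpa using this
  rw [h1]
  exact compl_le (CanRepr.mul (repr_Fc hl hx hx0) (repr_Fc hl hy hy0))

lemma Fc_add {l x y : ℕ} (hl : 1 < l) (hx : l ∣ x) (hy : l ∣ y) :
    Fc l (x + y) ≤ Fc l x + Fc l y := by
  obtain ⟨b1, a1, hb1, ha1, hx1, hF1⟩ := exists_decomp hl hx
  obtain ⟨b2, a2, hb2, ha2, hx2, hF2⟩ := exists_decomp hl hy
  have hdb1 : l ∣ b1 := dvd_trans (dvd_pow_self l two_ne_zero) hb1
  have hdb2 : l ∣ b2 := dvd_trans (dvd_pow_self l two_ne_zero) hb2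
  rw [hF1, hF2, hx1, hx2]
  by_cases hc : a1 + a2 < l
  · have heq : b1 + a1 * l + (b2 + a2 * l) = (b1 + b2) + (a1 + a2) * l := by ring
    rw [heq, Fc_eq hl (dvd_add hb1 hb2) hc]
    have := compl_add hl hdb1 hdb2
    omega
  · set c := a1 + a2 - l with hc'
    have hcl : c < l := by omega
    have hsum : a1 + a2 = c + l := by omega
    have heq : b1 + a1 * l + (b2 + a2 * l) = (b1 + b2 + l ^ 2) + c * l := by
      have : (a1 + a2) * l = c * l + l ^ 2 := by rw [hsum]; ring
      nlinarith [this]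
    rw [heq, Fc_eq hl (by exact dvd_add (dvd_add hb1 hb2) dvd_rfl) hcl]
    have h2 : complexity l (l ^ 2) ≤ 2 := by
      have : CanRepr l (l * l) (1 + 1) := CanRepr.mul CanRepr.base CanRepr.base
      have := compl_le this
      simpa [sq] using this
    have h3 : complexity l (b1 + b2 + l ^ 2) ≤
        complexity l b1 + complexity l b2 + complexity l (l ^ 2) := by
      calc complexity l (b1 + b2 + l ^ 2)
          ≤ complexity l (b1 + b2) + complexity l (l ^ 2) :=
            compl_add hl (dvd_add hdb1 hdb2) (dvd_pow_self l two_ne_zero)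
        _ ≤ _ := by have := compl_add hl hdb1 hdb2; omega
    omega

lemma Fc_base {l : ℕ} (hl : 1 < l) : Fc l l = 1 := by
  have := Fc_eq (b := 0) (a := 1) hl (dvd_zero _) hl
  simp only [Nat.zero_add, Nat.one_mul] at this
  rw [this, compl_zero hl]

lemma lower {l n m : ℕ} (hl : 1 < l) (h : CanRepr l n m) : Fc l n ≤ m := by
  induction h with
  | base => exact (Fc_base hl).le
  | @add x y p q h1 h2 ih1 ih2 =>
      obtain ⟨_, _, hd1⟩ := repr_bounds hl h1
      obtain ⟨_, _, hd2⟩ := repr_bounds hl h2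
      have := Fc_add hl hd1 hd2
      omega
  | @mul x y p q h1 h2 ih1 ih2 =>
      obtain ⟨hp, hlp, hd1⟩ := repr_bounds hl h1
      obtain ⟨hq, hlq, hd2⟩ := repr_bounds hl h2
      have hx0 : 0 < x := Nat.lt_of_lt_of_le (Nat.mul_pos (by omega) hp) hlp
      have hy0 : 0 < y := Nat.lt_of_lt_of_le (Nat.mul_pos (by omega) hq) hlq
      have := Fc_mul hl hd1 hd2 hx0 hy0
      omega

end StmtAux

theorem stmt_4 (l n a b : ℕ) (hl : 1 < l) (hn : 0 < n) (hdvd : l ∣ n)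
    (hb : l ^ 2 ∣ b) (ha : a ≤ l - 1) (hsum : n = b + a * l) :
    complexity l n = complexity l b + a := by
  have ha' : a < l := by omega
  have hdb : l ∣ b := dvd_trans (dvd_pow_self l two_ne_zero) hb
  have hub : complexity l n ≤ complexity l b + a := by
    rw [hsum]
    exact StmtAux.compl_le (StmtAux.canrepr_ub hl hdb (hsum ▸ hn))
  have hlb : complexity l b + a ≤ complexity l n := by
    have h1 := StmtAux.lower hl (StmtAux.compl_mem hdvd hn)
    have h2 : StmtAux.Fc l n = complexity l b + a := by
      rw [hsum]; exact StmtAux.Fc_eq hl hb ha'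
    omega
  omega
end

section
/- Let n be a positive even integer that is not expressible as a sum of one or two powers of 2 (i.e., n is not of the form 2^{m} or 2^{m₁} + 2^{m₂}). Then log₂(n) + 1 ≤ ‖n‖₂, where log₂ denotes the real base-2 logarithm. -/
/-- `n` is a power of two or the sum of two powers of two. -/
def IsSpec (n : ℕ) : Prop := (∃ k, n = 2 ^ k) ∨ ∃ k j, n = 2 ^ k + 2 ^ j

lemma pow2_step {a b : ℕ} (h : (2:ℕ) ^ a < 2 ^ b) : 2 * 2 ^ a ≤ 2 ^ b := by
  have hab : a < b := (Nat.pow_lt_pow_iff_right (by norm_num)).1 h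
  calc 2 * 2 ^ a = 2 ^ (a + 1) := by rw [pow_succ]; ring
    _ ≤ 2 ^ b := Nat.pow_le_pow_right (by norm_num) hab

lemma spec_exps {x : ℕ} (hs : IsSpec x) (hnp : ¬ ∃ k, x = 2 ^ k) :
    ∃ k j, j < k ∧ x = 2 ^ k + 2 ^ j := by
  rcases hs with h | ⟨k, j, hx⟩
  · exact absurd h hnp
  rcases lt_trichotomy j k with h | h | h
  · exact ⟨k, j, h, hx⟩
  · subst h
    exact absurd ⟨j + 1, by rw [hx, pow_succ]; ring⟩ hnp
  · exact ⟨j, k, h, by omega⟩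

lemma spec_struct {x r : ℕ} (hxe : 2 ∣ x) (hs : IsSpec x) (hnp : ¬ ∃ k, x = 2 ^ k)
    (hle : x ≤ 2 ^ r) : 4 * x ≤ 3 * 2 ^ r ∧ 8 ≤ 2 ^ r := by
  obtain ⟨k, j, hjk, hx⟩ := spec_exps hs hnp
  have hj1 : 1 ≤ j := by
    by_contra h
    have hj0 : j = 0 := by omega
    have h2k : 2 ∣ 2 ^ k := dvd_pow_self 2 (by omega)
    rw [hx, hj0, pow_zero] at hxe
    omega
  have hk2 : 2 ≤ k := by omega
  have hjpos : 0 < (2:ℕ) ^ j := pow_pos (by norm_num) _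
  have h1 : 2 * 2 ^ k ≤ 2 ^ r := pow2_step (by omega)
  have h2 : 2 * 2 ^ j ≤ 2 ^ k := pow2_step (Nat.pow_lt_pow_right (by norm_num) hjk)
  have h3 : 4 ≤ 2 ^ k := by
    calc (4:ℕ) = 2 ^ 2 := rfl
      _ ≤ 2 ^ k := Nat.pow_le_pow_right (by norm_num) hk2
  constructor
  · omega
  · omega

lemma pow2_cases {P : ℕ} (hp : ∃ p, P = 2 ^ p) (h2 : 2 ≤ P) : P = 2 ∨ 4 ≤ P := by
  obtain ⟨p, rfl⟩ := hp
  match p with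
  | 0 => norm_num at h2
  | 1 => left; rfl
  | (p+2) =>
    right
    calc (4:ℕ) = 2 ^ 2 := rfl
      _ ≤ 2 ^ (p + 2) := Nat.pow_le_pow_right (by norm_num) (by omega)

lemma bound_add1 {a b P Q : ℕ} (ha : a ≤ P) (ha2 : 2 ≤ a) (hb : 2 * b ≤ Q) (hb2 : 2 ≤ b) :
    2 * (a + b) ≤ P * Q := by nlinarith

lemma bound_add2 {a b P Q : ℕ} (ha : 4 * a ≤ 3 * P) (hb : 4 * b ≤ 3 * Q)
    (hP : 8 ≤ P) (hQ : 8 ≤ Q) : 2 * (a + b) ≤ P * Q := by nlinarith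

lemma bound_add4 {a b P Q : ℕ} (ha : a ≤ P) (ha2 : 2 ≤ a) (hb : 4 * b ≤ 3 * Q)
    (hQ : 8 ≤ Q) (hP : P = 2 ∨ 4 ≤ P) : 2 * (a + b) ≤ P * Q := by
  rcases hP with rfl | hP
  · have : a = 2 := by omega
    subst this
    nlinarith
  · nlinarith

lemma bound_mul_ss {A B C D P Q : ℕ} (h1 : 2 * A ≤ P) (h2 : 4 * B ≤ A)
    (h3 : 2 * C ≤ Q) (h4 : 2 * D ≤ C) : 2 * ((A + B) * (C + D)) ≤ P * Q := by
  have ha : 8 * (A + B) ≤ 5 * P := by omega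
  have hb : 4 * (C + D) ≤ 3 * Q := by omega
  have := Nat.mul_le_mul ha hb
  nlinarith

lemma main_lemma {n m : ℕ} (h : CanRepr 2 n m) :
    2 ≤ n ∧ 2 ∣ n ∧ n ≤ 2 ^ m ∧ (¬ IsSpec n → 2 * n ≤ 2 ^ m) := by
  induction h with
  | base =>
    refine ⟨le_refl _, dvd_refl _, by norm_num, fun hs => absurd (Or.inl ⟨1, by norm_num⟩) hs⟩
  | @add a b p q ha hb iha ihb =>
    obtain ⟨ha2, hae, haP, ha3⟩ := iha
    obtain ⟨hb2, hbe, hbQ, hb3⟩ := ihb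
    have hP2 : 2 ≤ 2 ^ p := le_trans ha2 haP
    have hQ2 : 2 ≤ 2 ^ q := le_trans hb2 hbQ
    have hpq : (2:ℕ) ^ (p + q) = 2 ^ p * 2 ^ q := pow_add 2 p q
    refine ⟨by omega, Dvd.dvd.add hae hbe, ?_, ?_⟩
    · rw [hpq]; nlinarith
    · intro hn
      rw [hpq]
      by_cases sb : IsSpec b
      · by_cases sa : IsSpec a
        · by_cases pa : ∃ i, a = 2 ^ i
          · by_cases pb : ∃ k, b = 2 ^ k
            · obtain ⟨i, rfl⟩ := pa
              obtain ⟨k, rfl⟩ := pb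
              exact absurd (Or.inr ⟨i, k, rfl⟩) hn
            · obtain ⟨h4b, h8Q⟩ := spec_struct hbe sb pb hbQ
              exact bound_add4 haP ha2 h4b h8Q (pow2_cases ⟨p, rfl⟩ hP2)
          · by_cases pb : ∃ k, b = 2 ^ k
            · obtain ⟨h4a, h8P⟩ := spec_struct hae sa pa haP
              have := bound_add4 hbQ hb2 h4a h8P (pow2_cases ⟨q, rfl⟩ hQ2)
              calc 2 * (a + b) = 2 * (b + a) := by ring
                _ ≤ 2 ^ q * 2 ^ p := this
                _ = 2 ^ p * 2 ^ q := by ring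
            · obtain ⟨h4a, h8P⟩ := spec_struct hae sa pa haP
              obtain ⟨h4b, h8Q⟩ := spec_struct hbe sb pb hbQ
              exact bound_add2 h4a h4b h8P h8Q
        · -- ¬ IsSpec a
          have := bound_add1 hbQ hb2 (ha3 sa) ha2
          calc 2 * (a + b) = 2 * (b + a) := by ring
            _ ≤ 2 ^ q * 2 ^ p := this
            _ = 2 ^ p * 2 ^ q := by ring
      · exact bound_add1 haP ha2 (hb3 sb) hb2
  | @mul a b p q ha hb iha ihb =>
    obtain ⟨ha2, hae, haP, ha3⟩ := iha
    obtain ⟨hb2, hbe, hbQ, hb3⟩ := ihb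
    have hpq : (2:ℕ) ^ (p + q) = 2 ^ p * 2 ^ q := pow_add 2 p q
    refine ⟨by nlinarith, Dvd.dvd.mul_right hae b, by rw [hpq]; exact Nat.mul_le_mul haP hbQ, ?_⟩
    intro hn
    rw [hpq]
    by_cases sa : IsSpec a
    · by_cases sb : IsSpec b
      · by_cases pa : ∃ i, a = 2 ^ i
        · by_cases pb : ∃ k, b = 2 ^ k
          · obtain ⟨i, rfl⟩ := pa
            obtain ⟨k, rfl⟩ := pb
            exact absurd (Or.inl ⟨i + k, (pow_add 2 i k).symm⟩) hn
          · obtain ⟨i, rfl⟩ := pa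
            obtain ⟨k, l, hlk, rfl⟩ := spec_exps sb pb
            refine absurd (Or.inr ⟨i + k, i + l, ?_⟩) hn
            rw [mul_add, ← pow_add, ← pow_add]
        · by_cases pb : ∃ k, b = 2 ^ k
          · obtain ⟨k, rfl⟩ := pb
            obtain ⟨i, j, hji, rfl⟩ := spec_exps sa pa
            refine absurd (Or.inr ⟨i + k, j + k, ?_⟩) hn
            rw [add_mul, ← pow_add, ← pow_add]
          · obtain ⟨i, j, hji, rfl⟩ := spec_exps sa pa
            obtain ⟨k, l, hlk, rfl⟩ := spec_exps sb pb
            have hjpos : 0 < (2:ℕ) ^ j := pow_pos (by norm_num) _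
            have hlpos : 0 < (2:ℕ) ^ l := pow_pos (by norm_num) _
            have hiP : 2 * 2 ^ i ≤ 2 ^ p := pow2_step (by omega)
            have hkQ : 2 * 2 ^ k ≤ 2 ^ q := pow2_step (by omega)
            have hji' : 2 * 2 ^ j ≤ 2 ^ i := pow2_step (Nat.pow_lt_pow_right (by norm_num) hji)
            have hlk' : 2 * 2 ^ l ≤ 2 ^ k := pow2_step (Nat.pow_lt_pow_right (by norm_num) hlk)
            rcases Nat.lt_or_ge (j + 1) i with hc1 | hc1
            · -- j + 2 ≤ i
              have h4 : 4 * 2 ^ j ≤ 2 ^ i := by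
                calc 4 * 2 ^ j = 2 * 2 ^ (j + 1) := by rw [pow_succ]; ring
                  _ ≤ 2 ^ i := pow2_step (Nat.pow_lt_pow_right (by norm_num) hc1)
              exact bound_mul_ss hiP h4 hkQ hlk'
            · have hi : i = j + 1 := by omega
              rcases Nat.lt_or_ge (l + 1) k with hc2 | hc2
              · have h4 : 4 * 2 ^ l ≤ 2 ^ k := by
                  calc 4 * 2 ^ l = 2 * 2 ^ (l + 1) := by rw [pow_succ]; ring
                    _ ≤ 2 ^ k := pow2_step (Nat.pow_lt_pow_right (by norm_num) hc2)
                have := bound_mul_ss hkQ h4 hiP hji'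
                calc 2 * ((2 ^ i + 2 ^ j) * (2 ^ k + 2 ^ l))
                    = 2 * ((2 ^ k + 2 ^ l) * (2 ^ i + 2 ^ j)) := by ring
                  _ ≤ 2 ^ q * 2 ^ p := this
                  _ = 2 ^ p * 2 ^ q := by ring
              · have hk : k = l + 1 := by omega
                subst hi hk
                refine absurd (Or.inr ⟨j + l + 3, j + l, ?_⟩) hn
                have : (2:ℕ) ^ (j + 1) + 2 ^ j = 3 * 2 ^ j := by rw [pow_succ]; ring
                have h2 : (2:ℕ) ^ (l + 1) + 2 ^ l = 3 * 2 ^ l := by rw [pow_succ]; ring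
                rw [this, h2]
                have h3 : (2:ℕ) ^ (j + l + 3) = 8 * (2 ^ j * 2 ^ l) := by
                  rw [show j + l + 3 = (j + l) + 3 from rfl, pow_add, pow_add]; ring
                rw [h3, pow_add]
                ring
      · -- ¬ IsSpec b
        calc 2 * (a * b) = a * (2 * b) := by ring
          _ ≤ 2 ^ p * 2 ^ q := Nat.mul_le_mul haP (hb3 sb)
    · calc 2 * (a * b) = (2 * a) * b := by ring
        _ ≤ 2 ^ p * 2 ^ q := Nat.mul_le_mul (ha3 sa) hbQ

lemma canRepr_two_mul : ∀ k, 1 ≤ k → CanRepr 2 (2 * k) k := by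
  intro k hk
  induction k with
  | zero => omega
  | succ k ih =>
    rcases Nat.eq_or_lt_of_le hk with h | h
    · have : 2 * 1 = 2 := by norm_num
      rw [← h, this]
      exact CanRepr.base
    · have h1 : 1 ≤ k := by omega
      have := CanRepr.add CanRepr.base (ih h1)
      have he : 2 * (k + 1) = 2 + 2 * k := by ring
      have he2 : k + 1 = 1 + k := by ring
      rw [he, he2]
      exact this

theorem stmt_7 (n : ℕ) (hn : 0 < n) (heven : 2 ∣ n)
    (h1 : ¬ ∃ k : ℕ, n = 2 ^ k)
    (h2 : ¬ ∃ k j : ℕ, n = 2 ^ k + 2 ^ j) :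
    Real.logb 2 n + 1 ≤ (complexity 2 n : ℝ) := by
  obtain ⟨k, hk⟩ := heven
  have hk1 : 1 ≤ k := by omega
  have hne : {m | CanRepr 2 n m}.Nonempty := ⟨k, by rw [hk]; exact canRepr_two_mul k hk1⟩
  have hmem : CanRepr 2 n (complexity 2 n) := Nat.sInf_mem hne
  obtain ⟨hn2, _, _, h3⟩ := main_lemma hmem
  have hns : ¬ IsSpec n := by rintro (h | h); exacts [h1 h, h2 h]
  have hbound : 2 * n ≤ 2 ^ complexity 2 n := h3 hns
  set c := complexity 2 n with hc
  have hR : (2:ℝ) * n ≤ 2 ^ c := by exact_mod_cast hbound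
  have hn0 : (0:ℝ) < n := by exact_mod_cast hn
  have hlog : Real.logb 2 ((2:ℝ) * n) ≤ Real.logb 2 ((2:ℝ) ^ c) :=
    Real.logb_le_logb_of_le (by norm_num) (by positivity) hR
  rw [Real.logb_mul (by norm_num) (ne_of_gt hn0)] at hlog
  rw [← Real.rpow_natCast 2 c, Real.logb_rpow (by norm_num) (by norm_num)] at hlog
  have : Real.logb 2 2 = 1 := Real.logb_self_eq_one (by norm_num)
  rw [this] at hlog
  linarith
end

section
/- Let m ≥ 3 and let n be a positive even integer with 2^m < n ≤ 2^{m+1}. Then ‖n‖₂ = m + 2 if n is of one of the following forms: (a) n = 2^{m₁} + 2^{m₂} + 2^{m₃} with m = m₁ > m₂ > m₃ ≥ 1; (b) n = 2^{m₁} + 2^{m₂} + 2^{m₃} + 2^{m₄} with m = m₁ > m₂ > m₃ > m₄ ≥ 2 and m₁ + m₄ = m₂ + m₃; (c) n = 2^{m₁} + 2^{m₁−3} + 2^{m₂} + 2^{m₂−1} with m = m₁ ≥ m₂ + 3 ≥ 6; (d) n = 2^m + 2^{m−5} + 2^{m−6} + 2^{m−7} with m ≥ 10. -/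
/-- The four special forms of Corollary 7 / Theorem 1.2(2). -/
def GoodForm (m n : ℕ) : Prop :=
  (∃ m₂ m₃, m > m₂ ∧ m₂ > m₃ ∧ 1 ≤ m₃ ∧ n = 2 ^ m + 2 ^ m₂ + 2 ^ m₃) ∨
  (∃ m₂ m₃ m₄, m > m₂ ∧ m₂ > m₃ ∧ m₃ > m₄ ∧ 2 ≤ m₄ ∧ m + m₄ = m₂ + m₃ ∧
    n = 2 ^ m + 2 ^ m₂ + 2 ^ m₃ + 2 ^ m₄) ∨
  (∃ m₂, m₂ + 3 ≤ m ∧ 6 ≤ m₂ + 3 ∧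
    n = 2 ^ m + 2 ^ (m - 3) + 2 ^ m₂ + 2 ^ (m₂ - 1)) ∨
  (10 ≤ m ∧ n = 2 ^ m + 2 ^ (m - 5) + 2 ^ (m - 6) + 2 ^ (m - 7))

lemma cr_congr {l a p a' p' : ℕ} (h : CanRepr l a p) (ha : a = a') (hp : p = p') :
    CanRepr l a' p' := by subst ha; subst hp; exact h

lemma cr_facts {n k : ℕ} (h : CanRepr 2 n k) : 2 ≤ n ∧ 1 ≤ k ∧ n ≤ 2 ^ k ∧ 2 ∣ n := by
  induction h with
  | base => norm_num
  | @add a b p q h1 h2 ih1 ih2 =>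
    obtain ⟨ha2, hp1, haub, haev⟩ := ih1
    obtain ⟨hb2, hq1, hbub, hbev⟩ := ih2
    refine ⟨by omega, by omega, ?_, by omega⟩
    have h2p : 2 ≤ 2 ^ p := by
      calc (2:ℕ) = 2 ^ 1 := by norm_num
      _ ≤ 2 ^ p := Nat.pow_le_pow_right (by norm_num) hp1
    have h2q : 2 ≤ 2 ^ q := by
      calc (2:ℕ) = 2 ^ 1 := by norm_num
      _ ≤ 2 ^ q := Nat.pow_le_pow_right (by norm_num) hq1
    calc a + b ≤ 2 ^ p + 2 ^ q := by omega
    _ ≤ 2 ^ p * 2 ^ q := by nlinarith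
    _ = 2 ^ (p + q) := (pow_add 2 p q).symm
  | @mul a b p q h1 h2 ih1 ih2 =>
    obtain ⟨ha2, hp1, haub, haev⟩ := ih1
    obtain ⟨hb2, hq1, hbub, hbev⟩ := ih2
    refine ⟨by nlinarith, by omega, ?_, Dvd.dvd.mul_right haev b⟩
    calc a * b ≤ 2 ^ p * 2 ^ q := Nat.mul_le_mul haub hbub
    _ = 2 ^ (p + q) := (pow_add 2 p q).symm

lemma cr_one_aux {n k : ℕ} (h : CanRepr 2 n k) (hk : k = 1) : n = 2 := by
  cases h with
  | base => rfl
  | add h1 h2 =>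
    obtain ⟨-, hp, -, -⟩ := cr_facts h1
    obtain ⟨-, hq, -, -⟩ := cr_facts h2
    omega
  | mul h1 h2 =>
    obtain ⟨-, hp, -, -⟩ := cr_facts h1
    obtain ⟨-, hq, -, -⟩ := cr_facts h2
    omega

lemma cr_one {n : ℕ} (h : CanRepr 2 n 1) : n = 2 := cr_one_aux h rfl

/-- Characterization of values greater than `2^(k-1)` expressible with `k` twos. -/
lemma cr_char {n k : ℕ} (h : CanRepr 2 n k) :
    2 ^ k < 2 * n → n = 2 ^ k ∨ ∃ j, 1 ≤ j ∧ j + 2 ≤ k ∧ 2 * n = 2 ^ k + 2 ^ (j + 1) := by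
  induction h with
  | base => intro _; left; norm_num
  | @add a b p q h1 h2 ih1 ih2 =>
    intro hlt
    obtain ⟨ha2, hp1, haub, haev⟩ := cr_facts h1
    obtain ⟨hb2, hq1, hbub, hbev⟩ := cr_facts h2
    by_cases hpq : 2 ≤ p ∧ 2 ≤ q
    · exfalso
      have e1 : 2 ^ (p + 2) ≤ 2 ^ (p + q) := Nat.pow_le_pow_right (by norm_num) (by omega)
      have e2 : 2 ^ (q + 2) ≤ 2 ^ (p + q) := Nat.pow_le_pow_right (by norm_num) (by omega)
      have hp' : (2:ℕ) ^ (p + 2) = 4 * 2 ^ p := by ring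
      have hq' : (2:ℕ) ^ (q + 2) = 4 * 2 ^ q := by ring
      omega
    · have hdvd_p : (2:ℕ) ∣ 2 ^ p := dvd_pow_self 2 (by omega)
      have hdvd_q : (2:ℕ) ∣ 2 ^ q := dvd_pow_self 2 (by omega)
      have hps : (2:ℕ) ^ (p + q) = 2 ^ p * 2 ^ q := pow_add 2 p q
      rcases (by omega : p = 1 ∨ q = 1) with hp | hq
      · -- a = 2
        have ha : a = 2 := cr_one (by rw [hp] at h1; exact h1)
        subst ha; subst hp
        have hb : b = 2 ^ q := by
          have h2q : (2:ℕ) ^ (q + 1) = 2 * 2 ^ q := by ring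
          omega
        subst hb
        by_cases hq1' : q = 1
        · subst hq1'; left; norm_num
        · right
          refine ⟨1, le_refl 1, by omega, ?_⟩
          have h2q : (2:ℕ) ^ (1 + q) = 2 * 2 ^ q := by ring
          omega
      · have hb : b = 2 := cr_one (by rw [hq] at h2; exact h2)
        subst hb; subst hq
        have ha : a = 2 ^ p := by
          have h2p : (2:ℕ) ^ (p + 1) = 2 * 2 ^ p := by ring
          omega
        subst ha
        by_cases hp1' : p = 1
        · subst hp1'; left; norm_num
        · right
          refine ⟨1, le_refl 1, by omega, ?_⟩
          have h2p : (2:ℕ) ^ (p + 1) = 2 * 2 ^ p := by ring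
          omega
  | @mul a b p q h1 h2 ih1 ih2 =>
    intro hlt
    obtain ⟨ha2, hp1, haub, haev⟩ := cr_facts h1
    obtain ⟨hb2, hq1, hbub, hbev⟩ := cr_facts h2
    have hps : (2:ℕ) ^ (p + q) = 2 ^ p * 2 ^ q := pow_add 2 p q
    have hpa : 2 ^ p < 2 * a := by
      by_contra hc
      push_neg at hc
      have : 2 * (a * b) ≤ 2 ^ p * 2 ^ q := by
        calc 2 * (a * b) = (2 * a) * b := by ring
        _ ≤ 2 ^ p * 2 ^ q := Nat.mul_le_mul hc hbub
      omega
    have hpb : 2 ^ q < 2 * b := by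
      by_contra hc
      push_neg at hc
      have : 2 * (a * b) ≤ 2 ^ p * 2 ^ q := by
        calc 2 * (a * b) = a * (2 * b) := by ring
        _ ≤ 2 ^ p * 2 ^ q := Nat.mul_le_mul haub hc
      omega
    rcases ih1 hpa with ha | ⟨i, hi1, hi2, ha⟩ <;> rcases ih2 hpb with hb | ⟨j, hj1, hj2, hb⟩
    · left; rw [ha, hb, pow_add]
    · right
      refine ⟨p + j, by omega, by omega, ?_⟩
      calc 2 * (a * b) = a * (2 * b) := by ring
      _ = 2 ^ p * (2 ^ q + 2 ^ (j + 1)) := by rw [ha, hb]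
      _ = 2 ^ (p + q) + 2 ^ ((p + j) + 1) := by
          rw [pow_add 2 p q, pow_add 2 (p + j) 1, pow_add 2 p j]; ring
    · right
      refine ⟨q + i, by omega, by omega, ?_⟩
      calc 2 * (a * b) = b * (2 * a) := by ring
      _ = 2 ^ q * (2 ^ p + 2 ^ (i + 1)) := by rw [ha, hb]
      _ = 2 ^ (p + q) + 2 ^ ((q + i) + 1) := by
          rw [pow_add 2 p q, pow_add 2 (q + i) 1, pow_add 2 q i]; ring
    · have key : 4 * (a * b) =
          2 ^ (p + q) + 2 ^ (p + (j + 1)) + 2 ^ (q + (i + 1)) + 2 ^ ((i + 1) + (j + 1)) := by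
        calc 4 * (a * b) = (2 * a) * (2 * b) := by ring
        _ = (2 ^ p + 2 ^ (i + 1)) * (2 ^ q + 2 ^ (j + 1)) := by rw [ha, hb]
        _ = _ := by rw [pow_add 2 p q, pow_add 2 p (j+1), pow_add 2 q (i+1),
              pow_add 2 (i+1) (j+1)]; ring
      have hip : p = i + 2 := by
        by_contra hc
        have hc' : i + 3 ≤ p := by omega
        have b1 : 2 ^ (p + (j + 1) + 1) ≤ 2 ^ (p + q) :=
          Nat.pow_le_pow_right (by norm_num) (by omega)
        have b2 : 2 ^ (q + (i + 1) + 2) ≤ 2 ^ (p + q) :=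
          Nat.pow_le_pow_right (by norm_num) (by omega)
        have b3 : 2 ^ ((i + 1) + (j + 1) + 3) ≤ 2 ^ (p + q) :=
          Nat.pow_le_pow_right (by norm_num) (by omega)
        have e1 : (2:ℕ) ^ (p + (j + 1) + 1) = 2 * 2 ^ (p + (j + 1)) := by ring
        have e2 : (2:ℕ) ^ (q + (i + 1) + 2) = 4 * 2 ^ (q + (i + 1)) := by ring
        have e3 : (2:ℕ) ^ ((i + 1) + (j + 1) + 3) = 8 * 2 ^ ((i + 1) + (j + 1)) := by ring
        omega
      have hjq : q = j + 2 := by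
        by_contra hc
        have hc' : j + 3 ≤ q := by omega
        have b1 : 2 ^ (p + (j + 1) + 2) ≤ 2 ^ (p + q) :=
          Nat.pow_le_pow_right (by norm_num) (by omega)
        have b2 : 2 ^ (q + (i + 1) + 1) ≤ 2 ^ (p + q) :=
          Nat.pow_le_pow_right (by norm_num) (by omega)
        have b3 : 2 ^ ((i + 1) + (j + 1) + 3) ≤ 2 ^ (p + q) :=
          Nat.pow_le_pow_right (by norm_num) (by omega)
        have e1 : (2:ℕ) ^ (p + (j + 1) + 2) = 4 * 2 ^ (p + (j + 1)) := by ring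
        have e2 : (2:ℕ) ^ (q + (i + 1) + 1) = 2 * 2 ^ (q + (i + 1)) := by ring
        have e3 : (2:ℕ) ^ ((i + 1) + (j + 1) + 3) = 8 * 2 ^ ((i + 1) + (j + 1)) := by ring
        omega
      subst hip; subst hjq
      right
      refine ⟨i + j, by omega, by omega, ?_⟩
      have e1 : (2:ℕ) ^ ((i + 2) + (j + 2)) = 16 * 2 ^ (i + j) := by ring
      have e2 : (2:ℕ) ^ ((i + 2) + (j + 1)) = 8 * 2 ^ (i + j) := by ring
      have e3 : (2:ℕ) ^ ((j + 2) + (i + 1)) = 8 * 2 ^ (i + j) := by ring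
      have e4 : (2:ℕ) ^ ((i + 1) + (j + 1)) = 4 * 2 ^ (i + j) := by ring
      have e5 : (2:ℕ) ^ ((i + j) + 1) = 2 * 2 ^ (i + j) := by ring
      omega

lemma cr_pow (p : ℕ) (hp : 1 ≤ p) : CanRepr 2 (2 ^ p) p := by
  induction p with
  | zero => omega
  | succ n ih =>
    by_cases hn : n = 0
    · subst hn; exact cr_congr .base (by norm_num) rfl
    · exact cr_congr (.mul .base (ih (by omega))) (by rw [pow_succ]; ring) (by omega)

lemma cr_mul_pow {a p : ℕ} (e : ℕ) (h : CanRepr 2 a p) : CanRepr 2 (2 ^ e * a) (e + p) := by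
  induction e with
  | zero => simpa using h
  | succ n ih => exact cr_congr (.mul .base ih) (by rw [pow_succ]; ring) (by omega)

lemma upA (e d₁ d₂ : ℕ) (h₁ : 1 ≤ d₁) (h₂ : 1 ≤ d₂) :
    CanRepr 2 (2 ^ (e + 1 + d₂ + d₁) + 2 ^ (e + 1 + d₂) + 2 ^ (e + 1)) (e + 1 + d₂ + d₁ + 2) := by
  have hx : CanRepr 2 ((2 ^ (d₁ + 1) + 2) * 2 ^ d₂ + 2) ((((d₁ + 1) + 1) + d₂) + 1) :=
    .add (.mul (.add (cr_pow (d₁ + 1) (by omega)) .base) (cr_pow d₂ h₂)) .base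
  refine cr_congr (cr_mul_pow e hx) ?_ (by omega)
  rw [pow_add 2 (e+1+d₂) d₁, pow_add 2 (e+1) d₂, pow_add 2 e 1, pow_add 2 d₁ 1]
  ring

lemma upB (e b c : ℕ) (hb : 1 ≤ b) (hc : 1 ≤ c) :
    CanRepr 2 (2 ^ (e + 2 + b + 2 * c) + 2 ^ (e + 2 + b + c) + 2 ^ (e + 2 + c) + 2 ^ (e + 2))
      (e + 2 + b + 2 * c + 2) := by
  have hx : CanRepr 2 ((2 ^ (b + c + 1) + 2) * (2 ^ (c + 1) + 2))
      (((b + c + 1) + 1) + ((c + 1) + 1)) :=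
    .mul (.add (cr_pow _ (by omega)) .base) (.add (cr_pow _ (by omega)) .base)
  refine cr_congr (cr_mul_pow e hx) ?_ (by omega)
  rw [show e + 2 + b + 2 * c = e + (b + c + 1) + (c + 1) by ring,
    show e + 2 + b + c = e + (b + c + 1) + 1 by ring,
    show e + 2 + c = e + (c + 1) + 1 by ring, show e + 2 = e + 1 + 1 by ring,
    pow_add 2 (e + (b+c+1)) (c+1), pow_add 2 e (b+c+1), pow_add 2 (e + (b+c+1)) 1,
    pow_add 2 (e + (c+1)) 1, pow_add 2 e (c+1), pow_add 2 (e+1) 1, pow_add 2 e 1,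
    pow_add 2 (b+c) 1, pow_add 2 b c, pow_add 2 c 1]
  ring

lemma upC (e k : ℕ) (hk : 1 ≤ k) :
    CanRepr 2 (2 ^ (e + k + 5) + 2 ^ (e + k + 2) + 2 ^ (e + 3) + 2 ^ (e + 2)) (e + k + 5 + 2) := by
  have h6 : CanRepr 2 6 3 := cr_congr (.add .base (.mul .base .base)) (by norm_num) (by norm_num)
  have hz : CanRepr 2 ((6 * 2 ^ k + 2) * 6) ((((3 + k) + 1) + 3)) :=
    .mul (.add (.mul h6 (cr_pow k hk)) .base) h6
  refine cr_congr (cr_mul_pow e hz) ?_ (by omega)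
  rw [show e + k + 5 = (e + k) + 5 by ring, show e + k + 2 = (e + k) + 2 by ring,
    pow_add 2 (e+k) 5, pow_add 2 (e+k) 2, pow_add 2 e k, pow_add 2 e 3, pow_add 2 e 2]
  ring

lemma up1080 : CanRepr 2 1080 12 := by
  have h4 : CanRepr 2 (2 * 2) (1 + 1) := .mul .base .base
  have h10 : CanRepr 2 (2 + 2 * (2 * 2)) (1 + (1 + (1 + 1))) := .add .base (.mul .base h4)
  have h6 : CanRepr 2 (2 + 2 * 2) (1 + (1 + 1)) := .add .base h4
  have h16 : CanRepr 2 (2 ^ 4) 4 := cr_pow 4 (by norm_num)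
  have h18 : CanRepr 2 (2 + 2 ^ 4) (1 + 4) := .add .base h16
  exact cr_congr (.mul h10 (.mul h6 h18)) (by norm_num) (by norm_num)

lemma upD (e : ℕ) :
    CanRepr 2 (2 ^ (e + 10) + 2 ^ (e + 5) + 2 ^ (e + 4) + 2 ^ (e + 3)) (e + 10 + 2) := by
  refine cr_congr (cr_mul_pow e up1080) ?_ (by omega)
  rw [pow_add 2 e 10, pow_add 2 e 5, pow_add 2 e 4, pow_add 2 e 3]
  ring

lemma odd_ne_pow {c x j : ℕ} (hx : 1 ≤ x) : 2 ^ c * (2 * x + 1) ≠ 2 ^ j := by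
  intro h
  have hdvd : (2 * x + 1) ∣ 2 ^ j := ⟨2 ^ c, by rw [← h]; ring⟩
  obtain ⟨i, hij, hi⟩ := (Nat.dvd_prime_pow Nat.prime_two).mp hdvd
  cases i with
  | zero => simp at hi; omega
  | succ i =>
    have : (2:ℕ) ^ (i + 1) = 2 * 2 ^ i := by ring
    omega

lemma cr_lower {m r k : ℕ} (hr : ∃ c x, 1 ≤ x ∧ r = 2 ^ c * (2 * x + 1))
    (h : CanRepr 2 (2 ^ m + r) k) : m + 2 ≤ k := by
  obtain ⟨c, x, hx, rfl⟩ := hr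
  have hr1 : 1 ≤ 2 ^ c * (2 * x + 1) := Nat.one_le_iff_ne_zero.mpr (by positivity)
  obtain ⟨-, hk1, hub, -⟩ := cr_facts h
  by_contra hc
  push_neg at hc
  have hkm : k = m + 1 := by
    by_contra hc2
    have hk : k ≤ m := by omega
    have : 2 ^ k ≤ 2 ^ m := Nat.pow_le_pow_right (by norm_num) hk
    omega
  subst hkm
  have em : (2:ℕ) ^ (m + 1) = 2 * 2 ^ m := by ring
  have hlt : 2 ^ (m + 1) < 2 * (2 ^ m + 2 ^ c * (2 * x + 1)) := by omega
  rcases cr_char h hlt with he | ⟨j, hj1, hj2, he⟩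
  · exact odd_ne_pow hx (by omega : 2 ^ c * (2 * x + 1) = 2 ^ m)
  · have ej : (2:ℕ) ^ (j + 1) = 2 * 2 ^ j := by ring
    exact odd_ne_pow hx (by omega : 2 ^ c * (2 * x + 1) = 2 ^ j)

theorem stmt_8 (m n : ℕ) (hm : 3 ≤ m) (hn : 0 < n) (heven : 2 ∣ n)
    (hlb : 2 ^ m < n) (hub : n ≤ 2 ^ (m + 1)) (hform : GoodForm m n) :
    complexity 2 n = m + 2 := by
  have hkey : CanRepr 2 n (m + 2) ∧ ∃ c x, 1 ≤ x ∧ n = 2 ^ m + 2 ^ c * (2 * x + 1) := by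
    rcases hform with ⟨m₂, m₃, h1, h2, h3, rfl⟩ | ⟨m₂, m₃, m₄, h1, h2, h3, h4, h5, rfl⟩ |
      ⟨m₂, h1, h2, h3⟩ | ⟨h1, h2⟩
    · -- case (a)
      obtain ⟨e, rfl⟩ : ∃ e, m₃ = e + 1 := ⟨m₃ - 1, by omega⟩
      obtain ⟨d₂, hd₂, rfl⟩ : ∃ d, 1 ≤ d ∧ m₂ = e + 1 + d := ⟨m₂ - (e + 1), by omega, by omega⟩
      obtain ⟨d₁, hd₁, rfl⟩ : ∃ d, 1 ≤ d ∧ m = e + 1 + d₂ + d :=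
        ⟨m - (e + 1 + d₂), by omega, by omega⟩
      refine ⟨upA e d₁ d₂ hd₁ hd₂, e + 1, 2 ^ (d₂ - 1), Nat.one_le_two_pow, ?_⟩
      obtain ⟨d', rfl⟩ : ∃ d', d₂ = d' + 1 := ⟨d₂ - 1, by omega⟩
      rw [show d' + 1 - 1 = d' by omega, pow_add 2 (e+1) (d'+1), pow_add 2 d' 1,
        pow_add 2 e 1]
      ring
    · -- case (b)
      obtain ⟨e, rfl⟩ : ∃ e, m₄ = e + 2 := ⟨m₄ - 2, by omega⟩
      obtain ⟨c, hc, rfl⟩ : ∃ c, 1 ≤ c ∧ m₃ = e + 2 + c := ⟨m₃ - (e + 2), by omega, by omega⟩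
      obtain ⟨b, hb, rfl⟩ : ∃ b, 1 ≤ b ∧ m₂ = e + 2 + c + b :=
        ⟨m₂ - (e + 2 + c), by omega, by omega⟩
      obtain rfl : m = e + 2 + b + 2 * c := by omega
      refine ⟨?_, e + 2, 2 ^ (c - 1) * (2 ^ b + 1), ?_, ?_⟩
      · have := upB e b c hb hc
        exact cr_congr this (by rw [show e + 2 + b + c = e + 2 + c + b by ring]) rfl
      · exact Nat.one_le_iff_ne_zero.mpr (by positivity)
      · obtain ⟨c', rfl⟩ : ∃ c', c = c' + 1 := ⟨c - 1, by omega⟩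
        rw [show c' + 1 - 1 = c' by omega,
          pow_add 2 (e + 2 + (c' + 1)) b, pow_add 2 (e+2) (c'+1), pow_add 2 c' 1,
          pow_add 2 e 2]
        ring
    · -- case (c)
      obtain ⟨e, rfl⟩ : ∃ e, m₂ = e + 3 := ⟨m₂ - 3, by omega⟩
      obtain ⟨k, hk, rfl⟩ : ∃ k, 1 ≤ k ∧ m = e + k + 5 := ⟨m - (e + 5), by omega, by omega⟩
      rw [show e + k + 5 - 3 = e + k + 2 by omega, show e + 3 - 1 = e + 2 by omega] at h3
      subst h3
      refine ⟨upC e k hk, e + 2, 2 ^ (k - 1) + 1, Nat.one_le_iff_ne_zero.mpr (by positivity), ?_⟩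
      obtain ⟨k', rfl⟩ : ∃ k', k = k' + 1 := ⟨k - 1, by omega⟩
      rw [show k' + 1 - 1 = k' by omega, show e + (k' + 1) + 2 = (e + 2) + (k' + 1) by ring,
        pow_add 2 (e+2) (k'+1), pow_add 2 k' 1, pow_add 2 e 3, pow_add 2 e 2]
      ring
    · -- case (d)
      obtain ⟨e, rfl⟩ : ∃ e, m = e + 10 := ⟨m - 10, by omega⟩
      rw [show e + 10 - 5 = e + 5 by omega, show e + 10 - 6 = e + 4 by omega,
        show e + 10 - 7 = e + 3 by omega] at h2
      subst h2
      refine ⟨upD e, e + 3, 3, by norm_num, ?_⟩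
      rw [pow_add 2 e 10, pow_add 2 e 5, pow_add 2 e 4, pow_add 2 e 3]
      ring
  obtain ⟨hup, c, x, hx, he⟩ := hkey
  have hlow : ∀ k', CanRepr 2 n k' → m + 2 ≤ k' := fun k' hk' =>
    cr_lower ⟨c, x, hx, rfl⟩ (he ▸ hk')
  refine le_antisymm (Nat.sInf_le hup) (hlow _ (Nat.sInf_mem ⟨_, hup⟩))
end

section
/- Let m ≥ 3 and let n be a positive even integer with 2^m < n ≤ 2^{m+1}. Then ‖n‖₂ = m + 2 if and only if n is of one of the following forms: (a) n = 2^{m₁} + 2^{m₂} + 2^{m₃} with m = m₁ > m₂ > m₃ ≥ 1; (b) n = 2^{m₁} + 2^{m₂} + 2^{m₃} + 2^{m₄} with m = m₁ > m₂ > m₃ > m₄ ≥ 2 and m₁ + m₄ = m₂ + m₃; (c) n = 2^{m₁} + 2^{m₁−3} + 2^{m₂} + 2^{m₂−1} with m = m₁ ≥ m₂ + 3 ≥ 6; (d) n = 2^m + 2^{m−5} + 2^{m−6} + 2^{m−7} with m ≥ 10. -/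
namespace Aux


theorem cr_cast {n k n' k' : ℕ} (h : CanRepr 2 n k) (hn : n = n') (hk : k = k') :
    CanRepr 2 n' k' := hn ▸ hk ▸ h

theorem cr_k_pos {n k : ℕ} (h : CanRepr 2 n k) : 1 ≤ k := by
  induction h with
  | base => exact le_refl 1
  | add _ _ ih1 ih2 => omega
  | mul _ _ ih1 ih2 => omega

theorem two_le_two_pow {k : ℕ} (hk : 1 ≤ k) : 2 ≤ 2 ^ k := by
  calc (2:ℕ) = 2^1 := (pow_one 2).symm
  _ ≤ 2^k := Nat.pow_le_pow_right (by norm_num) hk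

theorem cr_le {n k : ℕ} (h : CanRepr 2 n k) : n ≤ 2 ^ k := by
  induction h with
  | base => norm_num
  | add h1 h2 ih1 ih2 =>
    have e1 := two_le_two_pow (cr_k_pos h1)
    have e2 := two_le_two_pow (cr_k_pos h2)
    rw [pow_add]; nlinarith
  | mul h1 h2 ih1 ih2 =>
    rw [pow_add]; exact Nat.mul_le_mul ih1 ih2

theorem cr_even {n k : ℕ} (h : CanRepr 2 n k) : 2 ∣ n := by
  induction h with
  | base => exact dvd_refl 2
  | add _ _ ih1 ih2 => omega
  | mul _ _ ih1 ih2 => exact Dvd.dvd.mul_right ih1 _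

theorem cr_two_le {n k : ℕ} (h : CanRepr 2 n k) : 2 ≤ n := by
  induction h with
  | base => exact le_refl 2
  | add _ _ ih1 ih2 => omega
  | mul _ _ ih1 ih2 => nlinarith

theorem cr_one_aux {n k : ℕ} (h : CanRepr 2 n k) (hk : k = 1) : n = 2 := by
  cases h with
  | base => rfl
  | add h1 h2 => have := cr_k_pos h1; have := cr_k_pos h2; omega
  | mul h1 h2 => have := cr_k_pos h1; have := cr_k_pos h2; omega

theorem cr_one {n : ℕ} (h : CanRepr 2 n 1) : n = 2 := cr_one_aux h rfl

theorem cr_two_aux {n k : ℕ} (h : CanRepr 2 n k) (hk : k = 2) : n = 4 := by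
  cases h with
  | base => omega
  | add h1 h2 =>
    have := cr_k_pos h1; have := cr_k_pos h2
    rw [cr_one_aux h1 (by omega), cr_one_aux h2 (by omega)]
  | mul h1 h2 =>
    have := cr_k_pos h1; have := cr_k_pos h2
    rw [cr_one_aux h1 (by omega), cr_one_aux h2 (by omega)]

theorem cr_two {n : ℕ} (h : CanRepr 2 n 2) : n = 4 := cr_two_aux h rfl

theorem cr_pow {k : ℕ} (hk : 1 ≤ k) : CanRepr 2 (2 ^ k) k := by
  induction k with
  | zero => omega
  | succ t ih =>
    rcases Nat.eq_or_lt_of_le hk with h | h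
    · exact cr_cast CanRepr.base (by rw [← h, pow_one]) (by omega)
    · exact cr_cast (CanRepr.mul CanRepr.base (ih (by omega))) (by ring) (by omega)

theorem cr_shift {n k : ℕ} (t : ℕ) (h : CanRepr 2 n k) : CanRepr 2 (2 ^ t * n) (t + k) := by
  induction t with
  | zero => exact cr_cast h (by ring) (by omega)
  | succ s ih =>
    exact cr_cast (CanRepr.mul CanRepr.base ih) (by ring) (by omega)

theorem cr_twoBit {a b : ℕ} (hab : b ≤ a) (hb : 1 ≤ b) : CanRepr 2 (2 ^ a + 2 ^ b) (a + 1) := by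
  have key : CanRepr 2 (2 ^ (a - b + 1) + 2) (a - b + 1 + 1) :=
    CanRepr.add (cr_pow (by omega)) CanRepr.base
  refine cr_cast (cr_shift (b - 1) key) ?_ (by omega)
  rw [Nat.mul_add, ← pow_succ, ← pow_add]
  congr 2 <;> omega

theorem cr_threeBit {a b c : ℕ} (hab : b ≤ a) (hbc : c ≤ b) (hc : 1 ≤ c) :
    CanRepr 2 (2 ^ a + 2 ^ b + 2 ^ c) (a + 2) := by
  have key : CanRepr 2 (2 ^ (a - c + 1) + 2 ^ (b - c + 1) + 2) (a - c + 1 + 1 + 1) :=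
    CanRepr.add (cr_twoBit (by omega) (by omega)) CanRepr.base
  refine cr_cast (cr_shift (c - 1) key) ?_ (by omega)
  rw [Nat.mul_add, Nat.mul_add, ← pow_succ, ← pow_add, ← pow_add]
  congr 3 <;> omega


def OneForm (m n : ℕ) : Prop :=
  n = 2 ^ (m + 1) ∨ ∃ j, 1 ≤ j ∧ j ≤ m ∧ n = 2 ^ m + 2 ^ j

theorem oneForm_norm {m a : ℕ} (h : OneForm m a) :
    a = 2 ^ (m + 1) ∨ ∃ j, 1 ≤ j ∧ j + 1 ≤ m ∧ a = 2 ^ m + 2 ^ j := by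
  rcases h with h | ⟨j, hj1, hjm, rfl⟩
  · exact Or.inl h
  · rcases Nat.eq_or_lt_of_le hjm with rfl | h
    · exact Or.inl (by ring)
    · exact Or.inr ⟨j, hj1, by omega, rfl⟩

theorem cr_oneForm {m n : ℕ} (hm : 1 ≤ m) (h : OneForm m n) : CanRepr 2 n (m + 1) := by
  rcases h with rfl | ⟨j, hj1, hjm, rfl⟩
  · exact cr_pow (by omega)
  · exact cr_twoBit hjm hj1

theorem cr_six : CanRepr 2 6 3 :=
  cr_cast (CanRepr.add CanRepr.base (CanRepr.mul CanRepr.base CanRepr.base)) (by norm_num)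
    (by norm_num)

theorem cr_goodForm {m n : ℕ} (h : GoodForm m n) : CanRepr 2 n (m + 2) := by
  rcases h with ⟨m2, m3, h1, h2, h3, rfl⟩ | ⟨m2, m3, m4, h1, h2, h3, h4, h5, rfl⟩ |
    ⟨m2, h1, h2, rfl⟩ | ⟨h1, rfl⟩
  · exact cr_threeBit (by omega) (by omega) h3
  · -- n = (2^(m2-1)+2^(m4-1)) * (2^(m3-m4+1)+2)
    obtain ⟨d, rfl⟩ : ∃ d, m3 = m4 + (d + 1) := ⟨m3 - m4 - 1, by omega⟩
    obtain ⟨b2, rfl⟩ : ∃ b, m2 = b + 1 := ⟨m2 - 1, by omega⟩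
    obtain ⟨b4, rfl⟩ : ∃ b, m4 = b + 1 := ⟨m4 - 1, by omega⟩
    obtain rfl : m = b2 + 1 + (d + 1) := by omega
    have c1 : CanRepr 2 (2 ^ b2 + 2 ^ b4) (b2 + 1) :=
      cr_twoBit (by omega) (by omega)
    have c2 : CanRepr 2 (2 ^ (d + 2) + 2 ^ 1) (d + 2 + 1) := cr_twoBit (by omega) (by omega)
    refine cr_cast (CanRepr.mul c1 c2) ?_ (by omega)
    ring
  · obtain ⟨s, rfl⟩ : ∃ s, m2 = s + 3 := ⟨m2 - 3, by omega⟩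
    obtain ⟨t, rfl⟩ : ∃ t, m = s + 6 + t := ⟨m - s - 6, by omega⟩
    have c1 : CanRepr 2 (2 ^ (s + t + 3) + 2 ^ (s + t + 2) + 2 ^ (s + 1)) (s + t + 3 + 2) :=
      cr_threeBit (by omega) (by omega) (by omega)
    refine cr_cast (CanRepr.mul cr_six c1) ?_ (by omega)
    show 6 * _ = _
    have e1 : s + 6 + t - 3 = s + t + 3 := by omega
    have e2 : s + 3 - 1 = s + 2 := by omega
    rw [e1, e2]; ring
  · obtain ⟨t, rfl⟩ : ∃ t, m = t + 10 := ⟨m - 10, by omega⟩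
    have c10 : CanRepr 2 10 4 :=
      cr_cast (CanRepr.add CanRepr.base (cr_pow (k := 3) (by omega))) (by norm_num) (by omega)
    have c18 : CanRepr 2 18 5 :=
      cr_cast (CanRepr.add CanRepr.base (cr_pow (k := 4) (by omega))) (by norm_num) (by omega)
    have c1080 : CanRepr 2 1080 12 :=
      cr_cast (CanRepr.mul cr_six (CanRepr.mul c10 c18)) (by norm_num) (by omega)
    refine cr_cast (cr_shift t c1080) ?_ (by omega)
    have e1 : t + 10 - 5 = t + 5 := by omega
    have e2 : t + 10 - 6 = t + 4 := by omega
    have e3 : t + 10 - 7 = t + 3 := by omega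
    rw [e1, e2, e3]; ring

theorem oneForm_double {m n : ℕ} (h : OneForm m n) : OneForm (m + 1) (2 * n) := by
  rcases h with rfl | ⟨j, hj1, hjm, rfl⟩
  · exact Or.inl (by ring)
  · exact Or.inr ⟨j + 1, by omega, by omega, by ring⟩

theorem goodForm_double {m n : ℕ} (h : GoodForm m n) : GoodForm (m + 1) (2 * n) := by
  rcases h with ⟨m2, m3, h1, h2, h3, rfl⟩ | ⟨m2, m3, m4, h1, h2, h3, h4, h5, rfl⟩ |
    ⟨m2, h1, h2, rfl⟩ | ⟨h1, rfl⟩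
  · exact Or.inl ⟨m2 + 1, m3 + 1, by omega, by omega, by omega, by ring⟩
  · exact Or.inr (Or.inl ⟨m2 + 1, m3 + 1, m4 + 1, by omega, by omega, by omega, by omega,
      by omega, by ring⟩)
  · refine Or.inr (Or.inr (Or.inl ⟨m2 + 1, by omega, by omega, ?_⟩))
    obtain ⟨s, rfl⟩ : ∃ s, m2 = s + 3 := ⟨m2 - 3, by omega⟩
    obtain ⟨t, rfl⟩ : ∃ t, m = s + 6 + t := ⟨m - s - 6, by omega⟩
    have e1 : s + 6 + t - 3 = s + t + 3 := by omega
    have e2 : s + 3 - 1 = s + 2 := by omega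
    have e3 : s + 6 + t + 1 - 3 = s + t + 4 := by omega
    have e4 : s + 3 + 1 - 1 = s + 3 := by omega
    rw [e1, e2, e3, e4]; ring
  · refine Or.inr (Or.inr (Or.inr ⟨by omega, ?_⟩))
    obtain ⟨t, rfl⟩ : ∃ t, m = t + 10 := ⟨m - 10, by omega⟩
    have e1 : t + 10 - 5 = t + 5 := by omega
    have e2 : t + 10 - 6 = t + 4 := by omega
    have e3 : t + 10 - 7 = t + 3 := by omega
    have e4 : t + 10 + 1 - 5 = t + 6 := by omega
    have e5 : t + 10 + 1 - 6 = t + 5 := by omega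
    have e6 : t + 10 + 1 - 7 = t + 4 := by omega
    rw [e1, e2, e3, e4, e5, e6]; ring

theorem oneForm_shift {m n : ℕ} (s : ℕ) (h : OneForm m n) : OneForm (m + s) (2 ^ s * n) := by
  induction s with
  | zero => simpa using h
  | succ t ih =>
    have h2 := oneForm_double ih
    have e : 2 ^ (t + 1) * n = 2 * (2 ^ t * n) := by ring
    rw [e, show m + (t + 1) = m + t + 1 from rfl]
    exact h2

theorem goodForm_shift {m n : ℕ} (s : ℕ) (h : GoodForm m n) : GoodForm (m + s) (2 ^ s * n) := by
  induction s with
  | zero => simpa using h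
  | succ t ih =>
    have h2 := goodForm_double ih
    have e : 2 ^ (t + 1) * n = 2 * (2 ^ t * n) := by ring
    rw [e, show m + (t + 1) = m + t + 1 from rfl]
    exact h2

theorem pow_le_pow_e {x y : ℕ} (h : x ≤ y) : (2:ℕ)^x ≤ 2^y := Nat.pow_le_pow_right (by norm_num) h

theorem pow_lt_pow_e {x y : ℕ} (h : x < y) : (2:ℕ)^x < 2^y :=
  Nat.pow_lt_pow_right (by norm_num) h

theorem e_of_pow_lt {x y : ℕ} (h : (2:ℕ)^x < 2^y) : x < y :=
  (Nat.pow_lt_pow_iff_right (by norm_num)).mp h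

theorem e_of_pow_le {x y : ℕ} (h : (2:ℕ)^x ≤ 2^y) : x ≤ y :=
  (Nat.pow_le_pow_iff_right (by norm_num)).mp h

theorem two_pow_succ (e : ℕ) : (2:ℕ)^(e+1) = 2^e + 2^e := by ring

theorem bound2 {x y e : ℕ} (hx : x + 1 ≤ e) (hy : y + 2 ≤ e) : (2:ℕ)^x + 2^y < 2^e := by
  obtain ⟨f, rfl⟩ : ∃ f, e = f + 2 := ⟨e - 2, by omega⟩
  have h1 : (2:ℕ)^x ≤ 2^(f+1) := pow_le_pow_e (by omega)
  have h2 : (2:ℕ)^y ≤ 2^f := pow_le_pow_e (by omega)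
  have hp : (1:ℕ) ≤ 2^f := Nat.one_le_two_pow
  have : (2:ℕ)^(f+2) = 4 * 2^f := by ring
  have : (2:ℕ)^(f+1) = 2 * 2^f := by ring
  omega

theorem bound3 {x y z e : ℕ} (hx : x + 1 ≤ e) (hy : y + 2 ≤ e) (hz : z + 3 ≤ e) :
    (2:ℕ)^x + 2^y + 2^z < 2^e := by
  obtain ⟨f, rfl⟩ : ∃ f, e = f + 3 := ⟨e - 3, by omega⟩
  have h1 : (2:ℕ)^x ≤ 2^(f+2) := pow_le_pow_e (by omega)
  have h2 : (2:ℕ)^y ≤ 2^(f+1) := pow_le_pow_e (by omega)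
  have h3 : (2:ℕ)^z ≤ 2^f := pow_le_pow_e (by omega)
  have hp : (1:ℕ) ≤ 2^f := Nat.one_le_two_pow
  have e1 : (2:ℕ)^(f+3) = 8 * 2^f := by ring
  have e2 : (2:ℕ)^(f+2) = 4 * 2^f := by ring
  have e3 : (2:ℕ)^(f+1) = 2 * 2^f := by ring
  omega

theorem bound4 {x y z w e : ℕ} (hx : x + 1 ≤ e) (hy : y + 2 ≤ e) (hz : z + 3 ≤ e)
    (hw : w + 4 ≤ e) : (2:ℕ)^x + 2^y + 2^z + 2^w < 2^e := by
  obtain ⟨f, rfl⟩ : ∃ f, e = f + 4 := ⟨e - 4, by omega⟩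
  have h1 : (2:ℕ)^x ≤ 2^(f+3) := pow_le_pow_e (by omega)
  have h2 : (2:ℕ)^y ≤ 2^(f+2) := pow_le_pow_e (by omega)
  have h3 : (2:ℕ)^z ≤ 2^(f+1) := pow_le_pow_e (by omega)
  have h4 : (2:ℕ)^w ≤ 2^f := pow_le_pow_e (by omega)
  have hp : (1:ℕ) ≤ 2^f := Nat.one_le_two_pow
  have e1 : (2:ℕ)^(f+4) = 16 * 2^f := by ring
  have e2 : (2:ℕ)^(f+3) = 8 * 2^f := by ring
  have e3 : (2:ℕ)^(f+2) = 4 * 2^f := by ring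
  have e4 : (2:ℕ)^(f+1) = 2 * 2^f := by ring
  omega

/-- helper: the `a + 2` case of the addition analysis for `lemA`. -/
theorem lemA_add {a p m : ℕ} (h1 : CanRepr 2 a p) (hp : p ≤ m) (hlb : 2 ^ m < a + 2) :
    OneForm m (a + 2) := by
  have ha := cr_le h1
  have hae := cr_even h1
  have hp1 := cr_k_pos h1
  have hm1 : 1 ≤ m := by omega
  have hle : a ≤ 2 ^ m := le_trans ha (pow_le_pow_e hp)
  have hev : 2 ∣ 2 ^ m := dvd_pow_self 2 (by omega)
  have : a = 2 ^ m := by omega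
  subst this
  exact Or.inr ⟨1, le_refl 1, hm1, by norm_num⟩

theorem lemA {n k : ℕ} (h : CanRepr 2 n k) : ∀ m, k ≤ m + 1 → 2 ^ m < n → OneForm m n := by
  induction h with
  | base =>
    intro m hk hlb
    have : m = 0 := by
      by_contra hc
      have := two_le_two_pow (k := m) (by omega)
      omega
    subst this
    exact Or.inl (by norm_num)
  | @add a b p q h1 h2 ih1 ih2 =>
    intro m hk hlb
    have hp1 := cr_k_pos h1
    have hq1 := cr_k_pos h2
    have ha := cr_le h1
    have hb := cr_le h2
    by_cases hq : q = 1
    · subst hq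
      obtain rfl := cr_one h2
      exact lemA_add h1 (by omega) hlb
    · by_cases hp : p = 1
      · subst hp
        obtain rfl := cr_one h1
        rw [Nat.add_comm]
        exact lemA_add h2 (by omega) (by omega)
      · exfalso
        have hm : 3 ≤ m := by omega
        obtain ⟨g, rfl⟩ : ∃ g, m = g + 1 := ⟨m - 1, by omega⟩
        have h1' : a ≤ 2 ^ g := le_trans ha (pow_le_pow_e (by omega))
        have h2' : b ≤ 2 ^ g := le_trans hb (pow_le_pow_e (by omega))
        have : (2:ℕ) ^ (g + 1) = 2 ^ g + 2 ^ g := by ring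
        omega
  | @mul a b p q h1 h2 ih1 ih2 =>
    intro m hk hlb
    have hp1 := cr_k_pos h1
    have hq1 := cr_k_pos h2
    have ha := cr_le h1
    have hb := cr_le h2
    obtain ⟨p', rfl⟩ : ∃ p', p = p' + 1 := ⟨p - 1, by omega⟩
    obtain ⟨q', rfl⟩ : ∃ q', q = q' + 1 := ⟨q - 1, by omega⟩
    -- both factors are in the top half of their ranges
    have hha : 2 ^ p' < a := by
      by_contra hc
      have : a * b ≤ 2 ^ p' * 2 ^ (q' + 1) := Nat.mul_le_mul (by omega) hb
      rw [← pow_add] at this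
      have : a * b ≤ 2 ^ m := le_trans this (pow_le_pow_e (by omega))
      omega
    have hhb : 2 ^ q' < b := by
      by_contra hc
      have : a * b ≤ 2 ^ (p' + 1) * 2 ^ q' := Nat.mul_le_mul ha (by omega)
      rw [← pow_add] at this
      have : a * b ≤ 2 ^ m := le_trans this (pow_le_pow_e (by omega))
      omega
    have hfa := oneForm_norm (ih1 p' (le_refl _) hha)
    have hfb := oneForm_norm (ih2 q' (le_refl _) hhb)
    rcases hfa with rfl | ⟨i, hi1, hip, rfl⟩
    · rcases hfb with rfl | ⟨j, hj1, hjq, rfl⟩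
      · -- 2^(p'+1) * 2^(q'+1)
        rw [← pow_add] at hlb ⊢
        have := e_of_pow_lt hlb
        exact Or.inl (by congr 1; omega)
      · -- 2^(p'+1) * (2^q' + 2^j)
        have hexp : 2 ^ (p' + 1) * (2 ^ q' + 2 ^ j) = 2 ^ (p' + 1 + q') + 2 ^ (p' + 1 + j) := by
          rw [Nat.mul_add, ← pow_add, ← pow_add]
        rw [hexp] at hlb ⊢
        have heq : p' + 1 + q' = m := by
          by_contra hc
          have hb2 : (2:ℕ) ^ (p' + 1 + q') + 2 ^ (p' + 1 + j) < 2 ^ m :=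
            bound2 (by omega) (by omega)
          omega
        rw [heq]
        exact Or.inr ⟨p' + 1 + j, by omega, by omega, rfl⟩
    · rcases hfb with rfl | ⟨j, hj1, hjq, rfl⟩
      · have hexp : (2 ^ p' + 2 ^ i) * 2 ^ (q' + 1) = 2 ^ (q' + 1 + p') + 2 ^ (q' + 1 + i) := by
          rw [pow_add, pow_add, pow_add]
          ring
        rw [hexp] at hlb ⊢
        have heq : q' + 1 + p' = m := by
          by_contra hc
          have hb2 : (2:ℕ) ^ (q' + 1 + p') + 2 ^ (q' + 1 + i) < 2 ^ m :=
            bound2 (by omega) (by omega)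
          omega
        rw [heq]
        exact Or.inr ⟨q' + 1 + i, by omega, by omega, rfl⟩
      · -- (2^p' + 2^i)(2^q' + 2^j)
        have hexp : (2 ^ p' + 2 ^ i) * (2 ^ q' + 2 ^ j)
            = 2 ^ (p' + q') + 2 ^ (p' + j) + 2 ^ (q' + i) + 2 ^ (i + j) := by
          rw [pow_add, pow_add, pow_add, pow_add]
          ring
        rw [hexp] at hlb ⊢
        have hm : p' + q' = m - 1 ∧ m ≥ 1 := by
          constructor
          · by_contra hc
            have hb4 : (2:ℕ)^(p'+q') + 2^(q'+i) + 2^(p'+j) + 2^(i+j) < 2 ^ m :=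
              bound4 (by omega) (by omega) (by omega) (by omega)
            omega
          · omega
        obtain ⟨hm1, hm2⟩ := hm
        have hj' : j + 1 = q' := by
          by_contra hc
          have hb4 : (2:ℕ)^(p'+q') + 2^(q'+i) + 2^(p'+j) + 2^(i+j) < 2 ^ m :=
            bound4 (by omega) (by omega) (by omega) (by omega)
          omega
        have hi' : i + 1 = p' := by
          by_contra hc
          have hb4 : (2:ℕ)^(p'+q') + 2^(p'+j) + 2^(q'+i) + 2^(i+j) < 2 ^ m :=
            bound4 (by omega) (by omega) (by omega) (by omega)
          omega
        refine Or.inr ⟨i + j, by omega, by omega, ?_⟩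
        obtain ⟨g, rfl⟩ : ∃ g, m = g + 3 := ⟨m - 3, by omega⟩
        have e1 : p' + q' = g + 2 := by omega
        have e2 : p' + j = g + 1 := by omega
        have e3 : q' + i = g + 1 := by omega
        rw [e1, e2, e3]
        ring

theorem pf1 {x f : ℕ} (h : x ≤ f) : (2:ℕ)^x ≤ 1 * 2^f := by
  rw [one_mul]; exact pow_le_pow_e h
theorem pf2 {x f : ℕ} (h : x ≤ f + 1) : (2:ℕ)^x ≤ 2 * 2^f :=
  le_trans (pow_le_pow_e h) (le_of_eq (by ring))
theorem pf4 {x f : ℕ} (h : x ≤ f + 2) : (2:ℕ)^x ≤ 4 * 2^f :=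
  le_trans (pow_le_pow_e h) (le_of_eq (by ring))
theorem pf8 {x f : ℕ} (h : x ≤ f + 3) : (2:ℕ)^x ≤ 8 * 2^f :=
  le_trans (pow_le_pow_e h) (le_of_eq (by ring))
theorem pf16 {x f : ℕ} (h : x ≤ f + 4) : (2:ℕ)^x ≤ 16 * 2^f :=
  le_trans (pow_le_pow_e h) (le_of_eq (by ring))
theorem pf32 {x f : ℕ} (h : x ≤ f + 5) : (2:ℕ)^x ≤ 32 * 2^f :=
  le_trans (pow_le_pow_e h) (le_of_eq (by ring))
theorem pf64 {x f : ℕ} (h : x ≤ f + 6) : (2:ℕ)^x ≤ 64 * 2^f :=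
  le_trans (pow_le_pow_e h) (le_of_eq (by ring))
theorem pf128 {x f : ℕ} (h : x ≤ f + 7) : (2:ℕ)^x ≤ 128 * 2^f :=
  le_trans (pow_le_pow_e h) (le_of_eq (by ring))
theorem pf256 {x f : ℕ} (h : x ≤ f + 8) : (2:ℕ)^x ≤ 256 * 2^f :=
  le_trans (pow_le_pow_e h) (le_of_eq (by ring))
theorem pf512 {x f : ℕ} (h : x ≤ f + 9) : (2:ℕ)^x ≤ 512 * 2^f :=
  le_trans (pow_le_pow_e h) (le_of_eq (by ring))

theorem pow_split {m c : ℕ} (h : c ≤ m) : (2:ℕ)^m = 2^c * 2^(m-c) := by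
  rw [← pow_add]; congr 1; omega

theorem two_ne_pow {x y e : ℕ} (hxy : y < x) : (2:ℕ)^x + 2^y ≠ 2^e := by
  rcases le_or_gt e x with h | h
  · have h1 : (2:ℕ)^e ≤ 2^x := pow_le_pow_e h
    have h2 : (0:ℕ) < 2^y := Nat.pow_pos (by norm_num)
    omega
  · have h1 : (2:ℕ)^x + 2^y < 2^e := bound2 (by omega) (by omega)
    omega

theorem three_ne_pow {x y z e : ℕ} (hxy : y < x) (hyz : z < y) :
    (2:ℕ)^x + 2^y + 2^z ≠ 2^e := by
  rcases le_or_gt e x with h | h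
  · have h1 : (2:ℕ)^e ≤ 2^x := pow_le_pow_e h
    have h2 : (0:ℕ) < 2^y := Nat.pow_pos (by norm_num)
    have h3 : (0:ℕ) < 2^z := Nat.pow_pos (by norm_num)
    omega
  · have h1 : (2:ℕ)^x + 2^y + 2^z < 2^e := bound3 (by omega) (by omega) (by omega)
    omega

theorem goodForm_not_oneForm {m n : ℕ} (hg : GoodForm m n) (ho : OneForm m n) : False := by
  have hone : ∃ e, n = 2 ^ m + 2 ^ e := by
    rcases ho with h | ⟨j, _, _, h⟩
    · exact ⟨m, by rw [h]; ring⟩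
    · exact ⟨j, h⟩
  obtain ⟨e, he⟩ := hone
  rcases hg with ⟨m2, m3, h1, h2, h3, h4⟩ | ⟨m2, m3, m4, h1, h2, h3, h4, h5, h6⟩ |
    ⟨m2, h1, h2, h3⟩ | ⟨h1, h2⟩
  · rw [h4] at he
    have heA : (2:ℕ)^m2 + 2^m3 = 2^e := by omega
    exact two_ne_pow h2 heA
  · rw [h6] at he
    have heA : (2:ℕ)^m2 + 2^m3 + 2^m4 = 2^e := by omega
    exact three_ne_pow h2 h3 heA
  · rw [h3] at he
    rcases Nat.eq_or_lt_of_le (show m2 ≤ m - 3 by omega) with hq | hq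
    · rw [← hq] at he
      have hcol : (2:ℕ)^m2 + 2^m2 + 2^(m2-1) = 2^(m2+1) + 2^(m2-1) := by ring
      have he2 : (2:ℕ)^(m2+1) + 2^(m2-1) = 2^e := by omega
      exact two_ne_pow (show m2-1 < m2+1 by omega) he2
    · have heA : (2:ℕ)^(m-3) + 2^m2 + 2^(m2-1) = 2^e := by omega
      exact three_ne_pow (show m2 < m - 3 from hq) (show m2 - 1 < m2 by omega) heA
  · rw [h2] at he
    have heA : (2:ℕ)^(m-5) + 2^(m-6) + 2^(m-7) = 2^e := by omega
    exact three_ne_pow (show m - 6 < m - 5 by omega) (show m - 7 < m - 6 by omega) heA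

theorem classify_b {m e2 e3 e4 n : ℕ} (hn : n = 2^m + 2^e2 + 2^e3 + 2^e4)
    (hub : n ≤ 2^(m+1)) (h32 : e3 ≤ e2) (h2m : e2 + 1 ≤ m) (h43 : e4 + 1 ≤ e3)
    (h4 : 2 ≤ e4) (hsum : e2 + e3 = m + e4) : GoodForm m n := by
  rcases Nat.eq_or_lt_of_le h32 with rfl | hlt
  · -- e3 = e2 : collision
    have hcol : n = 2^m + 2^(e3+1) + 2^e4 := by rw [hn]; ring
    rcases Nat.eq_or_lt_of_le h2m with hq | hq
    · -- e2 + 1 = m : n > 2^(m+1), contradiction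
      exfalso
      have h5 : (2:ℕ)^m + 2^m = 2^(m+1) := by ring
      have h6 : (0:ℕ) < 2^e4 := Nat.pow_pos (by norm_num)
      rw [hcol, hq] at hub
      omega
    · exact Or.inl ⟨e3 + 1, e4, by omega, by omega, by omega, hcol⟩
  · exact Or.inr (Or.inl ⟨e2, e3, e4, by omega, hlt, by omega, h4, hsum.symm, hn⟩)

theorem addAux2 {a m : ℕ} (h1 : CanRepr 2 a (m + 1)) (hlb : 2 ^ m < a + 2)
    (hub : a + 2 ≤ 2 ^ (m + 1)) : OneForm m (a + 2) ∨ GoodForm m (a + 2) := by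
  have ha2 := cr_two_le h1
  have hae := cr_even h1
  have hm1 : 1 ≤ m := by
    by_contra hc
    have : m = 0 := by omega
    subst this
    norm_num at hub
    omega
  have hpm : 2 ∣ (2:ℕ)^m := dvd_pow_self 2 (by omega)
  have hge : 2 ^ m ≤ a := by omega
  rcases Nat.eq_or_lt_of_le hge with hq | hq
  · exact Or.inl (Or.inr ⟨1, le_refl 1, hm1, by rw [← hq]; norm_num⟩)
  · have hFa := oneForm_norm (lemA h1 m (le_refl _) hq)
    have hne : a < 2 ^ (m+1) := by omega
    rcases hFa with rfl | ⟨j, hj1, hjm, rfl⟩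
    · omega
    · rcases Nat.eq_or_lt_of_le hj1 with hj | hj
      · refine Or.inl (Or.inr ⟨2, by omega, by omega, ?_⟩)
        rw [← hj]; norm_num
      · refine Or.inr (Or.inl ⟨j, 1, by omega, by omega, le_refl 1, by norm_num⟩)

theorem addAux4 {a m : ℕ} (h1 : CanRepr 2 a m) (hlb : 2 ^ m < a + 4)
    (hub : a + 4 ≤ 2 ^ (m + 1)) : OneForm m (a + 4) ∨ GoodForm m (a + 4) := by
  have ha2 := cr_two_le h1
  have hae := cr_even h1
  have hle : a ≤ 2 ^ m := cr_le h1
  have hk1 := cr_k_pos h1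
  have hm2 : 2 ≤ m := by
    by_contra hc
    interval_cases m <;> omega
  have hpm : 4 ∣ (2:ℕ)^m := by
    have : (2:ℕ)^m = 4 * 2^(m-2) := by rw [pow_split (show 2 ≤ m by omega)]; norm_num
    omega
  have hcase : a = 2 ^ m ∨ a = 2 ^ m - 2 := by omega
  rcases hcase with rfl | hq
  · exact Or.inl (Or.inr ⟨2, by omega, by omega, by norm_num⟩)
  · rcases Nat.eq_or_lt_of_le hm2 with hm | hm
    · -- m = 2 : a = 2 but CanRepr 2 a 2 means a = 4
      exfalso
      have := cr_two_aux h1 (by omega)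
      rw [← hm] at hq
      norm_num at hq
      omega
    · have hm3 : 3 ≤ m := hm
      have hdb : (2:ℕ)^m = 2 * 2^(m-1) := by
        rw [pow_split (show 1 ≤ m by omega)]; norm_num
      have hhl : 2 ^ (m-1) < a := by
        have : (2:ℕ) < 2^(m-1) := by
          calc (2:ℕ) = 2^1 := by norm_num
          _ < 2^(m-1) := pow_lt_pow_e (by omega)
        omega
      have hFa := oneForm_norm (lemA h1 (m-1) (by omega) hhl)
      rw [show m - 1 + 1 = m by omega] at hFa
      rcases hFa with hc | ⟨j, hj1, hjm, hc⟩
      · exfalso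
        have : (0:ℕ) < 2^m := Nat.pow_pos (by norm_num)
        omega
      · -- 2^m - 2 = 2^(m-1) + 2^j, so 2^(m-1) = 2^j + 2
        have hkey : (2:ℕ)^(m-1) = 2^j + 2 := by omega
        rcases Nat.eq_or_lt_of_le hj1 with hj | hj
        · -- j = 1 : 2^(m-1) = 4, m = 3, n = 10
          rw [← hj] at hkey
          norm_num at hkey
          have hm3' : m = 3 := by
            have h1' : m - 1 ≤ 2 := by
              by_contra hcc
              have := pow_lt_pow_e (x := 2) (y := m - 1) (by omega)
              norm_num at this
              omega
            omega
          subst hm3'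
          refine Or.inl (Or.inr ⟨1, le_refl 1, by omega, ?_⟩)
          norm_num at hq ⊢
          omega
        · exfalso
          have h4j : 4 ∣ (2:ℕ)^j := by
            have : (2:ℕ)^j = 4 * 2^(j-2) := by rw [pow_split (show 2 ≤ j by omega)]; norm_num
            omega
          have h4m : 4 ∣ (2:ℕ)^(m-1) := by
            have : (2:ℕ)^(m-1) = 4 * 2^(m-1-2) := by
              rw [pow_split (show 2 ≤ m - 1 by omega)]; norm_num
            omega
          omega

theorem mulAsym {a b pp r m : ℕ} (Fa : OneForm pp a) (Fb : OneForm r b ∨ GoodForm r b)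
    (hm : m = pp + r + 1) (hlb : 2 ^ m < a * b) (hub : a * b ≤ 2 ^ (m + 1)) :
    OneForm m (a * b) ∨ GoodForm m (a * b) := by
  rcases oneForm_norm Fa with rfl | ⟨i, hi1, hip, rfl⟩
  · -- a = 2^(pp+1): just shift b's form
    rcases Fb with Fb | Fb
    · left
      have h := oneForm_shift (pp + 1) Fb
      rw [show m = r + (pp + 1) by omega]
      exact h
    · right
      have h := goodForm_shift (pp + 1) Fb
      rw [show m = r + (pp + 1) by omega]
      exact h
  · obtain ⟨s, hs1, rfl⟩ : ∃ s, 1 ≤ s ∧ pp = i + s := ⟨pp - i, by omega, by omega⟩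
    rcases Fb with Fb | Fb
    · rcases oneForm_norm Fb with rfl | ⟨t, ht1, htr, rfl⟩
      · -- b = 2^(r+1)
        left
        refine Or.inr ⟨i + r + 1, by omega, by omega, ?_⟩
        rw [show m = i + s + r + 1 by omega]
        ring
      · -- b = 2^r + 2^t
        obtain ⟨d, hd1, rfl⟩ : ∃ d, 1 ≤ d ∧ r = t + d := ⟨r - t, by omega, by omega⟩
        have hexp : (2^(i+s) + 2^i) * (2^(t+d) + 2^t)
            = 2^(i+s+t+d) + 2^(i+s+t) + 2^(i+t+d) + 2^(i+t) := by ring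
        rw [hexp] at hlb
        by_cases hs : s = 1
        · subst hs
          by_cases hd : d = 1
          · subst hd
            left
            refine Or.inr ⟨i + t, by omega, by omega, ?_⟩
            rw [show m = i + t + 3 by omega]
            ring
          · -- d ≥ 2 : contradiction
            exfalso
            obtain ⟨f, hf⟩ : ∃ f, m = f + 4 := ⟨m - 4, by omega⟩
            rw [hf] at hlb
            have hM : (2:ℕ)^(f+4) = 16 * 2^f := by ring
            have t1 : (2:ℕ)^(i+1+t+d) ≤ 8 * 2^f := pf8 (by omega)
            have t2 : (2:ℕ)^(i+1+t) ≤ 2 * 2^f := pf2 (by omega)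
            have t3 : (2:ℕ)^(i+t+d) ≤ 4 * 2^f := pf4 (by omega)
            have t4 : (2:ℕ)^(i+t) ≤ 1 * 2^f := pf1 (by omega)
            omega
        · -- s ≥ 2 : contradiction
          exfalso
          obtain ⟨f, hf⟩ : ∃ f, m = f + 4 := ⟨m - 4, by omega⟩
          rw [hf] at hlb
          have hM : (2:ℕ)^(f+4) = 16 * 2^f := by ring
          have t1 : (2:ℕ)^(i+s+t+d) ≤ 8 * 2^f := pf8 (by omega)
          have t2 : (2:ℕ)^(i+s+t) ≤ 4 * 2^f := pf4 (by omega)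
          have t3 : (2:ℕ)^(i+t+d) ≤ 2 * 2^f := pf2 (by omega)
          have t4 : (2:ℕ)^(i+t) ≤ 1 * 2^f := pf1 (by omega)
          omega
    · rcases Fb with ⟨u, v, huv1, huv2, hv1, rfl⟩ | ⟨u, v, w, hb1, hb2, hb3, hb4, hb5, rfl⟩ |
        ⟨ss, hc1, hc2, rfl⟩ | ⟨hd10, rfl⟩
      · -- (ga) b = 2^r + 2^u + 2^v
        obtain ⟨e1, he1, rfl⟩ : ∃ e1, 1 ≤ e1 ∧ r = u + e1 := ⟨r - u, by omega, by omega⟩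
        obtain ⟨e2, he2, rfl⟩ : ∃ e2, 1 ≤ e2 ∧ u = v + e2 := ⟨u - v, by omega, by omega⟩
        have hexp : (2^(i+s) + 2^i) * (2^(v+e2+e1) + 2^(v+e2) + 2^v)
            = 2^(i+s+v+e2+e1) + 2^(i+s+v+e2) + 2^(i+s+v)
              + 2^(i+v+e2+e1) + 2^(i+v+e2) + 2^(i+v) := by ring
        rw [hexp] at hlb
        by_cases hs : s = 1
        · subst hs
          by_cases he11 : e1 = 1
          · subst he11
            -- survivor S1 : form (c), any e2
            right
            refine Or.inr (Or.inr (Or.inl ⟨i + v + 1, by omega, by omega, ?_⟩))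
            rw [hexp, show m - 3 = i + v + e2 by omega, show m = i + v + e2 + 3 by omega,
              show i + v + 1 - 1 = i + v by omega]
            ring
          · by_cases he12 : e1 = 2
            · subst he12
              by_cases he21 : e2 = 1
              · subst he21
                -- survivor S2 : 33 * 2^(i+v)
                left
                refine Or.inr ⟨i + v, by omega, by omega, ?_⟩
                rw [hexp, show m = i + v + 5 by omega]
                ring
              · -- s=1, e1=2, e2 ≥ 2 : contradiction (63 < 64)
                exfalso
                obtain ⟨f, hf⟩ : ∃ f, m = f + 6 := ⟨m - 6, by omega⟩
                rw [hf] at hlb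
                have hM : (2:ℕ)^(f+6) = 64 * 2^f := by ring
                have t1 : (2:ℕ)^(i+1+v+e2+2) ≤ 32 * 2^f := pf32 (by omega)
                have t2 : (2:ℕ)^(i+1+v+e2) ≤ 8 * 2^f := pf8 (by omega)
                have t3 : (2:ℕ)^(i+1+v) ≤ 2 * 2^f := pf2 (by omega)
                have t4 : (2:ℕ)^(i+v+e2+2) ≤ 16 * 2^f := pf16 (by omega)
                have t5 : (2:ℕ)^(i+v+e2) ≤ 4 * 2^f := pf4 (by omega)
                have t6 : (2:ℕ)^(i+v) ≤ 1 * 2^f := pf1 (by omega)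
                omega
            · -- s=1, e1 ≥ 3 : contradiction (57 < 64)
              exfalso
              obtain ⟨f, hf⟩ : ∃ f, m = f + 6 := ⟨m - 6, by omega⟩
              rw [hf] at hlb
              have hM : (2:ℕ)^(f+6) = 64 * 2^f := by ring
              have t1 : (2:ℕ)^(i+1+v+e2+e1) ≤ 32 * 2^f := pf32 (by omega)
              have t2 : (2:ℕ)^(i+1+v+e2) ≤ 4 * 2^f := pf4 (by omega)
              have t3 : (2:ℕ)^(i+1+v) ≤ 2 * 2^f := pf2 (by omega)
              have t4 : (2:ℕ)^(i+v+e2+e1) ≤ 16 * 2^f := pf16 (by omega)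
              have t5 : (2:ℕ)^(i+v+e2) ≤ 2 * 2^f := pf2 (by omega)
              have t6 : (2:ℕ)^(i+v) ≤ 1 * 2^f := pf1 (by omega)
              omega
        · by_cases hs2 : s = 2
          · subst hs2
            by_cases he11 : e1 = 1
            · subst he11
              by_cases he21 : e2 = 1
              · subst he21
                -- survivor S3 : 35*2^(i+v), form (a)
                right
                refine Or.inl ⟨i + v + 1, i + v, by omega, by omega, by omega, ?_⟩
                rw [hexp, show m = i + v + 5 by omega]
                ring
              · by_cases he22 : e2 = 2
                · subst he22
                  -- survivor S4 : 65*2^(i+v)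
                  left
                  refine Or.inr ⟨i + v, by omega, by omega, ?_⟩
                  rw [hexp, show m = i + v + 6 by omega]
                  ring
                · -- s=2, e1=1, e2 ≥ 3 : contradiction (125 < 128)
                  exfalso
                  obtain ⟨f, hf⟩ : ∃ f, m = f + 7 := ⟨m - 7, by omega⟩
                  rw [hf] at hlb
                  have hM : (2:ℕ)^(f+7) = 128 * 2^f := by ring
                  have t1 : (2:ℕ)^(i+2+v+e2+1) ≤ 64 * 2^f := pf64 (by omega)
                  have t2 : (2:ℕ)^(i+2+v+e2) ≤ 32 * 2^f := pf32 (by omega)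
                  have t3 : (2:ℕ)^(i+2+v) ≤ 4 * 2^f := pf4 (by omega)
                  have t4 : (2:ℕ)^(i+v+e2+1) ≤ 16 * 2^f := pf16 (by omega)
                  have t5 : (2:ℕ)^(i+v+e2) ≤ 8 * 2^f := pf8 (by omega)
                  have t6 : (2:ℕ)^(i+v) ≤ 1 * 2^f := pf1 (by omega)
                  omega
            · -- s=2, e1 ≥ 2 : contradiction (55 < 64)
              exfalso
              obtain ⟨f, hf⟩ : ∃ f, m = f + 6 := ⟨m - 6, by omega⟩
              rw [hf] at hlb
              have hM : (2:ℕ)^(f+6) = 64 * 2^f := by ring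
              have t1 : (2:ℕ)^(i+2+v+e2+e1) ≤ 32 * 2^f := pf32 (by omega)
              have t2 : (2:ℕ)^(i+2+v+e2) ≤ 8 * 2^f := pf8 (by omega)
              have t3 : (2:ℕ)^(i+2+v) ≤ 4 * 2^f := pf4 (by omega)
              have t4 : (2:ℕ)^(i+v+e2+e1) ≤ 8 * 2^f := pf8 (by omega)
              have t5 : (2:ℕ)^(i+v+e2) ≤ 2 * 2^f := pf2 (by omega)
              have t6 : (2:ℕ)^(i+v) ≤ 1 * 2^f := pf1 (by omega)
              omega
          · -- s ≥ 3 : contradiction (63 < 64)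
            exfalso
            obtain ⟨f, hf⟩ : ∃ f, m = f + 6 := ⟨m - 6, by omega⟩
            rw [hf] at hlb
            have hM : (2:ℕ)^(f+6) = 64 * 2^f := by ring
            have t1 : (2:ℕ)^(i+s+v+e2+e1) ≤ 32 * 2^f := pf32 (by omega)
            have t2 : (2:ℕ)^(i+s+v+e2) ≤ 16 * 2^f := pf16 (by omega)
            have t3 : (2:ℕ)^(i+s+v) ≤ 8 * 2^f := pf8 (by omega)
            have t4 : (2:ℕ)^(i+v+e2+e1) ≤ 4 * 2^f := pf4 (by omega)
            have t5 : (2:ℕ)^(i+v+e2) ≤ 2 * 2^f := pf2 (by omega)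
            have t6 : (2:ℕ)^(i+v) ≤ 1 * 2^f := pf1 (by omega)
            omega
      · -- (gb) b = 2^r + 2^u + 2^v + 2^w with r + w = u + v
        obtain ⟨d1, hd1, rfl⟩ : ∃ d1, 1 ≤ d1 ∧ r = u + d1 := ⟨r - u, by omega, by omega⟩
        obtain ⟨d2, hd2, rfl⟩ : ∃ d2, 1 ≤ d2 ∧ u = v + d2 := ⟨u - v, by omega, by omega⟩
        obtain rfl : v = w + d1 := by omega
        have hexp : (2^(i+s) + 2^i) * (2^(w+d1+d2+d1) + 2^(w+d1+d2) + 2^(w+d1) + 2^w)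
            = 2^(i+s+w+d1+d2+d1) + 2^(i+s+w+d1+d2) + 2^(i+s+w+d1) + 2^(i+s+w)
              + 2^(i+w+d1+d2+d1) + 2^(i+w+d1+d2) + 2^(i+w+d1) + 2^(i+w) := by ring
        rw [hexp] at hlb
        by_cases hs : s = 1
        · subst hs
          by_cases hd11 : d1 = 1
          · subst hd11
            by_cases hd21 : d2 = 1
            · subst hd21
              -- survivor T1 : 45*2^(i+w), form (b)
              right
              refine Or.inr (Or.inl ⟨i + w + 3, i + w + 2, i + w, by omega, by omega, by omega,
                by omega, by omega, ?_⟩)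
              rw [hexp, show m = i + w + 5 by omega]
              ring
            · by_cases hd22 : d2 = 2
              · subst hd22
                -- survivor T2col : 81*2^(i+w), form (a)
                right
                refine Or.inl ⟨i + w + 4, i + w, by omega, by omega, by omega, ?_⟩
                rw [hexp, show m = i + w + 6 by omega]
                ring
              · -- survivor T2 : d2 ≥ 3, form (b)
                right
                refine Or.inr (Or.inl ⟨i + w + d2 + 1, i + w + 3, i + w, by omega, by omega,
                  by omega, by omega, by omega, ?_⟩)
                rw [hexp, show m = i + w + d2 + 4 by omega]
                ring
          · by_cases hd12 : d1 = 2
            · subst hd12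
              by_cases hd21 : d2 = 1
              · subst hd21
                -- survivor T3 : 135*2^(i+w), form (d)
                right
                refine Or.inr (Or.inr (Or.inr ⟨by omega, ?_⟩))
                rw [hexp, show m - 5 = i + w + 2 by omega, show m - 6 = i + w + 1 by omega,
                  show m - 7 = i + w by omega, show m = i + w + 7 by omega]
                ring
              · -- s=1, d1=2, d2 ≥ 2 : contradiction (255 < 256)
                exfalso
                obtain ⟨f, hf⟩ : ∃ f, m = f + 8 := ⟨m - 8, by omega⟩
                rw [hf] at hlb
                have hM : (2:ℕ)^(f+8) = 256 * 2^f := by ring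
                have t1 : (2:ℕ)^(i+1+w+2+d2+2) ≤ 128 * 2^f := pf128 (by omega)
                have t2 : (2:ℕ)^(i+1+w+2+d2) ≤ 32 * 2^f := pf32 (by omega)
                have t3 : (2:ℕ)^(i+1+w+2) ≤ 8 * 2^f := pf8 (by omega)
                have t4 : (2:ℕ)^(i+1+w) ≤ 2 * 2^f := pf2 (by omega)
                have t5 : (2:ℕ)^(i+w+2+d2+2) ≤ 64 * 2^f := pf64 (by omega)
                have t6 : (2:ℕ)^(i+w+2+d2) ≤ 16 * 2^f := pf16 (by omega)
                have t7 : (2:ℕ)^(i+w+2) ≤ 4 * 2^f := pf4 (by omega)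
                have t8 : (2:ℕ)^(i+w) ≤ 1 * 2^f := pf1 (by omega)
                omega
            · -- s=1, d1 ≥ 3 : contradiction (459 < 512)
              exfalso
              obtain ⟨f, hf⟩ : ∃ f, m = f + 9 := ⟨m - 9, by omega⟩
              rw [hf] at hlb
              have hM : (2:ℕ)^(f+9) = 512 * 2^f := by ring
              have t1 : (2:ℕ)^(i+1+w+d1+d2+d1) ≤ 256 * 2^f := pf256 (by omega)
              have t2 : (2:ℕ)^(i+1+w+d1+d2) ≤ 32 * 2^f := pf32 (by omega)
              have t3 : (2:ℕ)^(i+1+w+d1) ≤ 16 * 2^f := pf16 (by omega)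
              have t4 : (2:ℕ)^(i+1+w) ≤ 2 * 2^f := pf2 (by omega)
              have t5 : (2:ℕ)^(i+w+d1+d2+d1) ≤ 128 * 2^f := pf128 (by omega)
              have t6 : (2:ℕ)^(i+w+d1+d2) ≤ 16 * 2^f := pf16 (by omega)
              have t7 : (2:ℕ)^(i+w+d1) ≤ 8 * 2^f := pf8 (by omega)
              have t8 : (2:ℕ)^(i+w) ≤ 1 * 2^f := pf1 (by omega)
              omega
        · by_cases hs2 : s = 2
          · subst hs2
            by_cases hd11 : d1 = 1
            · subst hd11
              by_cases hd21 : d2 = 1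
              · subst hd21
                -- survivor T4 : 75*2^(i+w), form (c)
                right
                refine Or.inr (Or.inr (Or.inl ⟨i + w + 1, by omega, by omega, ?_⟩))
                rw [hexp, show m - 3 = i + w + 3 by omega,
                  show i + w + 1 - 1 = i + w by omega, show m = i + w + 6 by omega]
                ring
              · by_cases hd22 : d2 = 2
                · subst hd22
                  -- survivor T5 : 135*2^(i+w), form (d)
                  right
                  refine Or.inr (Or.inr (Or.inr ⟨by omega, ?_⟩))
                  rw [hexp, show m - 5 = i + w + 2 by omega, show m - 6 = i + w + 1 by omega,
                    show m - 7 = i + w by omega, show m = i + w + 7 by omega]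
                  ring
                · -- s=2, d1=1, d2 ≥ 3 : contradiction (255 < 256)
                  exfalso
                  obtain ⟨f, hf⟩ : ∃ f, m = f + 8 := ⟨m - 8, by omega⟩
                  rw [hf] at hlb
                  have hM : (2:ℕ)^(f+8) = 256 * 2^f := by ring
                  have t1 : (2:ℕ)^(i+2+w+1+d2+1) ≤ 128 * 2^f := pf128 (by omega)
                  have t2 : (2:ℕ)^(i+2+w+1+d2) ≤ 64 * 2^f := pf64 (by omega)
                  have t3 : (2:ℕ)^(i+2+w+1) ≤ 8 * 2^f := pf8 (by omega)
                  have t4 : (2:ℕ)^(i+2+w) ≤ 4 * 2^f := pf4 (by omega)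
                  have t5 : (2:ℕ)^(i+w+1+d2+1) ≤ 32 * 2^f := pf32 (by omega)
                  have t6 : (2:ℕ)^(i+w+1+d2) ≤ 16 * 2^f := pf16 (by omega)
                  have t7 : (2:ℕ)^(i+w+1) ≤ 2 * 2^f := pf2 (by omega)
                  have t8 : (2:ℕ)^(i+w) ≤ 1 * 2^f := pf1 (by omega)
                  omega
            · -- s=2, d1 ≥ 2 : contradiction (225 < 256)
              exfalso
              obtain ⟨f, hf⟩ : ∃ f, m = f + 8 := ⟨m - 8, by omega⟩
              rw [hf] at hlb
              have hM : (2:ℕ)^(f+8) = 256 * 2^f := by ring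
              have t1 : (2:ℕ)^(i+2+w+d1+d2+d1) ≤ 128 * 2^f := pf128 (by omega)
              have t2 : (2:ℕ)^(i+2+w+d1+d2) ≤ 32 * 2^f := pf32 (by omega)
              have t3 : (2:ℕ)^(i+2+w+d1) ≤ 16 * 2^f := pf16 (by omega)
              have t4 : (2:ℕ)^(i+2+w) ≤ 4 * 2^f := pf4 (by omega)
              have t5 : (2:ℕ)^(i+w+d1+d2+d1) ≤ 32 * 2^f := pf32 (by omega)
              have t6 : (2:ℕ)^(i+w+d1+d2) ≤ 8 * 2^f := pf8 (by omega)
              have t7 : (2:ℕ)^(i+w+d1) ≤ 4 * 2^f := pf4 (by omega)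
              have t8 : (2:ℕ)^(i+w) ≤ 1 * 2^f := pf1 (by omega)
              omega
          · by_cases hs3 : s = 3
            · subst hs3
              by_cases hd11 : d1 = 1
              · subst hd11
                by_cases hd21 : d2 = 1
                · subst hd21
                  -- survivor T6 : 135*2^(i+w), form (d)
                  right
                  refine Or.inr (Or.inr (Or.inr ⟨by omega, ?_⟩))
                  rw [hexp, show m - 5 = i + w + 2 by omega, show m - 6 = i + w + 1 by omega,
                    show m - 7 = i + w by omega, show m = i + w + 7 by omega]
                  ring
                · -- s=3, d1=1, d2 ≥ 2 : contradiction (243 < 256)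
                  exfalso
                  obtain ⟨f, hf⟩ : ∃ f, m = f + 8 := ⟨m - 8, by omega⟩
                  rw [hf] at hlb
                  have hM : (2:ℕ)^(f+8) = 256 * 2^f := by ring
                  have t1 : (2:ℕ)^(i+3+w+1+d2+1) ≤ 128 * 2^f := pf128 (by omega)
                  have t2 : (2:ℕ)^(i+3+w+1+d2) ≤ 64 * 2^f := pf64 (by omega)
                  have t3 : (2:ℕ)^(i+3+w+1) ≤ 16 * 2^f := pf16 (by omega)
                  have t4 : (2:ℕ)^(i+3+w) ≤ 8 * 2^f := pf8 (by omega)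
                  have t5 : (2:ℕ)^(i+w+1+d2+1) ≤ 16 * 2^f := pf16 (by omega)
                  have t6 : (2:ℕ)^(i+w+1+d2) ≤ 8 * 2^f := pf8 (by omega)
                  have t7 : (2:ℕ)^(i+w+1) ≤ 2 * 2^f := pf2 (by omega)
                  have t8 : (2:ℕ)^(i+w) ≤ 1 * 2^f := pf1 (by omega)
                  omega
              · -- s=3, d1 ≥ 2 : contradiction (405 < 512)
                exfalso
                obtain ⟨f, hf⟩ : ∃ f, m = f + 9 := ⟨m - 9, by omega⟩
                rw [hf] at hlb
                have hM : (2:ℕ)^(f+9) = 512 * 2^f := by ring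
                have t1 : (2:ℕ)^(i+3+w+d1+d2+d1) ≤ 256 * 2^f := pf256 (by omega)
                have t2 : (2:ℕ)^(i+3+w+d1+d2) ≤ 64 * 2^f := pf64 (by omega)
                have t3 : (2:ℕ)^(i+3+w+d1) ≤ 32 * 2^f := pf32 (by omega)
                have t4 : (2:ℕ)^(i+3+w) ≤ 8 * 2^f := pf8 (by omega)
                have t5 : (2:ℕ)^(i+w+d1+d2+d1) ≤ 32 * 2^f := pf32 (by omega)
                have t6 : (2:ℕ)^(i+w+d1+d2) ≤ 8 * 2^f := pf8 (by omega)
                have t7 : (2:ℕ)^(i+w+d1) ≤ 4 * 2^f := pf4 (by omega)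
                have t8 : (2:ℕ)^(i+w) ≤ 1 * 2^f := pf1 (by omega)
                omega
            · -- s ≥ 4 : contradiction (255 < 256)
              exfalso
              obtain ⟨f, hf⟩ : ∃ f, m = f + 8 := ⟨m - 8, by omega⟩
              rw [hf] at hlb
              have hM : (2:ℕ)^(f+8) = 256 * 2^f := by ring
              have t1 : (2:ℕ)^(i+s+w+d1+d2+d1) ≤ 128 * 2^f := pf128 (by omega)
              have t2 : (2:ℕ)^(i+s+w+d1+d2) ≤ 64 * 2^f := pf64 (by omega)
              have t3 : (2:ℕ)^(i+s+w+d1) ≤ 32 * 2^f := pf32 (by omega)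
              have t4 : (2:ℕ)^(i+s+w) ≤ 16 * 2^f := pf16 (by omega)
              have t5 : (2:ℕ)^(i+w+d1+d2+d1) ≤ 8 * 2^f := pf8 (by omega)
              have t6 : (2:ℕ)^(i+w+d1+d2) ≤ 4 * 2^f := pf4 (by omega)
              have t7 : (2:ℕ)^(i+w+d1) ≤ 2 * 2^f := pf2 (by omega)
              have t8 : (2:ℕ)^(i+w) ≤ 1 * 2^f := pf1 (by omega)
              omega
      · -- (gc) b = 2^r + 2^(r-3) + 2^ss + 2^(ss-1) : always a contradiction
        exfalso
        obtain ⟨w, hw2, rfl⟩ : ∃ w, 2 ≤ w ∧ ss = w + 1 := ⟨ss - 1, by omega, by omega⟩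
        obtain ⟨e, rfl⟩ : ∃ e, r = w + 4 + e := ⟨r - w - 4, by omega⟩
        have hbeq : (2:ℕ)^(w+4+e) + 2^(w+4+e-3) + 2^(w+1) + 2^(w+1-1)
            = 2^(w+4+e) + 2^(w+1+e) + 2^(w+1) + 2^w := by
          rw [show w+4+e-3 = w+1+e by omega, show w+1-1 = w by omega]
        rw [hbeq] at hlb hub
        have hexp : (2^(i+s) + 2^i) * (2^(w+4+e) + 2^(w+1+e) + 2^(w+1) + 2^w)
            = 2^(i+s+w+4+e) + 2^(i+s+w+1+e) + 2^(i+s+w+1) + 2^(i+s+w)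
              + 2^(i+w+4+e) + 2^(i+w+1+e) + 2^(i+w+1) + 2^(i+w) := by ring
        rw [hexp] at hlb
        by_cases hs : s = 1
        · subst hs
          obtain ⟨f, hf⟩ : ∃ f, m = f + 6 := ⟨m - 6, by omega⟩
          rw [hf] at hlb
          have hM : (2:ℕ)^(f+6) = 64 * 2^f := by ring
          have t1 : (2:ℕ)^(i+1+w+4+e) ≤ 32 * 2^f := pf32 (by omega)
          have t2 : (2:ℕ)^(i+1+w+1+e) ≤ 4 * 2^f := pf4 (by omega)
          have t3 : (2:ℕ)^(i+1+w+1) ≤ 4 * 2^f := pf4 (by omega)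
          have t4 : (2:ℕ)^(i+1+w) ≤ 2 * 2^f := pf2 (by omega)
          have t5 : (2:ℕ)^(i+w+4+e) ≤ 16 * 2^f := pf16 (by omega)
          have t6 : (2:ℕ)^(i+w+1+e) ≤ 2 * 2^f := pf2 (by omega)
          have t7 : (2:ℕ)^(i+w+1) ≤ 2 * 2^f := pf2 (by omega)
          have t8 : (2:ℕ)^(i+w) ≤ 1 * 2^f := pf1 (by omega)
          omega
        · obtain ⟨f, hf⟩ : ∃ f, m = f + 7 := ⟨m - 7, by omega⟩
          rw [hf] at hlb
          have hM : (2:ℕ)^(f+7) = 128 * 2^f := by ring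
          have t1 : (2:ℕ)^(i+s+w+4+e) ≤ 64 * 2^f := pf64 (by omega)
          have t2 : (2:ℕ)^(i+s+w+1+e) ≤ 8 * 2^f := pf8 (by omega)
          have t3 : (2:ℕ)^(i+s+w+1) ≤ 8 * 2^f := pf8 (by omega)
          have t4 : (2:ℕ)^(i+s+w) ≤ 4 * 2^f := pf4 (by omega)
          have t5 : (2:ℕ)^(i+w+4+e) ≤ 16 * 2^f := pf16 (by omega)
          have t6 : (2:ℕ)^(i+w+1+e) ≤ 2 * 2^f := pf2 (by omega)
          have t7 : (2:ℕ)^(i+w+1) ≤ 2 * 2^f := pf2 (by omega)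
          have t8 : (2:ℕ)^(i+w) ≤ 1 * 2^f := pf1 (by omega)
          omega
      · -- (gd) b = 2^r + 2^(r-5) + 2^(r-6) + 2^(r-7) : always a contradiction
        exfalso
        obtain ⟨w, hw3, rfl⟩ : ∃ w, 3 ≤ w ∧ r = w + 7 := ⟨r - 7, by omega, by omega⟩
        have hbeq : (2:ℕ)^(w+7) + 2^(w+7-5) + 2^(w+7-6) + 2^(w+7-7)
            = 2^(w+7) + 2^(w+2) + 2^(w+1) + 2^w := by
          rw [show w+7-5 = w+2 by omega, show w+7-6 = w+1 by omega, show w+7-7 = w by omega]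
        rw [hbeq] at hlb hub
        have hexp : (2^(i+s) + 2^i) * (2^(w+7) + 2^(w+2) + 2^(w+1) + 2^w)
            = 2^(i+s+w+7) + 2^(i+s+w+2) + 2^(i+s+w+1) + 2^(i+s+w)
              + 2^(i+w+7) + 2^(i+w+2) + 2^(i+w+1) + 2^(i+w) := by ring
        rw [hexp] at hlb
        by_cases hs : s = 1
        · subst hs
          obtain ⟨f, hf⟩ : ∃ f, m = f + 9 := ⟨m - 9, by omega⟩
          rw [hf] at hlb
          have hM : (2:ℕ)^(f+9) = 512 * 2^f := by ring
          have t1 : (2:ℕ)^(i+1+w+7) ≤ 256 * 2^f := pf256 (by omega)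
          have t2 : (2:ℕ)^(i+1+w+2) ≤ 8 * 2^f := pf8 (by omega)
          have t3 : (2:ℕ)^(i+1+w+1) ≤ 4 * 2^f := pf4 (by omega)
          have t4 : (2:ℕ)^(i+1+w) ≤ 2 * 2^f := pf2 (by omega)
          have t5 : (2:ℕ)^(i+w+7) ≤ 128 * 2^f := pf128 (by omega)
          have t6 : (2:ℕ)^(i+w+2) ≤ 4 * 2^f := pf4 (by omega)
          have t7 : (2:ℕ)^(i+w+1) ≤ 2 * 2^f := pf2 (by omega)
          have t8 : (2:ℕ)^(i+w) ≤ 1 * 2^f := pf1 (by omega)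
          omega
        · obtain ⟨f, hf⟩ : ∃ f, m = f + 10 := ⟨m - 10, by omega⟩
          rw [hf] at hlb
          have hM : (2:ℕ)^(f+10) = 1024 * 2^f := by ring
          have t1 : (2:ℕ)^(i+s+w+7) ≤ 512 * 2^f := pf512 (by omega)
          have t2 : (2:ℕ)^(i+s+w+2) ≤ 16 * 2^f := pf16 (by omega)
          have t3 : (2:ℕ)^(i+s+w+1) ≤ 8 * 2^f := pf8 (by omega)
          have t4 : (2:ℕ)^(i+s+w) ≤ 4 * 2^f := pf4 (by omega)
          have t5 : (2:ℕ)^(i+w+7) ≤ 128 * 2^f := pf128 (by omega)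
          have t6 : (2:ℕ)^(i+w+2) ≤ 4 * 2^f := pf4 (by omega)
          have t7 : (2:ℕ)^(i+w+1) ≤ 2 * 2^f := pf2 (by omega)
          have t8 : (2:ℕ)^(i+w) ≤ 1 * 2^f := pf1 (by omega)
          omega

theorem lemB {n k : ℕ} (h : CanRepr 2 n k) :
    ∀ m, k ≤ m + 2 → 2 ^ m < n → n ≤ 2 ^ (m + 1) → OneForm m n ∨ GoodForm m n := by
  induction h with
  | base =>
    intro m hk hlb hub
    exact Or.inl (lemA CanRepr.base m (by omega) hlb)
  | @add a b p q h1 h2 ih1 ih2 =>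
    intro m hk hlb hub
    by_cases hk1 : p + q ≤ m + 1
    · exact Or.inl (lemA (CanRepr.add h1 h2) m hk1 hlb)
    · have hkeq : p + q = m + 2 := by omega
      have hp1 := cr_k_pos h1
      have hq1 := cr_k_pos h2
      have ha := cr_le h1
      have hb := cr_le h2
      have hpq : p ≤ 2 ∨ q ≤ 2 := by
        by_contra hc
        push_neg at hc
        obtain ⟨g, hg⟩ : ∃ g, m = g + 1 := ⟨m - 1, by omega⟩
        have e1 : a ≤ 2 ^ g := le_trans ha (pow_le_pow_e (by omega))
        have e2 : b ≤ 2 ^ g := le_trans hb (pow_le_pow_e (by omega))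
        have e3 : (2:ℕ) ^ (g + 1) = 2 ^ g + 2 ^ g := by ring
        rw [hg] at hlb
        omega
      rcases hpq with hp2 | hq2
      · rcases Nat.eq_or_lt_of_le hp1 with hp | hp
        · -- p = 1, a = 2
          have := cr_one_aux h1 (by omega)
          subst this
          have h2' : CanRepr 2 b (m + 1) := cr_cast h2 rfl (by omega)
          rw [show (2:ℕ) + b = b + 2 from Nat.add_comm 2 b]
          exact addAux2 h2' (by omega) (by omega)
        · -- p = 2, a = 4
          have := cr_two_aux h1 (by omega)
          subst this
          have h2' : CanRepr 2 b m := cr_cast h2 rfl (by omega)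
          rw [show (4:ℕ) + b = b + 4 from Nat.add_comm 4 b]
          exact addAux4 h2' (by omega) (by omega)
      · rcases Nat.eq_or_lt_of_le hq1 with hq | hq
        · have := cr_one_aux h2 (by omega)
          subst this
          have h1' : CanRepr 2 a (m + 1) := cr_cast h1 rfl (by omega)
          exact addAux2 h1' hlb hub
        · have := cr_two_aux h2 (by omega)
          subst this
          have h1' : CanRepr 2 a m := cr_cast h1 rfl (by omega)
          exact addAux4 h1' hlb hub
  | @mul a b p q h1 h2 ih1 ih2 =>
    intro m hk hlb hub
    by_cases hk1 : p + q ≤ m + 1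
    · exact Or.inl (lemA (CanRepr.mul h1 h2) m hk1 hlb)
    · have hkeq : p + q = m + 2 := by omega
      have hp1 := cr_k_pos h1
      have hq1 := cr_k_pos h2
      have ha := cr_le h1
      have hb := cr_le h2
      have ha2 := cr_two_le h1
      have hb2 := cr_two_le h2
      by_cases hq1' : q = 1
      · -- b = 2
        subst hq1'
        obtain rfl := cr_one h2
        have hm1 : 1 ≤ m := by
          have h4 : (2:ℕ)^2 ≤ 2^(m+1) := le_trans (by omega) hub
          have := e_of_pow_le h4
          omega
        obtain ⟨m1, rfl⟩ : ∃ m1, m = m1 + 1 := ⟨m - 1, by omega⟩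
        have e1 : (2:ℕ)^(m1+1) = 2 * 2^m1 := by ring
        have e2 : (2:ℕ)^(m1+1+1) = 2 * 2^(m1+1) := by ring
        have F := ih1 m1 (by omega) (by omega) (by omega)
        rw [mul_comm a 2]
        rcases F with F | F
        · exact Or.inl (oneForm_double F)
        · exact Or.inr (goodForm_double F)
      · by_cases hp1' : p = 1
        · -- a = 2
          subst hp1'
          obtain rfl := cr_one h1
          have hm1 : 1 ≤ m := by
            have h4 : (2:ℕ)^2 ≤ 2^(m+1) := le_trans (by omega) hub
            have := e_of_pow_le h4
            omega
          obtain ⟨m1, rfl⟩ : ∃ m1, m = m1 + 1 := ⟨m - 1, by omega⟩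
          have e1 : (2:ℕ)^(m1+1) = 2 * 2^m1 := by ring
          have e2 : (2:ℕ)^(m1+1+1) = 2 * 2^(m1+1) := by ring
          have F := ih2 m1 (by omega) (by omega) (by omega)
          rcases F with F | F
          · exact Or.inl (oneForm_double F)
          · exact Or.inr (goodForm_double F)
        · -- p, q ≥ 2
          obtain ⟨p2, rfl⟩ : ∃ p2, p = p2 + 2 := ⟨p - 2, by omega⟩
          obtain ⟨q2, rfl⟩ : ∃ q2, q = q2 + 2 := ⟨q - 2, by omega⟩
          have hm : m = p2 + q2 + 2 := by omega
          have hha : 2 ^ p2 < a := by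
            by_contra hc
            have hle : a * b ≤ 2 ^ (p2 + (q2 + 2)) := by
              rw [pow_add]; exact Nat.mul_le_mul (by omega) hb
            rw [show p2 + (q2 + 2) = m from by omega] at hle
            omega
          have hhb : 2 ^ q2 < b := by
            by_contra hc
            have hle : a * b ≤ 2 ^ (p2 + 2 + q2) := by
              rw [pow_add]; exact Nat.mul_le_mul ha (by omega)
            rw [show p2 + 2 + q2 = m from by omega] at hle
            omega
          by_cases hA : 2 ^ (p2 + 1) < a
          · by_cases hB : 2 ^ (q2 + 1) < b
            · -- both factors in top half
              have Fa := oneForm_norm (lemA h1 (p2 + 1) (by omega) hA)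
              have Fb := oneForm_norm (lemA h2 (q2 + 1) (by omega) hB)
              rcases Fa with hae | ⟨i, hi1, hip, hae⟩
              · rcases Fb with hbe | ⟨j, hj1, hjq, hbe⟩
                · exfalso
                  rw [hae, hbe, ← pow_add] at hub
                  have := e_of_pow_le hub
                  omega
                · exfalso
                  rw [hae, hbe] at hub
                  have hexp : (2:ℕ)^(p2+1+1) * (2^(q2+1) + 2^j)
                      = 2^(p2+1+1+(q2+1)) + 2^(p2+1+1+j) := by
                    rw [Nat.mul_add, ← pow_add, ← pow_add]
                  rw [hexp] at hub
                  have hge : (2:ℕ)^(m+1) ≤ 2^(p2+1+1+(q2+1)) := pow_le_pow_e (by omega)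
                  have hpos : (0:ℕ) < 2^(p2+1+1+j) := Nat.pow_pos (by norm_num)
                  omega
              · rcases Fb with hbe | ⟨j, hj1, hjq, hbe⟩
                · exfalso
                  rw [hae, hbe] at hub
                  have hexp : ((2:ℕ)^(p2+1) + 2^i) * 2^(q2+1+1)
                      = 2^(p2+1+(q2+1+1)) + 2^(i+(q2+1+1)) := by
                    rw [Nat.add_mul, ← pow_add, ← pow_add]
                  rw [hexp] at hub
                  have hge : (2:ℕ)^(m+1) ≤ 2^(p2+1+(q2+1+1)) := pow_le_pow_e (by omega)
                  have hpos : (0:ℕ) < 2^(i+(q2+1+1)) := Nat.pow_pos (by norm_num)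
                  omega
                · -- both two-bit : classify via form (b)
                  right
                  rw [hae, hbe]
                  rcases le_total (q2 + 1 + i) (p2 + 1 + j) with hc | hc
                  · refine classify_b (e2 := p2+1+j) (e3 := q2+1+i) (e4 := i+j) ?_ ?_ hc
                      (by omega) (by omega) (by omega) (by omega)
                    · rw [hm]; ring
                    · rw [← hae, ← hbe]; exact hub
                  · refine classify_b (e2 := q2+1+i) (e3 := p2+1+j) (e4 := i+j) ?_ ?_ hc
                      (by omega) (by omega) (by omega) (by omega)
                    · rw [hm]; ring
                    · rw [← hae, ← hbe]; exact hub
            · -- a high, b low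
              have Fa := lemA h1 (p2 + 1) (by omega) hA
              have Fb := ih2 q2 (by omega) hhb (by omega)
              exact mulAsym Fa Fb (by omega) hlb hub
          · by_cases hB : 2 ^ (q2 + 1) < b
            · -- b high, a low
              have Fb := lemA h2 (q2 + 1) (by omega) hB
              have Fa := ih1 p2 (by omega) hha (by omega)
              rw [mul_comm a b] at hlb hub ⊢
              exact mulAsym Fb Fa (by omega) hlb hub
            · exfalso
              have hle : a * b ≤ 2 ^ (p2 + 1 + (q2 + 1)) := by
                rw [pow_add]; exact Nat.mul_le_mul (by omega) (by omega)
              rw [show p2 + 1 + (q2 + 1) = m from by omega] at hle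
              omega

theorem cr_half : ∀ n, 2 ≤ n → 2 ∣ n → CanRepr 2 n (n / 2) := by
  intro n
  induction n using Nat.strong_induction_on with
  | _ n ih =>
    intro h2 hdvd
    rcases Nat.eq_or_lt_of_le h2 with h | h
    · exact cr_cast CanRepr.base (by omega) (by omega)
    · have h4 : 4 ≤ n := by omega
      have ihp := ih (n - 2) (by omega) (by omega) (by omega)
      exact cr_cast (CanRepr.add ihp CanRepr.base) (by omega) (by omega)

theorem compl_le {n k : ℕ} (h : CanRepr 2 n k) : complexity 2 n ≤ k :=
  Nat.sInf_le h

theorem compl_mem {n : ℕ} (h2 : 2 ≤ n) (he : 2 ∣ n) :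
    CanRepr 2 n (complexity 2 n) :=
  Nat.sInf_mem ⟨n / 2, cr_half n h2 he⟩

end Aux

theorem stmt_9 (m n : ℕ) (hm : 3 ≤ m) (hn : 0 < n) (heven : 2 ∣ n)
    (hlb : 2 ^ m < n) (hub : n ≤ 2 ^ (m + 1)) :
    complexity 2 n = m + 2 ↔ GoodForm m n := by
  have hn2 : 2 ≤ n := by
    have h8 : (2:ℕ)^3 ≤ 2^m := Aux.pow_le_pow_e hm
    norm_num at h8
    omega
  constructor
  · intro hc
    have hmem := Aux.compl_mem hn2 heven
    rw [hc] at hmem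
    rcases Aux.lemB hmem m (le_refl _) hlb hub with F | F
    · exfalso
      have hle := Aux.compl_le (Aux.cr_oneForm (by omega) F)
      omega
    · exact F
  · intro hg
    have hle := Aux.compl_le (Aux.cr_goodForm hg)
    have hmem := Aux.compl_mem hn2 heven
    have hge : m + 1 ≤ complexity 2 n := by
      have h1 : (2:ℕ)^m < 2^(complexity 2 n) := lt_of_lt_of_le hlb (Aux.cr_le hmem)
      have := Aux.e_of_pow_lt h1
      omega
    rcases Nat.eq_or_lt_of_le hge with h | h
    · exfalso
      rw [← h] at hmem
      exact Aux.goodForm_not_oneForm hg (Aux.lemA hmem m (le_refl _) hlb)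
    · omega
end

section
/- Let m ≥ 3 and let n be a positive even integer with 2^m < n ≤ 2^{m+1}. Suppose n is not expressible as a sum of one or two powers of 2 and is not of any of the following forms: (a) 2^{m₁} + 2^{m₂} + 2^{m₃} with m = m₁ > m₂ > m₃ ≥ 1; (b) 2^{m₁} + 2^{m₂} + 2^{m₃} + 2^{m₄} with m = m₁ > m₂ > m₃ > m₄ ≥ 2 and m₁ + m₄ = m₂ + m₃; (c) 2^{m₁} + 2^{m₁−3} + 2^{m₂} + 2^{m₂−1} with m = m₁ ≥ m₂ + 3 ≥ 6; (d) 2^m + 2^{m−5} + 2^{m−6} + 2^{m−7} with m ≥ 10. Then log₂(n) + 2 ≤ ‖n‖₂, where log₂ denotes the real base-2 logarithm. -/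
namespace Work

lemma one_le_tp {k : ℕ} : 1 ≤ 2 ^ k := Nat.one_le_two_pow

lemma tp_le {i j : ℕ} (h : i ≤ j) : (2:ℕ)^i ≤ 2^j := Nat.pow_le_pow_right (by norm_num) h

lemma tp_lt {i j : ℕ} (h : i < j) : (2:ℕ)^i < 2^j := Nat.pow_lt_pow_right (by norm_num) h

lemma tpo (x k : ℕ) : (2:ℕ)^(x+k) = 2^k*2^x := by rw [pow_add]; ring

lemma mono_mul {y : ℕ} (h : 1 ≤ y) (z : ℕ) : z ≤ y * z :=
  Nat.le_mul_of_pos_left z (by omega)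

lemma canRepr_bounds {n p : ℕ} (h : CanRepr 2 n p) :
    1 ≤ p ∧ 2 ≤ n ∧ 2 ∣ n ∧ 2*p ≤ n ∧ n ≤ 2^p := by
  induction h with
  | base => norm_num
  | @add a b p q _ _ iha ihb =>
      obtain ⟨hp1, ha2, had, hap, haP⟩ := iha
      obtain ⟨hq1, hb2, hbd, hbp, hbP⟩ := ihb
      refine ⟨by omega, by omega, Nat.dvd_add had hbd, by omega, ?_⟩
      have h2p : (2:ℕ) ≤ 2^p := by calc (2:ℕ) = 2^1 := rfl
                                      _ ≤ 2^p := tp_le hp1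
      have h2q : (2:ℕ) ≤ 2^q := by calc (2:ℕ) = 2^1 := rfl
                                      _ ≤ 2^q := tp_le hq1
      have h1 : (2:ℕ)^p + 2^q ≤ 2^p * 2^q := by nlinarith
      calc a + b ≤ 2^p + 2^q := by omega
        _ ≤ 2^p * 2^q := h1
        _ = 2^(p+q) := (pow_add 2 p q).symm
  | @mul a b p q _ _ iha ihb =>
      obtain ⟨hp1, ha2, had, hap, haP⟩ := iha
      obtain ⟨hq1, hb2, hbd, hbp, hbP⟩ := ihb
      refine ⟨by omega, by nlinarith, had.mul_right b, by nlinarith, ?_⟩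
      calc a * b ≤ 2^p * 2^q := Nat.mul_le_mul haP hbP
        _ = 2^(p+q) := (pow_add 2 p q).symm

def Rest (m n : ℕ) : Prop :=
  (∃ b, 1 ≤ b ∧ b+1 ≤ m ∧ n = 2^m + 2^b) ∨
  (∃ b c, 1 ≤ c ∧ c+1 ≤ b ∧ b+1 ≤ m ∧ n = 2^m + 2^b + 2^c) ∨
  (∃ b c d, 2 ≤ d ∧ d+1 ≤ c ∧ c+1 ≤ b ∧ b+1 ≤ m ∧ m + d = b + c ∧
      n = 2^m + 2^b + 2^c + 2^d) ∨
  (∃ e s, 1 ≤ s ∧ 2 ≤ e ∧ m = e+s+3 ∧ n = 2^(e+s+3) + 2^(e+s) + 2^(e+1) + 2^e) ∨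
  (∃ e, 3 ≤ e ∧ m = e+7 ∧ n = 2^(e+7) + 2^(e+2) + 2^(e+1) + 2^e)

def Forms (p n : ℕ) : Prop :=
  n = 2^p ∨
  (∃ m, p = m+1 ∧ n = 2^m) ∨
  (∃ m b, p = m+1 ∧ 1 ≤ b ∧ b+1 ≤ m ∧ n = 2^m + 2^b) ∨
  (∃ m, p = m+2 ∧ Rest m n)

lemma rest_lb {m n : ℕ} (h : Rest m n) : 2^m < n := by
  rcases h with ⟨b,h1,h2,rfl⟩|⟨b,c,h1,h2,h3,rfl⟩|⟨b,c,d,h1,h2,h3,h4,h5,rfl⟩|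
    ⟨e,s,h1,h2,rfl,rfl⟩|⟨e,h1,rfl,rfl⟩
  · have := @one_le_tp b; omega
  · have := @one_le_tp b; have := @one_le_tp c; omega
  · have := @one_le_tp b; have := @one_le_tp c; have := @one_le_tp d; omega
  · have := @one_le_tp e; have := @one_le_tp (e+s); have := @one_le_tp (e+1); omega
  · have := @one_le_tp e; have := @one_le_tp (e+1); have := @one_le_tp (e+2); omega

lemma rest_ub {m n : ℕ} (h : Rest m n) : n < 2^(m+1) := by
  have hm : (2:ℕ)^(m+1) = 2^m + 2^m := by rw [pow_succ]; omega
  rcases h with ⟨b,h1,h2,rfl⟩|⟨b,c,h1,h2,h3,rfl⟩|⟨b,c,d,h1,h2,h3,h4,h5,rfl⟩|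
    ⟨e,s,h1,h2,h3,rfl⟩|⟨e,h1,h2,rfl⟩
  · have : (2:ℕ)^b < 2^m := tp_lt (by omega)
    omega
  · have hb : (2:ℕ)^b ≤ 2^(m-1) := tp_le (by omega)
    have hc : (2:ℕ)^c < 2^(m-1) := tp_lt (by omega)
    have : (2:ℕ)^(m-1) + 2^(m-1) = 2^m := by
      rw [← two_mul, ← pow_succ']; congr 1; omega
    omega
  · have hb : (2:ℕ)^b ≤ 2^(m-1) := tp_le (by omega)
    have hc : (2:ℕ)^c ≤ 2^(m-2) := tp_le (by omega)
    have hd : (2:ℕ)^d < 2^(m-2) := tp_lt (by omega)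
    have e1 : (2:ℕ)^(m-1) + 2^(m-1) = 2^m := by
      rw [← two_mul, ← pow_succ']; congr 1; omega
    have e2 : (2:ℕ)^(m-2) + 2^(m-2) = 2^(m-1) := by
      rw [← two_mul, ← pow_succ']; congr 1; omega
    omega
  · subst h3
    have q1 : (2:ℕ)^(e+1) ≤ 2^(e+s) := tp_le (by omega)
    have q2 : (2:ℕ)^e ≤ 2^(e+s) := tp_le (by omega)
    have q3 : (1:ℕ) ≤ 2^(e+s) := one_le_tp
    have e1 := tpo (e+s) 3
    have e2 := tpo (e+s) 4
    have e3 : e+s+3+1 = e+s+4 := by omega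
    rw [e3]
    norm_num at e1 e2
    omega
  · subst h2
    have e1 := tpo e 7
    have e2 := tpo e 8
    have e3 := tpo e 2
    have e4 := tpo e 1
    have e5 : e+7+1 = e+8 := by omega
    have q3 : (1:ℕ) ≤ 2^e := one_le_tp
    rw [e5]
    norm_num at e1 e2 e3 e4
    omega

/-- multiplying a classified value by `2^s` (s extra twos) stays classified. -/
lemma shiftF {p n : ℕ} (s : ℕ) (h : Forms p n) : Forms (p+s) (2^s * n) := by
  rcases h with rfl | ⟨m, rfl, rfl⟩ | ⟨m, b, rfl, h1, h2, rfl⟩ | ⟨m, rfl, hr⟩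
  · left; rw [← pow_add]; ring_nf
  · right; left; exact ⟨m+s, by omega, by rw [← pow_add]; ring_nf⟩
  · right; right; left
    refine ⟨m+s, b+s, by omega, by omega, by omega, ?_⟩
    rw [mul_add, ← pow_add, ← pow_add]; ring_nf
  · right; right; right
    refine ⟨m+s, by omega, ?_⟩
    rcases hr with ⟨b,h1,h2,rfl⟩|⟨b,c,h1,h2,h3,rfl⟩|⟨b,c,d,h1,h2,h3,h4,h5,rfl⟩|
      ⟨e,t,h1,h2,h3,rfl⟩|⟨e,h1,h2,rfl⟩
    · exact Or.inl ⟨b+s, by omega, by omega, by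
        rw [mul_add, ← pow_add, ← pow_add]; ring_nf⟩
    · exact Or.inr <| Or.inl ⟨b+s, c+s, by omega, by omega, by omega, by
        rw [mul_add, mul_add, ← pow_add, ← pow_add, ← pow_add]; ring_nf⟩
    · exact Or.inr <| Or.inr <| Or.inl ⟨b+s, c+s, d+s, by omega, by omega, by omega,
        by omega, by omega, by
        rw [mul_add, mul_add, mul_add, ← pow_add, ← pow_add, ← pow_add, ← pow_add]; ring_nf⟩
    · refine Or.inr <| Or.inr <| Or.inr <| Or.inl ⟨e+s, t, h1, by omega, by omega, ?_⟩
      rw [mul_add, mul_add, mul_add, ← pow_add, ← pow_add, ← pow_add, ← pow_add]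
      ring_nf
    · refine Or.inr <| Or.inr <| Or.inr <| Or.inr ⟨e+s, by omega, by omega, ?_⟩
      rw [mul_add, mul_add, mul_add, ← pow_add, ← pow_add, ← pow_add, ← pow_add]
      ring_nf

/-- a classified value strictly above `2^(p-1)` is classified at count `p+1`. -/
lemma bumpF {p n : ℕ} (h : Forms p n) (hsz : 2^p < 2*n) : Forms (p+1) n := by
  rcases h with rfl | ⟨m, rfl, rfl⟩ | ⟨m, b, rfl, h1, h2, rfl⟩ | ⟨m, rfl, hr⟩
  · exact Or.inr <| Or.inl ⟨p, rfl, rfl⟩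
  · exfalso; rw [pow_succ] at hsz; omega
  · exact Or.inr <| Or.inr <| Or.inr ⟨m, rfl, Or.inl ⟨b, h1, h2, rfl⟩⟩
  · exfalso
    have := rest_ub hr
    have h3 : (2:ℕ)^(m+2) = 2*2^(m+1) := by rw [pow_succ]; ring
    omega


lemma mul33 {mA bA mB bB P N : ℕ} (h1A : 1 ≤ bA) (h2A : bA+1 ≤ mA)
    (h1B : 1 ≤ bB) (h2B : bB+1 ≤ mB) (hP : P = (mA+1)+(mB+1))
    (hN : N = (2^mA+2^bA) * (2^mB+2^bB)) : Forms P N := by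
  have hexp : N = 2^(mA+mB) + 2^(mA+bB) + 2^(mB+bA) + 2^(bA+bB) := by
    rw [hN]; simp [pow_add]; ring
  rcases lt_trichotomy (mB+bA) (mA+bB) with hlt | heq | hgt
  · refine Or.inr <| Or.inr <| Or.inr ⟨mA+mB, by omega, Or.inr <| Or.inr <| Or.inl
      ⟨mA+bB, mB+bA, bA+bB, by omega, by omega, by omega, by omega, by omega, by omega⟩⟩
  · have e0 : (2:ℕ)^(mA+bB) = 2^(mB+bA) := by rw [heq]
    have e1 := tpo (mB+bA) 1
    norm_num at e1
    rcases eq_or_lt_of_le (show (mB+bA)+1 ≤ mA+mB by omega) with heq2 | hlt2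
    · refine Or.inr <| Or.inr <| Or.inl ⟨mA+mB+1, bA+bB, by omega, by omega, by omega, ?_⟩
      have e2 := tpo (mA+mB) 1
      have e3 : (2:ℕ)^(mB+bA+1) = 2^(mA+mB) := by rw [heq2]
      norm_num at e2
      omega
    · refine Or.inr <| Or.inr <| Or.inr ⟨mA+mB, by omega, Or.inr <| Or.inl
        ⟨mB+bA+1, bA+bB, by omega, by omega, by omega, by omega⟩⟩
  · refine Or.inr <| Or.inr <| Or.inr ⟨mA+mB, by omega, Or.inr <| Or.inr <| Or.inl
      ⟨mB+bA, mA+bB, bA+bB, by omega, by omega, by omega, by omega, by omega, by omega⟩⟩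

lemma mul34 {mA bA mB bB P N : ℕ} (h1A : 1 ≤ bA) (h2A : bA+1 ≤ mA)
    (h1B : 1 ≤ bB) (h2B : bB+1 ≤ mB) (hP : P = (mA+1)+(mB+2))
    (hN : N = (2^mA+2^bA) * (2^mB+2^bB)) (hsz : 2^(mA+mB+1) < N) : Forms P N := by
  rcases eq_or_lt_of_le h2A with heA | hltA
  · -- bA+1 = mA
    obtain rfl : mA = bA+1 := heA.symm
    rcases eq_or_lt_of_le h2B with heB | hltB
    · -- bB+1 = mB : N = 9 * 2^(bA+bB)
      obtain rfl : mB = bB+1 := heB.symm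
      refine Or.inr <| Or.inr <| Or.inr ⟨bA+1+(bB+1)+1, by omega, Or.inl
        ⟨bA+bB, by omega, by omega, ?_⟩⟩
      rw [hN]; simp [pow_add]; ring
    · -- bB+2 ≤ mB : excluded
      exfalso
      obtain ⟨w, rfl⟩ : ∃ w, mB = bB+2+w := ⟨mB-(bB+2), by omega⟩
      have e1 : N = (3*(4*2^w+1)) * (2^bA*2^bB) := by rw [hN]; simp [pow_add]; ring
      have e2 : (2:ℕ)^(bA+1+(bB+2+w)+1) = (16*2^w)*(2^bA*2^bB) := by
        simp [pow_add]; ring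
      have key : (3*(4*2^w+1)) ≤ 16*2^w := by
        have := @one_le_tp w; omega
      have := Nat.mul_le_mul_right (2^bA*2^bB) key
      omega
  · -- bA+2 ≤ mA : excluded
    exfalso
    obtain ⟨u, rfl⟩ : ∃ u, mA = bA+2+u := ⟨mA-(bA+2), by omega⟩
    obtain ⟨v, rfl⟩ : ∃ v, mB = bB+1+v := ⟨mB-(bB+1), by omega⟩
    have e1 : N = ((4*2^u+1)*(2*2^v+1)) * (2^bA*2^bB) := by rw [hN]; simp [pow_add]; ring
    have e2 : (2:ℕ)^(bA+2+u+(bB+1+v)+1) = (16*(2^u*2^v))*(2^bA*2^bB) := by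
      simp [pow_add]; ring
    have key : ((4*2^u+1)*(2*2^v+1)) ≤ 16*(2^u*2^v) := by
      have hu := @one_le_tp u; have hv := @one_le_tp v; nlinarith
    have := Nat.mul_le_mul_right (2^bA*2^bB) key
    omega

lemma mul35 {mA bA mB cB dB P N : ℕ} (h1A : 1 ≤ bA) (h2A : bA+1 ≤ mA)
    (h1B : 1 ≤ dB) (h2B : dB+1 ≤ cB) (h3B : cB+1 ≤ mB) (hP : P = (mA+1)+(mB+2))
    (hN : N = (2^mA+2^bA) * (2^mB+2^cB+2^dB)) (hsz : 2^(mA+mB+1) < N) : Forms P N := by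
  rcases eq_or_lt_of_le h2A with heA | hltA
  · obtain rfl : mA = bA+1 := heA.symm
    rcases eq_or_lt_of_le h3B with heB | hltB
    · -- cB+1 = mB
      obtain rfl : mB = cB+1 := heB.symm
      rcases eq_or_lt_of_le h2B with heC | hltC
      · -- dB+1 = cB : N = 21 * 2^(bA+dB)
        obtain rfl : cB = dB+1 := heC.symm
        refine Or.inr <| Or.inr <| Or.inr ⟨bA+dB+4, by omega, Or.inr <| Or.inl
          ⟨bA+dB+2, bA+dB, by omega, by omega, by omega, ?_⟩⟩
        rw [hN]; simp [pow_add]; ring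
      · -- dB+2 ≤ cB : F7 shape
        obtain ⟨t, rfl⟩ : ∃ t, cB = dB+2+t := ⟨cB-(dB+2), by omega⟩
        refine Or.inr <| Or.inr <| Or.inr ⟨bA+dB+t+5, by omega, Or.inr <| Or.inr <|
          Or.inr <| Or.inl ⟨bA+dB, t+2, by omega, by omega, by omega, ?_⟩⟩
        rw [hN]; simp [pow_add]; ring
    · rcases eq_or_lt_of_le (Nat.succ_le_of_lt hltB) with heB2 | hltB2
      · -- cB+2 = mB
        obtain rfl : mB = cB+2 := heB2.symm
        rcases eq_or_lt_of_le h2B with heC | hltC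
        · -- dB+1 = cB : N = 33 * 2^(bA+dB)
          obtain rfl : cB = dB+1 := heC.symm
          refine Or.inr <| Or.inr <| Or.inr ⟨bA+dB+5, by omega, Or.inl
            ⟨bA+dB, by omega, by omega, ?_⟩⟩
          rw [hN]; simp [pow_add]; ring
        · -- dB+2 ≤ cB : excluded
          exfalso
          obtain ⟨w, rfl⟩ : ∃ w, cB = dB+2+w := ⟨cB-(dB+2), by omega⟩
          have e1 : N = (3*(20*2^w+1)) * (2^bA*2^dB) := by rw [hN]; simp [pow_add]; ring
          have e2 : (2:ℕ)^(bA+1+(dB+2+w+2)+1) = (64*2^w)*(2^bA*2^dB) := by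
            simp [pow_add]; ring
          have key : (3*(20*2^w+1)) ≤ 64*2^w := by have := @one_le_tp w; omega
          have := Nat.mul_le_mul_right (2^bA*2^dB) key
          omega
      · -- cB+3 ≤ mB : excluded
        exfalso
        obtain ⟨v, rfl⟩ : ∃ v, mB = cB+3+v := ⟨mB-(cB+3), by omega⟩
        obtain ⟨x, rfl⟩ : ∃ x, cB = dB+1+x := ⟨cB-(dB+1), by omega⟩
        have e1 : N = (3*(16*(2^x*2^v)+2*2^x+1)) * (2^bA*2^dB) := by
          rw [hN]; simp [pow_add]; ring
        have e2 : (2:ℕ)^(bA+1+(dB+1+x+3+v)+1) = (64*(2^x*2^v))*(2^bA*2^dB) := by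
          simp [pow_add]; ring
        have key : (3*(16*(2^x*2^v)+2*2^x+1)) ≤ 64*(2^x*2^v) := by
          have hx := @one_le_tp x; have hv := @one_le_tp v
          have hxv : 1 ≤ 2^x*2^v := by nlinarith
          nlinarith
        have := Nat.mul_le_mul_right (2^bA*2^dB) key
        omega
  · rcases eq_or_lt_of_le (Nat.succ_le_of_lt hltA) with heA2 | hltA2
    · -- bA+2 = mA
      obtain rfl : mA = bA+2 := heA2.symm
      rcases eq_or_lt_of_le h3B with heB | hltB
      · -- cB+1 = mB
        obtain rfl : mB = cB+1 := heB.symm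
        rcases eq_or_lt_of_le h2B with heC | hltC
        · -- dB+1 = cB : N = 35 * 2^(bA+dB)
          obtain rfl : cB = dB+1 := heC.symm
          refine Or.inr <| Or.inr <| Or.inr ⟨bA+dB+5, by omega, Or.inr <| Or.inl
            ⟨bA+dB+1, bA+dB, by omega, by omega, by omega, ?_⟩⟩
          rw [hN]; simp [pow_add]; ring
        · rcases eq_or_lt_of_le (Nat.succ_le_of_lt hltC) with heC2 | hltC2
          · -- dB+2 = cB : N = 65 * 2^(bA+dB)
            obtain rfl : cB = dB+2 := heC2.symm
            refine Or.inr <| Or.inr <| Or.inr ⟨bA+dB+6, by omega, Or.inl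
              ⟨bA+dB, by omega, by omega, ?_⟩⟩
            rw [hN]; simp [pow_add]; ring
          · -- dB+3 ≤ cB : excluded
            exfalso
            obtain ⟨w, rfl⟩ : ∃ w, cB = dB+3+w := ⟨cB-(dB+3), by omega⟩
            have e1 : N = (5*(24*2^w+1)) * (2^bA*2^dB) := by rw [hN]; simp [pow_add]; ring
            have e2 : (2:ℕ)^(bA+2+(dB+3+w+1)+1) = (128*2^w)*(2^bA*2^dB) := by
              simp [pow_add]; ring
            have key : (5*(24*2^w+1)) ≤ 128*2^w := by have := @one_le_tp w; omega
            have := Nat.mul_le_mul_right (2^bA*2^dB) key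
            omega
      · -- cB+2 ≤ mB : excluded
        exfalso
        obtain ⟨v, rfl⟩ : ∃ v, mB = cB+2+v := ⟨mB-(cB+2), by omega⟩
        obtain ⟨x, rfl⟩ : ∃ x, cB = dB+1+x := ⟨cB-(dB+1), by omega⟩
        have e1 : N = (5*(8*(2^x*2^v)+2*2^x+1)) * (2^bA*2^dB) := by
          rw [hN]; simp [pow_add]; ring
        have e2 : (2:ℕ)^(bA+2+(dB+1+x+2+v)+1) = (64*(2^x*2^v))*(2^bA*2^dB) := by
          simp [pow_add]; ring
        have key : (5*(8*(2^x*2^v)+2*2^x+1)) ≤ 64*(2^x*2^v) := by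
          have hx := @one_le_tp x; have hv := @one_le_tp v
          nlinarith
        have := Nat.mul_le_mul_right (2^bA*2^dB) key
        omega
    · -- bA+3 ≤ mA : excluded
      exfalso
      obtain ⟨u, rfl⟩ : ∃ u, mA = bA+3+u := ⟨mA-(bA+3), by omega⟩
      obtain ⟨v, rfl⟩ : ∃ v, mB = cB+1+v := ⟨mB-(cB+1), by omega⟩
      obtain ⟨x, rfl⟩ : ∃ x, cB = dB+1+x := ⟨cB-(dB+1), by omega⟩
      have e1 : N = ((8*2^u+1)*(4*(2^x*2^v)+2*2^x+1)) * (2^bA*2^dB) := by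
        rw [hN]; simp [pow_add]; ring
      have e2 : (2:ℕ)^(bA+3+u+(dB+1+x+1+v)+1) = (64*(2^u*(2^x*2^v)))*(2^bA*2^dB) := by
        simp [pow_add]; ring
      have key : ((8*2^u+1)*(4*(2^x*2^v)+2*2^x+1)) ≤ 64*(2^u*(2^x*2^v)) := by
        have hx := @one_le_tp x; have hv := @one_le_tp v; have hu := @one_le_tp u
        nlinarith [Nat.mul_le_mul hx hv, Nat.mul_le_mul hu hx,
          Nat.mul_le_mul hu (Nat.mul_le_mul hx hv)]
      have := Nat.mul_le_mul_right (2^bA*2^dB) key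
      omega

set_option maxHeartbeats 1000000 in
lemma mul36 {mA bA mB cB dB eB P N : ℕ} (h1A : 1 ≤ bA) (h2A : bA+1 ≤ mA)
    (h1B : 2 ≤ eB) (h2B : eB+1 ≤ dB) (h3B : dB+1 ≤ cB) (h4B : cB+1 ≤ mB)
    (hrel : mB + eB = cB + dB) (hP : P = (mA+1)+(mB+2))
    (hN : N = (2^mA+2^bA) * (2^mB+2^cB+2^dB+2^eB)) (hsz : 2^(mA+mB+1) < N) :
    Forms P N := by
  rcases (show bA+1 = mA ∨ bA+2 = mA ∨ bA+3 = mA ∨ bA+4 ≤ mA by omega) with hA | hA | hA | hA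
  · obtain rfl : mA = bA+1 := hA.symm
    rcases eq_or_lt_of_le h4B with heB | hltB
    · -- cB+1 = mB, so dB = eB+1
      obtain rfl : mB = cB+1 := heB.symm
      obtain rfl : dB = eB+1 := by omega
      rcases (show eB+2 = cB ∨ eB+3 = cB ∨ eB+4 ≤ cB by omega) with hc | hc | hc
      · -- N = 45 * 2^(bA+eB)
        obtain rfl : cB = eB+2 := hc.symm
        refine Or.inr <| Or.inr <| Or.inr ⟨bA+eB+5, by omega, Or.inr <| Or.inr <| Or.inl
          ⟨bA+eB+3, bA+eB+2, bA+eB, by omega, by omega, by omega, by omega, by omega, ?_⟩⟩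
        rw [hN]; simp [pow_add, pow_mul]; ring
      · -- N = 81 * 2^(bA+eB)
        obtain rfl : cB = eB+3 := hc.symm
        refine Or.inr <| Or.inr <| Or.inr ⟨bA+eB+6, by omega, Or.inr <| Or.inl
          ⟨bA+eB+4, bA+eB, by omega, by omega, by omega, ?_⟩⟩
        rw [hN]; simp [pow_add, pow_mul]; ring
      · -- generic: form (b)
        obtain ⟨t, rfl⟩ : ∃ t, cB = eB+4+t := ⟨cB-(eB+4), by omega⟩
        refine Or.inr <| Or.inr <| Or.inr ⟨bA+eB+t+7, by omega, Or.inr <| Or.inr <| Or.inl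
          ⟨bA+eB+t+4, bA+eB+3, bA+eB, by omega, by omega, by omega, by omega, by omega, ?_⟩⟩
        rw [hN]; simp [pow_add, pow_mul]; ring
    · rcases eq_or_lt_of_le (Nat.succ_le_of_lt hltB) with heB2 | hltB2
      · -- cB+2 = mB, so dB = eB+2
        obtain rfl : mB = cB+2 := heB2.symm
        obtain rfl : dB = eB+2 := by omega
        rcases (show eB+3 = cB ∨ eB+4 ≤ cB by omega) with hc | hc
        · -- N = 135 * 2^(bA+eB)
          obtain rfl : cB = eB+3 := hc.symm
          refine Or.inr <| Or.inr <| Or.inr ⟨bA+eB+7, by omega, Or.inr <| Or.inr <|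
            Or.inr <| Or.inr ⟨bA+eB, by omega, by omega, ?_⟩⟩
          rw [hN]; simp [pow_add, pow_mul]; ring
        · -- excluded
          exfalso
          obtain ⟨w, hw⟩ : ∃ w, cB = eB+4+w := ⟨cB-(eB+4), by omega⟩
          have e1 : N = (3*(80*2^w+5)) * (2^bA*2^eB) := by
            rw [hN, hw]; simp [pow_add, pow_mul]; ring
          have e2 : (2:ℕ)^(bA+1+(cB+2)+1) = (256*2^w)*(2^bA*2^eB) := by
            rw [hw]; simp [pow_add, pow_mul]; ring
          have key : (3*(80*2^w+5)) ≤ 256*2^w := by have := @one_le_tp w; omega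
          have := Nat.mul_le_mul_right (2^bA*2^eB) key
          omega
      · -- cB+3 ≤ mB : excluded
        exfalso
        obtain ⟨v, hv⟩ : ∃ v, mB = cB+3+v := ⟨mB-(cB+3), by omega⟩
        obtain ⟨x, hx⟩ : ∃ x, cB = dB+1+x := ⟨cB-(dB+1), by omega⟩
        obtain ⟨y, hy⟩ : ∃ y, dB = eB+3+y := ⟨dB-(eB+3), by omega⟩
        have hvy : v = y := by omega
        subst hvy
        have e1 : N = (3*(128*(2^v*2^v*2^x)+16*(2^v*2^x)+8*2^v+1)) * (2^bA*2^eB) := by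
          rw [hN, hv, hx, hy]; simp [pow_add, pow_mul]; ring
        have e2 : (2:ℕ)^(bA+1+mB+1) = (512*(2^v*2^v*2^x))*(2^bA*2^eB) := by
          rw [hv, hx, hy]; simp [pow_add, pow_mul]; ring
        have key : (3*(128*(2^v*2^v*2^x)+16*(2^v*2^x)+8*2^v+1))
            ≤ 512*(2^v*2^v*2^x) := by
          have hx1 := @one_le_tp x; have hv1 := @one_le_tp v
          have p1 : 2^v*2^x ≤ 2^v*2^v*2^x := by
            calc 2^v*2^x ≤ 2^v*(2^v*2^x) := mono_mul one_le_tp _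
              _ = 2^v*2^v*2^x := by ring
          have p2 : 2^v ≤ 2^v*2^v*2^x := by
            calc 2^v ≤ (2^v*2^x)*2^v := mono_mul (by nlinarith) _
              _ = 2^v*2^v*2^x := by ring
          have p3 : 1 ≤ 2^v*2^v*2^x := by nlinarith
          omega
        have := Nat.mul_le_mul_right (2^bA*2^eB) key
        omega
  · -- bA+2 = mA
    obtain rfl : mA = bA+2 := hA.symm
    rcases eq_or_lt_of_le h4B with heB | hltB
    · -- cB+1 = mB, dB = eB+1
      obtain rfl : mB = cB+1 := heB.symm
      obtain rfl : dB = eB+1 := by omega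
      rcases (show eB+2 = cB ∨ eB+3 = cB ∨ eB+4 ≤ cB by omega) with hc | hc | hc
      · -- N = 75 * 2^(bA+eB) : form (c)
        obtain rfl : cB = eB+2 := hc.symm
        refine Or.inr <| Or.inr <| Or.inr ⟨bA+eB+6, by omega, Or.inr <| Or.inr <|
          Or.inr <| Or.inl ⟨bA+eB, 3, by omega, by omega, by omega, ?_⟩⟩
        rw [hN]; simp [pow_add, pow_mul]; ring
      · -- N = 135 * 2^(bA+eB)
        obtain rfl : cB = eB+3 := hc.symm
        refine Or.inr <| Or.inr <| Or.inr ⟨bA+eB+7, by omega, Or.inr <| Or.inr <|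
          Or.inr <| Or.inr ⟨bA+eB, by omega, by omega, ?_⟩⟩
        rw [hN]; simp [pow_add, pow_mul]; ring
      · -- excluded
        exfalso
        obtain ⟨w, hw⟩ : ∃ w, cB = eB+4+w := ⟨cB-(eB+4), by omega⟩
        have e1 : N = (5*(48*2^w+3)) * (2^bA*2^eB) := by
          rw [hN, hw]; simp [pow_add, pow_mul]; ring
        have e2 : (2:ℕ)^(bA+2+(cB+1)+1) = (256*2^w)*(2^bA*2^eB) := by
          rw [hw]; simp [pow_add, pow_mul]; ring
        have key : (5*(48*2^w+3)) ≤ 256*2^w := by have := @one_le_tp w; omega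
        have := Nat.mul_le_mul_right (2^bA*2^eB) key
        omega
    · -- cB+2 ≤ mB : excluded
      exfalso
      obtain ⟨v, hv⟩ : ∃ v, mB = cB+2+v := ⟨mB-(cB+2), by omega⟩
      obtain ⟨x, hx⟩ : ∃ x, cB = dB+1+x := ⟨cB-(dB+1), by omega⟩
      obtain ⟨y, hy⟩ : ∃ y, dB = eB+2+y := ⟨dB-(eB+2), by omega⟩
      have hvy : v = y := by omega
      subst hvy
      have e1 : N = (5*(32*(2^v*2^v*2^x)+8*(2^v*2^x)+4*2^v+1)) * (2^bA*2^eB) := by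
        rw [hN, hv, hx, hy]; simp [pow_add, pow_mul]; ring
      have e2 : (2:ℕ)^(bA+2+mB+1) = (256*(2^v*2^v*2^x))*(2^bA*2^eB) := by
        rw [hv, hx, hy]; simp [pow_add, pow_mul]; ring
      have key : (5*(32*(2^v*2^v*2^x)+8*(2^v*2^x)+4*2^v+1)) ≤ 256*(2^v*2^v*2^x) := by
        have hx1 := @one_le_tp x; have hv1 := @one_le_tp v
        have p1 : 2^v*2^x ≤ 2^v*2^v*2^x := by
          calc 2^v*2^x ≤ 2^v*(2^v*2^x) := mono_mul one_le_tp _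
            _ = 2^v*2^v*2^x := by ring
        have p2 : 2^v ≤ 2^v*2^v*2^x := by
          calc 2^v ≤ (2^v*2^x)*2^v := mono_mul (by nlinarith) _
            _ = 2^v*2^v*2^x := by ring
        have p3 : 1 ≤ 2^v*2^v*2^x := by nlinarith
        omega
      have := Nat.mul_le_mul_right (2^bA*2^eB) key
      omega
  · -- bA+3 = mA
    obtain rfl : mA = bA+3 := hA.symm
    rcases eq_or_lt_of_le h4B with heB | hltB
    · -- cB+1 = mB, dB = eB+1
      obtain rfl : mB = cB+1 := heB.symm
      obtain rfl : dB = eB+1 := by omega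
      rcases (show eB+2 = cB ∨ eB+3 ≤ cB by omega) with hc | hc
      · -- N = 135 * 2^(bA+eB)
        obtain rfl : cB = eB+2 := hc.symm
        refine Or.inr <| Or.inr <| Or.inr ⟨bA+eB+7, by omega, Or.inr <| Or.inr <|
          Or.inr <| Or.inr ⟨bA+eB, by omega, by omega, ?_⟩⟩
        rw [hN]; simp [pow_add, pow_mul]; ring
      · -- excluded
        exfalso
        obtain ⟨w, hw⟩ : ∃ w, cB = eB+3+w := ⟨cB-(eB+3), by omega⟩
        have e1 : N = (9*(24*2^w+3)) * (2^bA*2^eB) := by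
          rw [hN, hw]; simp [pow_add, pow_mul]; ring
        have e2 : (2:ℕ)^(bA+3+(cB+1)+1) = (256*2^w)*(2^bA*2^eB) := by
          rw [hw]; simp [pow_add, pow_mul]; ring
        have key : (9*(24*2^w+3)) ≤ 256*2^w := by
          have hw1 := @one_le_tp w; omega
        have := Nat.mul_le_mul_right (2^bA*2^eB) key
        omega
    · -- cB+2 ≤ mB : excluded
      exfalso
      obtain ⟨v, hv⟩ : ∃ v, mB = cB+2+v := ⟨mB-(cB+2), by omega⟩
      obtain ⟨x, hx⟩ : ∃ x, cB = dB+1+x := ⟨cB-(dB+1), by omega⟩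
      obtain ⟨y, hy⟩ : ∃ y, dB = eB+2+y := ⟨dB-(eB+2), by omega⟩
      have hvy : v = y := by omega
      subst hvy
      have e1 : N = (9*(32*(2^v*2^v*2^x)+8*(2^v*2^x)+4*2^v+1)) * (2^bA*2^eB) := by
        rw [hN, hv, hx, hy]; simp [pow_add, pow_mul]; ring
      have e2 : (2:ℕ)^(bA+3+mB+1) = (512*(2^v*2^v*2^x))*(2^bA*2^eB) := by
        rw [hv, hx, hy]; simp [pow_add, pow_mul]; ring
      have key : (9*(32*(2^v*2^v*2^x)+8*(2^v*2^x)+4*2^v+1)) ≤ 512*(2^v*2^v*2^x) := by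
        have hx1 := @one_le_tp x; have hv1 := @one_le_tp v
        have p1 : 2^v*2^x ≤ 2^v*2^v*2^x := by
          calc 2^v*2^x ≤ 2^v*(2^v*2^x) := mono_mul one_le_tp _
            _ = 2^v*2^v*2^x := by ring
        have p2 : 2^v ≤ 2^v*2^v*2^x := by
          calc 2^v ≤ (2^v*2^x)*2^v := mono_mul (by nlinarith) _
            _ = 2^v*2^v*2^x := by ring
        have p3 : 1 ≤ 2^v*2^v*2^x := by nlinarith
        omega
      have := Nat.mul_le_mul_right (2^bA*2^eB) key
      omega
  · -- bA+4 ≤ mA : excluded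
    exfalso
    obtain ⟨u, hu⟩ : ∃ u, mA = bA+4+u := ⟨mA-(bA+4), by omega⟩
    obtain ⟨v, hv⟩ : ∃ v, mB = cB+1+v := ⟨mB-(cB+1), by omega⟩
    obtain ⟨x, hx⟩ : ∃ x, cB = dB+1+x := ⟨cB-(dB+1), by omega⟩
    obtain ⟨y, hy⟩ : ∃ y, dB = eB+1+y := ⟨dB-(eB+1), by omega⟩
    have hvy : v = y := by omega
    subst hvy
    have e1 : N = ((16*2^u+1)*(8*(2^v*2^v*2^x)+4*(2^v*2^x)+2*2^v+1)) * (2^bA*2^eB) := by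
      rw [hN, hu, hv, hx, hy]; simp [pow_add, pow_mul]; ring
    have e2 : (2:ℕ)^(mA+mB+1) = (256*(2^u*(2^v*2^v*2^x)))*(2^bA*2^eB) := by
      rw [hu, hv, hx, hy]; simp [pow_add, pow_mul]; ring
    have key : ((16*2^u+1)*(8*(2^v*2^v*2^x)+4*(2^v*2^x)+2*2^v+1))
        ≤ 256*(2^u*(2^v*2^v*2^x)) := by
      have hx1 := @one_le_tp x; have hv1 := @one_le_tp v; have hu1 := @one_le_tp u
      have q0 : 1 ≤ 2^v*2^v*2^x := by nlinarith
      have p1 : 2^u*(2^v*2^x) ≤ 2^u*(2^v*2^v*2^x) := by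
        have : 2^v*2^x ≤ 2^v*2^v*2^x := by
          calc 2^v*2^x ≤ 2^v*(2^v*2^x) := mono_mul one_le_tp _
            _ = 2^v*2^v*2^x := by ring
        exact Nat.mul_le_mul_left _ this
      have p2 : 2^u*2^v ≤ 2^u*(2^v*2^v*2^x) := by
        have : 2^v ≤ 2^v*2^v*2^x := by
          calc 2^v ≤ (2^v*2^x)*2^v := mono_mul (by nlinarith) _
            _ = 2^v*2^v*2^x := by ring
        exact Nat.mul_le_mul_left _ this
      have p3 : 2^u ≤ 2^u*(2^v*2^v*2^x) := by
        calc 2^u ≤ (2^v*2^v*2^x)*2^u := mono_mul q0 _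
          _ = 2^u*(2^v*2^v*2^x) := by ring
      have p4 : 2^v*2^v*2^x ≤ 2^u*(2^v*2^v*2^x) := mono_mul hu1 _
      have p5 : 2^v*2^x ≤ 2^u*(2^v*2^v*2^x) := le_trans (by
          calc 2^v*2^x ≤ 2^v*(2^v*2^x) := mono_mul one_le_tp _
            _ = 2^v*2^v*2^x := by ring) p4
      have p6 : 2^v ≤ 2^u*(2^v*2^v*2^x) := le_trans (by
          calc 2^v ≤ (2^v*2^x)*2^v := mono_mul (by nlinarith) _
            _ = 2^v*2^v*2^x := by ring) p4
      have p7 : 1 ≤ 2^u*(2^v*2^v*2^x) := le_trans q0 p4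
      have expand : (16*2^u+1)*(8*(2^v*2^v*2^x)+4*(2^v*2^x)+2*2^v+1)
          = 128*(2^u*(2^v*2^v*2^x))+64*(2^u*(2^v*2^x))+32*(2^u*2^v)+16*2^u
            +8*(2^v*2^v*2^x)+4*(2^v*2^x)+2*2^v+1 := by ring
      rw [expand]
      linarith [p1, p2, p3, p4, p5, p6, p7]
    have := Nat.mul_le_mul_right (2^bA*2^eB) key
    omega

lemma excl37 {mA bA e s N : ℕ} (h1A : 1 ≤ bA) (h2A : bA+1 ≤ mA) (h1 : 1 ≤ s)
    (hN : N = (2^mA+2^bA) * (2^(e+s+3)+2^(e+s)+2^(e+1)+2^e))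
    (hsz : 2^(mA+(e+s+3)+1) < N) : False := by
  obtain ⟨u, hu⟩ : ∃ u, mA = bA+1+u := ⟨mA-(bA+1), by omega⟩
  obtain ⟨t, ht⟩ : ∃ t, s = 1+t := ⟨s-1, by omega⟩
  have e1 : N = ((2*2^u+1)*(18*2^t+3))*(2^bA*2^e) := by
    rw [hN, hu, ht]; simp [pow_add, pow_mul]; ring
  have e2 : (2:ℕ)^(mA+(e+s+3)+1) = (64*(2^u*2^t))*(2^bA*2^e) := by
    rw [hu, ht]; simp [pow_add, pow_mul]; ring
  have hu1 := @one_le_tp u; have ht1 := @one_le_tp t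
  have p1 : 2^u ≤ 2^u*2^t := by
    calc 2^u ≤ 2^t*2^u := mono_mul ht1 _
      _ = 2^u*2^t := by ring
  have p2 : 2^t ≤ 2^u*2^t := mono_mul hu1 _
  have p3 : 1 ≤ 2^u*2^t := le_trans ht1 p2
  have key : ((2*2^u+1)*(18*2^t+3)) ≤ 64*(2^u*2^t) := by
    have expand : (2*2^u+1)*(18*2^t+3) = 36*(2^u*2^t)+6*2^u+18*2^t+3 := by ring
    rw [expand]; linarith
  have := Nat.mul_le_mul_right (2^bA*2^e) key
  omega

lemma excl38 {mA bA e N : ℕ} (h1A : 1 ≤ bA) (h2A : bA+1 ≤ mA)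
    (hN : N = (2^mA+2^bA) * (2^(e+7)+2^(e+2)+2^(e+1)+2^e))
    (hsz : 2^(mA+(e+7)+1) < N) : False := by
  obtain ⟨u, hu⟩ : ∃ u, mA = bA+1+u := ⟨mA-(bA+1), by omega⟩
  have e1 : N = ((2*2^u+1)*135)*(2^bA*2^e) := by
    rw [hN, hu]; simp [pow_add, pow_mul]; ring
  have e2 : (2:ℕ)^(mA+(e+7)+1) = (512*2^u)*(2^bA*2^e) := by
    rw [hu]; simp [pow_add, pow_mul]; ring
  have hu1 := @one_le_tp u
  have key : ((2*2^u+1)*135) ≤ 512*2^u := by omega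
  have := Nat.mul_le_mul_right (2^bA*2^e) key
  omega

lemma add_helper {q r a b m : ℕ}
    (hba : 2 ≤ a ∧ 2 ∣ a ∧ 2*q ≤ a ∧ a ≤ 2^q)
    (hbb : 2 ≤ b ∧ 2 ∣ b ∧ 2*r ≤ b ∧ b ≤ 2^r)
    (hq1 : 1 ≤ q) (hr1 : 1 ≤ r)
    (hFa : ∀ m', q = m'+2 → 2^m' < a → Forms q a)
    (hrq : r ≤ q) (hm : q + r = m+2) (hsz : 2^m < a + b) : Forms (q+r) (a+b) := by
  obtain ⟨ha2, haev, haq, haP⟩ := hba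
  obtain ⟨hb2, hbev, hbr, hbP⟩ := hbb
  have hr2 : r ≤ 2 := by
    by_contra hcon
    have h1 : (2:ℕ)^r ≤ 2^q := tp_le hrq
    have h2 : (2:ℕ)^(q+1) ≤ 2^m := tp_le (by omega)
    have h3 : (2:ℕ)^(q+1) = 2^q + 2^q := by rw [pow_succ]; ring
    omega
  rcases (show r = 1 ∨ r = 2 by omega) with rfl | rfl
  · -- r = 1, b = 2
    obtain rfl : b = 2 := by norm_num at hbP; omega
    rcases (show q = 1 ∨ q = 2 ∨ 3 ≤ q by omega) with rfl | rfl | hq3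
    · exact Or.inl (by norm_num at haP ⊢; omega)
    · obtain rfl : a = 4 := by norm_num at haP; omega
      exact Or.inr <| Or.inr <| Or.inl ⟨2, 1, by norm_num, by norm_num, by norm_num,
        by norm_num⟩
    · obtain ⟨m', rfl⟩ : ∃ m', q = m'+2 := ⟨q-2, by omega⟩
      have hm'1 : 1 ≤ m' := by omega
      have hq2 : (2:ℕ)^(m'+1) = 2*2^m' := by rw [pow_succ]; ring
      have hmeq : m = m'+1 := by omega
      subst hmeq
      have hage : 2^(m'+1) ≤ a := by
        obtain ⟨k, rfl⟩ := haev
        have := @one_le_tp m'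
        omega
      have hFa' : Forms (m'+2) a := by
        apply hFa m' rfl
        have := @one_le_tp m'
        omega
      rcases hFa' with haE | ⟨mA, hqA, haE⟩ | ⟨mA, bA, hqA, h1A, h2A, haE⟩ | ⟨mA, hqA, hra⟩
      · refine Or.inr <| Or.inr <| Or.inl ⟨m'+2, 1, by omega, by omega, by omega, ?_⟩
        rw [haE]; norm_num
      · obtain rfl : mA = m'+1 := by omega
        refine Or.inr <| Or.inr <| Or.inr ⟨m'+1, by omega, Or.inl
          ⟨1, by omega, by omega, by rw [haE]; norm_num⟩⟩
      · obtain rfl : mA = m'+1 := by omega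
        rcases (show 2 ≤ bA ∨ bA = 1 by omega) with hbA2 | rfl
        · exact Or.inr <| Or.inr <| Or.inr ⟨m'+1, by omega, Or.inr <| Or.inl
            ⟨bA, 1, by omega, by omega, by omega, by rw [haE]; norm_num⟩⟩
        · rcases (show m' = 1 ∨ 2 ≤ m' by omega) with rfl | hm'2
          · exact Or.inr <| Or.inl ⟨3, by omega, by rw [haE]; norm_num⟩
          · exact Or.inr <| Or.inr <| Or.inr ⟨m'+1, by omega, Or.inl
              ⟨2, by omega, by omega, by rw [haE]; norm_num⟩⟩
      · exfalso
        obtain rfl : mA = m' := by omega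
        have := rest_ub hra
        omega
  · -- r = 2, b = 4
    obtain rfl : b = 4 := by norm_num at hbP; omega
    rcases (show q = 2 ∨ 3 ≤ q by omega) with rfl | hq3
    · obtain rfl : a = 4 := by norm_num at haP; omega
      exact Or.inr <| Or.inl ⟨3, by omega, by norm_num⟩
    · obtain ⟨m', rfl⟩ : ∃ m', q = m'+2 := ⟨q-2, by omega⟩
      have hm'1 : 1 ≤ m' := by omega
      have hq2 : (2:ℕ)^(m'+1) = 2*2^m' := by rw [pow_succ]; ring
      have hq4 : (2:ℕ)^(m'+2) = 4*2^m' := by rw [pow_add]; ring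
      have hE := @one_le_tp m'
      have hmeq : m = m'+2 := by omega
      subst hmeq
      have hFa' : Forms (m'+2) a := hFa m' rfl (by omega)
      rcases hFa' with haE | ⟨mA, hqA, haE⟩ | ⟨mA, bA, hqA, h1A, h2A, haE⟩ | ⟨mA, hqA, hra⟩
      · refine Or.inr <| Or.inr <| Or.inr ⟨m'+2, by omega, Or.inl
          ⟨2, by omega, by omega, by rw [haE]; norm_num⟩⟩
      · exfalso
        obtain rfl : mA = m'+1 := by omega
        rw [haE] at hsz
        omega
      · obtain rfl : mA = m'+1 := by omega
        have hbA : (2:ℕ)^bA ≤ 2^m' := tp_le (by omega)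
        rw [haE] at hsz
        have hm'eq : m' = 1 := by omega
        subst hm'eq
        obtain rfl : bA = 1 := by omega
        refine Or.inr <| Or.inr <| Or.inr ⟨3, by omega, Or.inl
          ⟨1, by omega, by omega, by rw [haE]; norm_num⟩⟩
      · exfalso
        obtain rfl : mA = m' := by omega
        have := rest_ub hra
        omega

lemma mul_helper {q r a b m : ℕ}
    (hba : 2 ≤ a ∧ 2 ∣ a ∧ 2*q ≤ a ∧ a ≤ 2^q)
    (hbb : 2 ≤ b ∧ 2 ∣ b ∧ 2*r ≤ b ∧ b ≤ 2^r)
    (hq1 : 1 ≤ q) (hr1 : 1 ≤ r)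
    (hFa : ∀ m', q = m'+2 → 2^m' < a → Forms q a)
    (hFb : ∀ m', r = m'+2 → 2^m' < b → Forms r b)
    (hm : q + r = m+2) (hsz : 2^m < a * b) : Forms (q+r) (a*b) := by
  obtain ⟨ha2, haev, haq, haP⟩ := hba
  obtain ⟨hb2, hbev, hbr, hbP⟩ := hbb
  have hFa' : Forms q a := by
    rcases (show q = 1 ∨ q = 2 ∨ 3 ≤ q by omega) with rfl | rfl | hq3
    · exact Or.inl (by norm_num at haP ⊢; omega)
    · exact Or.inl (by norm_num at haP ⊢; omega)
    · obtain ⟨m', rfl⟩ : ∃ m', q = m'+2 := ⟨q-2, by omega⟩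
      apply hFa m' rfl
      have h1 : a*b ≤ a*2^r := Nat.mul_le_mul_left a hbP
      have h2 : (2:ℕ)^m = 2^m'*2^r := by rw [← pow_add]; congr 1; omega
      have h3 : 2^m'*2^r < a*2^r := by omega
      exact lt_of_mul_lt_mul_right h3 (Nat.zero_le _)
  have hFb' : Forms r b := by
    rcases (show r = 1 ∨ r = 2 ∨ 3 ≤ r by omega) with rfl | rfl | hr3
    · exact Or.inl (by norm_num at hbP ⊢; omega)
    · exact Or.inl (by norm_num at hbP ⊢; omega)
    · obtain ⟨m', rfl⟩ : ∃ m', r = m'+2 := ⟨r-2, by omega⟩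
      apply hFb m' rfl
      have h1 : a*b ≤ 2^q*b := Nat.mul_le_mul_right b haP
      have h2 : (2:ℕ)^m = 2^q*2^m' := by rw [← pow_add]; congr 1; omega
      have h3 : 2^q*2^m' < 2^q*b := by omega
      exact lt_of_mul_lt_mul_left h3 (Nat.zero_le _)
  rcases hFa' with haE | ⟨mA, hqA, haE⟩ | ⟨mA, bA, hqA, h1A, h2A, haE⟩ | ⟨mA, hqA, hra⟩
  · -- a = 2^q : shift
    rw [haE]
    have h := shiftF q hFb'
    rwa [Nat.add_comm r q] at h
  · -- a = 2^mA, q = mA+1 : shift and bump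
    subst hqA
    rw [haE] at hsz ⊢
    have h := shiftF mA hFb'
    have hc : 2^(r+mA) < 2*(2^mA*b) := by
      have e1 : (2:ℕ)^(r+mA) = 2*2^m := by rw [show r+mA = m+1 by omega, pow_succ]; ring
      omega
    have h2 := bumpF h hc
    rwa [show r+mA+1 = mA+1+r by omega] at h2
  · -- a = 2^mA + 2^bA with q = mA+1
    subst hqA
    have hFa3 : Forms (mA+1) a := Or.inr <| Or.inr <| Or.inl ⟨mA, bA, rfl, h1A, h2A, haE⟩
    rcases hFb' with hbE | ⟨mB, hrB, hbE⟩ | ⟨mB, bB, hrB, h1B, h2B, hbE⟩ | ⟨mB, hrB, hrb⟩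
    · rw [hbE]
      have h := shiftF r hFa3
      rwa [mul_comm (2^r) a] at h
    · subst hrB
      rw [hbE] at hsz ⊢
      have h := shiftF mB hFa3
      have hc : 2^(mA+1+mB) < 2*(2^mB*a) := by
        have e1 : (2:ℕ)^(mA+1+mB) = 2*2^m := by
          rw [show mA+1+mB = m+1 by omega, pow_succ]; ring
        have e2 : a*2^mB = 2^mB*a := mul_comm _ _
        omega
      have h2 := bumpF h hc
      rw [mul_comm a (2^mB), show mA+1+(mB+1) = mA+1+mB+1 by omega]
      exact h2
    · subst hrB
      exact mul33 h1A h2A h1B h2B rfl (by rw [haE, hbE])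
    · subst hrB
      rcases hrb with ⟨bB,h1B,h2B,hbE⟩|⟨bB,cB,h1B,h2B,h3B,hbE⟩|
        ⟨bB,cB,dB,h1B,h2B,h3B,h4B,h5B,hbE⟩|⟨e,s,h1B,h2B,hmB,hbE⟩|⟨e,h1B,hmB,hbE⟩
      · exact mul34 h1A h2A h1B h2B rfl (by rw [haE, hbE])
          (by rw [show mA+mB+1 = m by omega]; exact hsz)
      · exact mul35 h1A h2A h1B h2B h3B rfl (by rw [haE, hbE])
          (by rw [show mA+mB+1 = m by omega]; exact hsz)
      · exact mul36 h1A h2A h1B h2B h3B h4B h5B rfl (by rw [haE, hbE])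
          (by rw [show mA+mB+1 = m by omega]; exact hsz)
      · exact (excl37 h1A h2A h1B
          (show a*b = (2^mA+2^bA)*(2^(e+s+3)+2^(e+s)+2^(e+1)+2^e) by rw [haE, hbE])
          (by rw [show mA+(e+s+3)+1 = m by omega]; exact hsz)).elim
      · exact (excl38 h1A h2A
          (show a*b = (2^mA+2^bA)*(2^(e+7)+2^(e+2)+2^(e+1)+2^e) by rw [haE, hbE])
          (by rw [show mA+(e+7)+1 = m by omega]; exact hsz)).elim
  · -- a is a Rest form, q = mA+2
    subst hqA
    have hFa4 : Forms (mA+2) a := Or.inr <| Or.inr <| Or.inr ⟨mA, rfl, hra⟩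
    rcases hFb' with hbE | ⟨mB, hrB, hbE⟩ | ⟨mB, bB, hrB, h1B, h2B, hbE⟩ | ⟨mB, hrB, hrb⟩
    · rw [hbE]
      have h := shiftF r hFa4
      rwa [mul_comm (2^r) a] at h
    · subst hrB
      rw [hbE] at hsz ⊢
      have h := shiftF mB hFa4
      have hc : 2^(mA+2+mB) < 2*(2^mB*a) := by
        have e1 : (2:ℕ)^(mA+2+mB) = 2*2^m := by
          rw [show mA+2+mB = m+1 by omega, pow_succ]; ring
        have e2 : a*2^mB = 2^mB*a := mul_comm _ _
        omega
      have h2 := bumpF h hc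
      rw [mul_comm a (2^mB), show mA+2+(mB+1) = mA+2+mB+1 by omega]
      exact h2
    · -- (Rest, F3) : symmetric
      subst hrB
      rcases hra with ⟨bA',h1A',h2A',haE⟩|⟨bA',cA',h1A',h2A',h3A',haE⟩|
        ⟨bA',cA',dA',h1A',h2A',h3A',h4A',h5A',haE⟩|⟨e,s,h1A',h2A',hmA,haE⟩|⟨e,h1A',hmA,haE⟩
      · have h := mul34 h1B h2B h1A' h2A' rfl
          (show a*b = (2^mB+2^bB)*(2^mA+2^bA') by rw [haE, hbE]; ring)
          (by rw [show mB+mA+1 = m by omega]; exact hsz)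
        rwa [show (mB+1)+(mA+2) = (mA+2)+(mB+1) by omega] at h
      · have h := mul35 h1B h2B h1A' h2A' h3A' rfl
          (show a*b = (2^mB+2^bB)*(2^mA+2^bA'+2^cA') by rw [haE, hbE]; ring)
          (by rw [show mB+mA+1 = m by omega]; exact hsz)
        rwa [show (mB+1)+(mA+2) = (mA+2)+(mB+1) by omega] at h
      · have h := mul36 h1B h2B h1A' h2A' h3A' h4A' h5A' rfl
          (show a*b = (2^mB+2^bB)*(2^mA+2^bA'+2^cA'+2^dA') by rw [haE, hbE]; ring)
          (by rw [show mB+mA+1 = m by omega]; exact hsz)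
        rwa [show (mB+1)+(mA+2) = (mA+2)+(mB+1) by omega] at h
      · exact (excl37 h1B h2B h1A'
          (show a*b = (2^mB+2^bB)*(2^(e+s+3)+2^(e+s)+2^(e+1)+2^e) by rw [haE, hbE]; ring)
          (by rw [show mB+(e+s+3)+1 = m by omega]; exact hsz)).elim
      · exact (excl38 h1B h2B
          (show a*b = (2^mB+2^bB)*(2^(e+7)+2^(e+2)+2^(e+1)+2^e) by rw [haE, hbE]; ring)
          (by rw [show mB+(e+7)+1 = m by omega]; exact hsz)).elim
    · -- (Rest, Rest) : excluded
      exfalso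
      subst hrB
      have u1 := rest_ub hra
      have u2 := rest_ub hrb
      have h := Nat.mul_lt_mul'' u1 u2
      have e : (2:ℕ)^(mA+1)*2^(mB+1) = 2^m := by rw [← pow_add]; congr 1; omega
      have h2 : a*b ≤ 2^(mA+1)*2^(mB+1) := le_of_lt h
      omega

theorem classifyAux {n p : ℕ} (h : CanRepr 2 n p) :
    ∀ m, p = m+2 → 2^m < n → Forms p n := by
  induction h with
  | base => intro m hm _; exact absurd hm (by omega)
  | @add a b q r ha hb iha ihb =>
      intro m hm hsz
      have Ba := canRepr_bounds ha
      have Bb := canRepr_bounds hb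
      rcases le_total r q with hrq | hqr
      · exact add_helper ⟨Ba.2.1, Ba.2.2.1, Ba.2.2.2.1, Ba.2.2.2.2⟩
          ⟨Bb.2.1, Bb.2.2.1, Bb.2.2.2.1, Bb.2.2.2.2⟩ Ba.1 Bb.1 iha hrq hm hsz
      · have h := add_helper (m := m) ⟨Bb.2.1, Bb.2.2.1, Bb.2.2.2.1, Bb.2.2.2.2⟩
          ⟨Ba.2.1, Ba.2.2.1, Ba.2.2.2.1, Ba.2.2.2.2⟩ Bb.1 Ba.1 ihb hqr
          (by omega) (by omega)
        rw [Nat.add_comm q r, Nat.add_comm a b]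
        exact h
  | @mul a b q r ha hb iha ihb =>
      intro m hm hsz
      have Ba := canRepr_bounds ha
      have Bb := canRepr_bounds hb
      exact mul_helper ⟨Ba.2.1, Ba.2.2.1, Ba.2.2.2.1, Ba.2.2.2.2⟩
        ⟨Bb.2.1, Bb.2.2.1, Bb.2.2.2.1, Bb.2.2.2.2⟩ Ba.1 Bb.1 iha ihb hm hsz

theorem key_lb {m n p : ℕ} (hm : 3 ≤ m) (hlb : 2^m < n) (hub : n ≤ 2^(m+1))
    (h1 : ¬ ∃ k : ℕ, n = 2^k) (h2 : ¬ ∃ k j : ℕ, n = 2^k+2^j)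
    (hform : ¬ GoodForm m n) (h : CanRepr 2 n p) : m+3 ≤ p := by
  by_contra hp
  push_neg at hp
  have B := canRepr_bounds h
  have hpm : m+1 ≤ p := by
    by_contra hq
    have : (2:ℕ)^p ≤ 2^m := tp_le (by omega)
    omega
  rcases (show p = m+1 ∨ p = m+2 by omega) with rfl | rfl
  · have hF := classifyAux h (m-1) (by omega)
      (lt_of_le_of_lt (tp_le (by omega)) hlb)
    rcases hF with hE | ⟨m', hp', hE⟩ | ⟨m', b, hp', _, _, hE⟩ | ⟨m', hp', hr⟩
    · exact h1 ⟨m+1, hE⟩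
    · obtain rfl : m = m' := by omega
      omega
    · obtain rfl : m = m' := by omega
      exact h2 ⟨m, b, hE⟩
    · obtain rfl : m' = m-1 := by omega
      have hu := rest_ub hr
      rw [show m-1+1 = m by omega] at hu
      omega
  · have hF := classifyAux h m rfl hlb
    rcases hF with hE | ⟨m', hp', hE⟩ | ⟨m', b, hp', hb1, hb2, hE⟩ | ⟨m', hp', hr⟩
    · have := tp_lt (show m+1 < m+2 by omega)
      omega
    · obtain rfl : m' = m+1 := by omega
      exact h1 ⟨m+1, hE⟩
    · obtain rfl : m' = m+1 := by omega
      have := @one_le_tp b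
      omega
    · obtain rfl : m = m' := by omega
      rcases hr with ⟨b,hb1,hb2,hE⟩|⟨b,c,h1',h2',h3',hE⟩|
        ⟨b,c,d,h1',h2',h3',h4',h5',hE⟩|⟨e,s,h1',h2',h3',hE⟩|⟨e,h1',h2',hE⟩
      · exact h2 ⟨m, b, hE⟩
      · exact hform (Or.inl ⟨b, c, by omega, by omega, by omega, hE⟩)
      · exact hform (Or.inr <| Or.inl
          ⟨b, c, d, by omega, by omega, by omega, by omega, by omega, hE⟩)
      · refine hform (Or.inr <| Or.inr <| Or.inl ⟨e+1, by omega, by omega, ?_⟩)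
        subst h3'
        rw [show e+s+3-3 = e+s by omega, show e+1-1 = e by omega]
        exact hE
      · refine hform (Or.inr <| Or.inr <| Or.inr ⟨by omega, ?_⟩)
        subst h2'
        rw [show e+7-5 = e+2 by omega, show e+7-6 = e+1 by omega,
          show e+7-7 = e by omega]
        exact hE

lemma repr_even : ∀ k, 1 ≤ k → CanRepr 2 (2*k) k := by
  intro k
  induction k with
  | zero => omega
  | succ k ih =>
      intro _
      rcases Nat.eq_zero_or_pos k with rfl | hk
      · exact CanRepr.base
      · have h := CanRepr.add (ih hk) CanRepr.base
        rw [show 2*(k+1) = 2*k+2 by omega]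
        exact h


end Work

theorem stmt_10 (m n : ℕ) (hm : 3 ≤ m) (hn : 0 < n) (heven : 2 ∣ n)
    (hlb : 2 ^ m < n) (hub : n ≤ 2 ^ (m + 1))
    (h1 : ¬ ∃ k : ℕ, n = 2 ^ k)
    (h2 : ¬ ∃ k j : ℕ, n = 2 ^ k + 2 ^ j)
    (hform : ¬ GoodForm m n) :
    Real.logb 2 n + 2 ≤ (complexity 2 n : ℝ) := by
  obtain ⟨k, rfl⟩ := heven
  have hk : 1 ≤ k := by omega
  have hne : {p | CanRepr 2 (2*k) p}.Nonempty := ⟨k, Work.repr_even k hk⟩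
  have hmem : CanRepr 2 (2*k) (complexity 2 (2*k)) := Nat.sInf_mem hne
  have hC : m+3 ≤ complexity 2 (2*k) := Work.key_lb hm hlb hub h1 h2 hform hmem
  have hCR : ((m:ℝ)+3) ≤ (complexity 2 (2*k) : ℝ) := by exact_mod_cast hC
  have hn0 : (0:ℝ) < ((2*k : ℕ) : ℝ) := by
    have : (0:ℕ) < 2*k := by omega
    exact_mod_cast this
  have hnle : ((2*k : ℕ) : ℝ) ≤ (2:ℝ)^(m+1) := by exact_mod_cast hub
  have hlog : Real.logb 2 ((2*k : ℕ) : ℝ) ≤ ((m:ℝ)+1) := by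
    have h2' : Real.logb 2 ((2:ℝ)^(m+1)) = ((m:ℝ)+1) := by
      rw [Real.logb_pow, Real.logb_self_eq_one (by norm_num)]
      push_cast; ring
    calc Real.logb 2 ((2*k : ℕ) : ℝ) ≤ Real.logb 2 ((2:ℝ)^(m+1)) :=
          Real.logb_le_logb_of_le (by norm_num) hn0 hnle
      _ = ((m:ℝ)+1) := h2'
  linarith
end
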